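/- arXiv:math/0505639 — 6 statements merged into one kernel-verified Lean document; each statement's English description precedes it below -/
import Mathlib

section
/- (Lemma 9.1(ii), type 2 tails) Under the linear quantile regression setup with type 2 tails of index ξ > 0, there exists a vector c ∈ ℝ^d with μ_Xᵀc = 1, xᵀc > 0 and K(x) = (xᵀc)^{1/ξ} for all x ∈ 𝐗, such that, setting a_T := −1/F_u⁻¹(1/T) for integers T with 1/T ∈ (0,η], for every compact set 𝒦 ⊂ (0,∞) one has sup_{k ∈ 𝒦} ‖a_T·γ(k/T) + k^{−ξ}·c‖ → 0 as the integer T → ∞ (for T large enough that k/T ∈ (0,η] for all k ∈ 𝒦). -/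
open MeasureTheory Filter Topology Real

section Helpers

/-- If `z` is below the generalized inverse, then `f z ≤ τ`. -/
lemma EQR.le_of_lt_gi {f : ℝ → ℝ} {τ z : ℝ} (hb : BddBelow {w | τ < f w})
    (hz : z < sInf {w | τ < f w}) : f z ≤ τ := by
  by_contra h
  push_neg at h
  exact absurd (csInf_le hb (show z ∈ {w | τ < f w} from h)) (not_le.2 hz)

lemma EQR.gi_le {f : ℝ → ℝ} {τ z : ℝ} (hb : BddBelow {w | τ < f w})
    (h : τ < f z) : sInf {w | τ < f w} ≤ z := csInf_le hb h

lemma EQR.le_gi {f : ℝ → ℝ} (hm : Monotone f) {τ z : ℝ}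
    (hne : {w | τ < f w}.Nonempty) (h : f z < τ) : z ≤ sInf {w | τ < f w} := by
  refine le_csInf hne fun w hw => ?_
  by_contra hwz
  push_neg at hwz
  exact absurd hw (not_lt.2 ((hm hwz.le).trans h.le))

lemma EQR.gi_rc {f : ℝ → ℝ} (hm : Monotone f) {τ : ℝ}
    (hne : {w | τ < f w}.Nonempty) (hb : BddBelow {w | τ < f w})
    (hrc : ContinuousWithinAt f (Set.Ici (sInf {w | τ < f w})) (sInf {w | τ < f w})) :
    τ ≤ f (sInf {w | τ < f w}) := by
  set q := sInf {w | τ < f w} with hq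
  have ht : Filter.Tendsto f (𝓝[>] q) (𝓝 (f q)) :=
    (hrc.mono Set.Ioi_subset_Ici_self)
  refine ge_of_tendsto ht ?_
  filter_upwards [self_mem_nhdsWithin] with z hz
  obtain ⟨w, hw, hwz⟩ := (csInf_lt_iff hb hne).1 (show q < z from hz)
  exact hw.le.trans (hm hwz.le)

/-- Bounded below of superlevel set. -/
lemma EQR.gi_bddBelow {f : ℝ → ℝ} (hm : Monotone f) (h0 : Tendsto f atBot (𝓝 0))
    {τ : ℝ} (hτ : 0 < τ) : BddBelow {w | τ < f w} := by
  have : ∀ᶠ z in atBot, f z < τ := h0.eventually_lt_const hτ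
  obtain ⟨z₀, hz₀⟩ := this.exists
  refine ⟨z₀, fun w hw => ?_⟩
  by_contra hwz
  push_neg at hwz
  exact absurd hw (not_lt.2 ((hm hwz.le).trans hz₀.le))

set_option maxHeartbeats 1000000 in
/-- Pólya-type: monotone functions converging pointwise to a uniformly continuous limit
converge uniformly on `[a,b]`. -/
lemma EQR.polya {α : Type*} {l : Filter α} {f : α → ℝ → ℝ} {g : ℝ → ℝ} {a b : ℝ}
    (hg : ∀ ε > (0:ℝ), ∃ δ > (0:ℝ), ∀ x ∈ Set.Icc a b, ∀ y ∈ Set.Icc a b,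
      |x - y| ≤ δ → |g x - g y| ≤ ε)
    (hmono : ∀ᶠ n in l, MonotoneOn (f n) (Set.Icc a b))
    (hpt : ∀ k ∈ Set.Icc a b, Tendsto (fun n => f n k) l (𝓝 (g k)))
    {ε : ℝ} (hε : 0 < ε) :
    ∀ᶠ n in l, ∀ k ∈ Set.Icc a b, |f n k - g k| < ε := by
  rcases lt_or_ge b a with hba | hab
  · exact Filter.Eventually.of_forall fun n k hk => absurd hk (by simp [Set.Icc_eq_empty_of_lt hba])
  obtain ⟨δ, hδ, hgδ⟩ := hg (ε/4) (by positivity)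
  set N : ℕ := ⌈(b - a) / δ⌉₊ + 1 with hN
  have hN0 : 0 < N := Nat.succ_pos _
  set step : ℝ := (b - a) / N with hstepdef
  have hstep0 : 0 ≤ step := by
    apply div_nonneg (by linarith) (by positivity)
  have hstepδ : step ≤ δ := by
    rw [hstepdef, div_le_iff₀ (by positivity)]
    calc b - a ≤ δ * ((b - a) / δ) := by rw [mul_div_cancel₀ _ hδ.ne']
    _ ≤ δ * N := by
        apply mul_le_mul_of_nonneg_left _ hδ.le
        exact (Nat.le_ceil _).trans (by exact_mod_cast Nat.le_succ _)
  set p : ℕ → ℝ := fun j => a + j * step with hp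
  have hpN : p N = b := by
    simp only [hp, hstepdef]
    rw [mul_div_cancel₀]
    · ring
    · exact_mod_cast hN0.ne'
  have hpmono : ∀ ⦃i j : ℕ⦄, i ≤ j → p i ≤ p j := by
    intro i j hij
    simp only [hp]
    have : (i:ℝ) ≤ j := by exact_mod_cast hij
    nlinarith
  have hpmem : ∀ j : ℕ, j ≤ N → p j ∈ Set.Icc a b := by
    intro j hj
    constructor
    · simp only [hp]
      have : 0 ≤ (j:ℝ) * step := by positivity
      linarith
    · rw [← hpN]; exact hpmono hj
  have hgrid : ∀ᶠ n in l, ∀ j ∈ Finset.range (N+1), |f n (p j) - g (p j)| < ε/4 := by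
    rw [eventually_all_finset]
    intro j hj
    have hmem := hpmem j (Nat.lt_succ_iff.1 (Finset.mem_range.1 hj))
    have := Metric.tendsto_nhds.1 (hpt (p j) (hmem)) (ε/4) (by positivity)
    simpa [Real.dist_eq] using this
  filter_upwards [hgrid, hmono] with n hgr hmn
  intro k hk
  set j0 : ℕ := ⌊(k - a) / step⌋₊ with hj0
  set j : ℕ := min j0 (N - 1) with hj
  have hjN : j + 1 ≤ N := by omega
  have hp1 : p j ≤ k := by
    simp only [hp]
    rcases eq_or_lt_of_le hstep0 with heq | hpos
    · rw [← heq]; simpa using hk.1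
    · have h1 : (j:ℝ) ≤ j0 := by exact_mod_cast min_le_left _ _
      have h2 : (j0:ℝ) ≤ (k - a) / step := Nat.floor_le (div_nonneg (by linarith [hk.1]) hstep0)
      have := (h1.trans h2)
      rw [le_div_iff₀ hpos] at this
      linarith
  have hp2 : k ≤ p (j + 1) := by
    rcases eq_or_lt_of_le hstep0 with heq | hpos
    · have hba' : b = a := by
        have : b - a = step * N := by rw [hstepdef]; field_simp
        rw [← heq] at this; simp at this; linarith
      simp only [hp, ← heq]
      simp
      linarith [hk.2, hba'.le]
    · by_cases hc : j0 ≤ N - 1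
      · have hjj : j = j0 := by omega
        have := Nat.lt_floor_add_one ((k - a)/step)
        rw [div_lt_iff₀ hpos] at this
        simp only [hp, hjj]
        push_cast
        nlinarith
      · have hjj : j = N - 1 := by omega
        have hj1 : j + 1 = N := by omega
        rw [hj1, hpN]; exact hk.2
  have hkIcc : k ∈ Set.Icc a b := hk
  have hmem1 : p j ∈ Set.Icc a b := hpmem j (by omega)
  have hmem2 : p (j+1) ∈ Set.Icc a b := hpmem (j+1) hjN
  have hg1 := hgr j (Finset.mem_range.2 (by omega))
  have hg2 := hgr (j+1) (Finset.mem_range.2 (by omega))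
  have hgk1 : |g (p j) - g k| ≤ ε/4 := by
    apply hgδ _ hmem1 _ hkIcc
    have : p (j+1) - p j = step := by simp only [hp]; push_cast; ring
    rw [abs_le]
    constructor <;> linarith [hp2, hp1, hstepδ, this]
  have hgk2 : |g (p (j+1)) - g k| ≤ ε/4 := by
    apply hgδ _ hmem2 _ hkIcc
    have : p (j+1) - p j = step := by simp only [hp]; push_cast; ring
    rw [abs_le]
    constructor <;> linarith [hp2, hp1, hstepδ, this]
  have hup : f n k ≤ f n (p (j+1)) := hmn hkIcc hmem2 hp2
  have hlo : f n (p j) ≤ f n k := hmn hmem1 hkIcc hp1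
  rw [abs_lt] at hg1 hg2 ⊢
  rw [abs_le] at hgk1 hgk2
  constructor <;> linarith [hg1.1, hg1.2, hg2.1, hg2.2, hgk1.1, hgk1.2, hgk2.1, hgk2.2, hup, hlo]

end Helpers

set_option maxHeartbeats 1000000 in
theorem extremal_qr_lem91ii_type2
    (d : ℕ) (hd : 1 ≤ d)
    (μ : Measure (Fin d → ℝ)) [IsProbabilityMeasure μ]
    (Xs : Set (Fin d → ℝ))
    (hXssupp : ∀ x, x ∈ Xs ↔ ∀ U ∈ 𝓝 x, 0 < μ U)
    (hXscpt : IsCompact Xs)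
    (hposdef : (Matrix.of fun i j : Fin d => ∫ x, x i * x j ∂μ).PosDef)
    (hmean : ∀ i : Fin d, (∫ x, x i ∂μ) = if (i : ℕ) = 0 then (1:ℝ) else 0)
    (η : ℝ) (hη : η ∈ Set.Ioc (0:ℝ) 1)
    (γ : ℝ → Fin d → ℝ)
    (F : (Fin d → ℝ) → ℝ → ℝ)
    (hFmono : ∀ x ∈ Xs, Monotone (F x))
    (hFrc : ∀ x ∈ Xs, ∀ z : ℝ, ContinuousWithinAt (F x) (Set.Ici z) z)
    (hFrange : ∀ x ∈ Xs, ∀ z : ℝ, F x z ∈ Set.Icc (0:ℝ) 1)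
    (hlin : ∀ τ ∈ Set.Ioc (0:ℝ) η, ∀ x ∈ Xs, sInf {z | τ < F x z} = ∑ i, x i * γ τ i)
    (Fu : ℝ → ℝ)
    (hFumono : Monotone Fu)
    (hFurc : ∀ z : ℝ, ContinuousWithinAt Fu (Set.Ici z) z)
    (hFurange : ∀ z : ℝ, Fu z ∈ Set.Icc (0:ℝ) 1)
    (hFuinv : ∀ τ ∈ Set.Ioc (0:ℝ) η, sInf {z | τ < Fu z} = ∑ i, (∫ x, x i ∂μ) * γ τ i)
    (K : (Fin d → ℝ) → ℝ)
    (hKcont : ContinuousOn K Xs)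
    (hKbdd : BddAbove (K '' Xs))
    (hKpos : ∀ x ∈ Xs, 0 < K x)
    (ξ : ℝ) (hξ : 0 < ξ)
    (hFupos : ∀ z : ℝ, 0 < Fu z)
    (hreg : ∀ v > (0:ℝ), Tendsto (fun z => Fu (v * z) / Fu z) atBot (𝓝 (v ^ (-1/ξ))))
    (htaileq : TendstoUniformlyOn (fun z x => F x z / Fu z) K atBot Xs)
    :
    ∃ c : Fin d → ℝ, (∑ i, (∫ x, x i ∂μ) * c i) = 1 ∧
      (∀ x ∈ Xs, 0 < (∑ i, x i * c i) ∧ K x = (∑ i, x i * c i) ^ (1/ξ)) ∧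
      ∀ Ks : Set ℝ, IsCompact Ks → Ks ⊆ Set.Ioi 0 →
        ∀ ε > (0:ℝ), ∀ᶠ T : ℕ in atTop, ∀ k ∈ Ks,
          ‖(-1 / sInf {z | (1:ℝ) / (T:ℝ) < Fu z}) • γ (k / (T:ℝ)) + (k ^ (-ξ)) • c‖ < ε := by
  classical
  set l0 : Filter ℝ := 𝓝[>] (0:ℝ) with hl0def
  -- ## Part 1 : generalized inverse asymptotics
  have hFu0 : Tendsto Fu atBot (𝓝 0) := by
    have hbdd : BddBelow (Set.range Fu) := ⟨0, by rintro y ⟨z, rfl⟩; exact (hFurange z).1⟩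
    have hm := tendsto_atBot_ciInf hFumono hbdd
    have hL0 : 0 ≤ ⨅ z, Fu z := le_ciInf fun z => (hFurange z).1
    rcases eq_or_lt_of_le hL0 with heq | hlt
    · rwa [← heq] at hm
    · exfalso
      have h2 : Tendsto (fun z : ℝ => Fu (2 * z)) atBot (𝓝 (⨅ z, Fu z)) := by
        exact hm.comp ((tendsto_id : Tendsto id (atBot : Filter ℝ) atBot).const_mul_atBot two_pos)
      have hr : Tendsto (fun z : ℝ => Fu (2 * z) / Fu z) atBot (𝓝 ((⨅ z, Fu z) / (⨅ z, Fu z))) :=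
        h2.div hm (ne_of_gt hlt)
      rw [div_self (ne_of_gt hlt)] at hr
      have := tendsto_nhds_unique (hreg 2 two_pos) hr
      have hlt1 : (2:ℝ) ^ (-1/ξ) < 1 :=
        Real.rpow_lt_one_of_one_lt_of_neg one_lt_two (by rw [neg_div]; exact neg_neg_of_pos (by positivity))
      rw [this] at hlt1
      exact lt_irrefl _ hlt1
  have hqbdd : ∀ σ : ℝ, 0 < σ → BddBelow {z | σ < Fu z} :=
    fun σ hσ => EQR.gi_bddBelow hFumono hFu0 hσ
  set q : ℝ → ℝ := fun σ => sInf {z | σ < Fu z} with hqdef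
  have hσpos : ∀ᶠ σ in l0, 0 < σ := self_mem_nhdsWithin
  have hσlt : ∀ b : ℝ, 0 < b → ∀ᶠ σ in l0, σ < b := by
    intro b hb
    exact (eventually_lt_nhds hb).filter_mono nhdsWithin_le_nhds
  have hqatBot : Tendsto q l0 atBot := by
    rw [tendsto_atBot]
    intro z
    filter_upwards [hσpos, hσlt (Fu z) (hFupos z)] with σ h1 h2
    exact EQR.gi_le (hqbdd σ h1) h2
  have hqneg : ∀ᶠ σ in l0, q σ < 0 := hqatBot.eventually (eventually_lt_atBot 0)
  have hqτ : ∀ᶠ σ in l0, σ ≤ Fu (q σ) := by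
    filter_upwards [hσpos, hσlt (Fu 0) (hFupos 0)] with σ h1 h2
    exact EQR.gi_rc hFumono ⟨0, h2⟩ (hqbdd σ h1) (hFurc _)
  have hratδ : ∀ δ : ℝ, 0 < δ → Tendsto (fun σ => Fu ((1 + δ) * q σ) / Fu (q σ)) l0
      (𝓝 ((1 + δ) ^ (-1/ξ))) := by
    intro δ hδ
    exact (hreg (1 + δ) (by linarith)).comp hqatBot
  have hS1 : Tendsto (fun σ => Fu (q σ) / σ) l0 (𝓝 1) := by
    rw [Metric.tendsto_nhds]
    intro ε hε
    set δ : ℝ := (1 + ε/2) ^ ξ - 1 with hδdef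
    have hδpos : 0 < δ := by
      have : (1:ℝ) < (1 + ε/2) ^ ξ :=
        (Real.one_lt_rpow_iff_of_pos (by linarith)).2 (Or.inl ⟨by linarith, hξ⟩)
      simp only [hδdef]; linarith
    have h1δ : (1 + δ) = (1 + ε/2) ^ ξ := by simp only [hδdef]; ring
    have hlimval : (1 + δ) ^ (-1/ξ) = (1 + ε/2)⁻¹ := by
      rw [h1δ, ← Real.rpow_mul (by linarith)]
      rw [show ξ * (-1/ξ) = -1 by field_simp, Real.rpow_neg_one]
    have hltval : (1 + ε)⁻¹ < (1 + δ) ^ (-1/ξ) := by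
      rw [hlimval]
      apply inv_strictAnti₀ (by linarith) (by linarith)
    have hev1 : ∀ᶠ σ in l0, (1 + ε)⁻¹ < Fu ((1 + δ) * q σ) / Fu (q σ) :=
      (hratδ δ hδpos).eventually_const_lt hltval
    filter_upwards [hev1, hσpos, hqneg, hqτ] with σ h1 h2 h3 h4
    have hFuq : 0 < Fu (q σ) := hFupos _
    have hub : Fu ((1 + δ) * q σ) ≤ σ := by
      apply EQR.le_of_lt_gi (hqbdd σ h2)
      calc (1 + δ) * q σ < 1 * q σ := by
            apply mul_lt_mul_of_neg_right _ h3
            linarith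
        _ = q σ := one_mul _
    have hlb : Fu (q σ) < (1 + ε) * Fu ((1 + δ) * q σ) := by
      rw [lt_div_iff₀ hFuq] at h1
      have h5 := mul_lt_mul_of_pos_left h1 (show (0:ℝ) < 1 + ε by linarith)
      rw [← mul_assoc, mul_inv_cancel₀ (show (1+ε:ℝ) ≠ 0 by linarith), one_mul] at h5
      exact h5
    have hup : Fu (q σ) / σ < 1 + ε := by
      rw [div_lt_iff₀ h2]
      calc Fu (q σ) < (1 + ε) * Fu ((1 + δ) * q σ) := hlb
        _ ≤ (1 + ε) * σ := by
            apply mul_le_mul_of_nonneg_left hub (by linarith)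
        _ = (1 + ε) * σ := rfl
    have hlo : 1 ≤ Fu (q σ) / σ := by
      rw [le_div_iff₀ h2]
      linarith
    rw [Real.dist_eq, abs_lt]
    constructor <;> linarith
  have hS2 : ∀ v : ℝ, 0 < v → Tendsto (fun σ => Fu (v * q σ) / σ) l0 (𝓝 (v ^ (-1/ξ))) := by
    intro v hv
    have hrat : Tendsto (fun σ => Fu (v * q σ) / Fu (q σ)) l0 (𝓝 (v ^ (-1/ξ))) :=
      (hreg v hv).comp hqatBot
    have := hrat.mul hS1
    rw [mul_one] at this
    refine this.congr fun σ => ?_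
    rw [div_mul_div_comm, mul_comm (Fu (v * q σ)) (Fu (q σ)),
      mul_div_mul_left _ _ (hFupos (q σ)).ne']
  have hxratio : ∀ x ∈ Xs, Tendsto (fun z => F x z / Fu z) atBot (𝓝 (K x)) :=
    fun x hx => htaileq.tendsto_at hx
  have hFx0 : ∀ x ∈ Xs, Tendsto (F x) atBot (𝓝 0) := by
    intro x hx
    have := (hxratio x hx).mul hFu0
    rw [mul_zero] at this
    refine this.congr fun z => ?_
    rw [div_mul_cancel₀ _ (hFupos z).ne']
  have hQbdd : ∀ x ∈ Xs, ∀ σ : ℝ, 0 < σ → BddBelow {z | σ < F x z} :=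
    fun x hx σ hσ => EQR.gi_bddBelow (hFmono x hx) (hFx0 x hx) hσ
  have hQne : ∀ x ∈ Xs, ∃ δ > (0:ℝ), ∀ σ : ℝ, σ < δ → {z | σ < F x z}.Nonempty := by
    intro x hx
    have hev : ∀ᶠ z in atBot, K x / 2 < F x z / Fu z :=
      (hxratio x hx).eventually_const_lt (half_lt_self (hKpos x hx))
    obtain ⟨z1, hz1⟩ := hev.exists
    have hpos : 0 < F x z1 := by
      rw [lt_div_iff₀ (hFupos z1)] at hz1
      have h1 : 0 < K x / 2 * Fu z1 := mul_pos (half_pos (hKpos x hx)) (hFupos z1)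
      linarith
    refine ⟨F x z1, hpos, fun σ hσ => ⟨z1, hσ⟩⟩
  have hS3 : ∀ x ∈ Xs, ∀ v : ℝ, 0 < v →
      Tendsto (fun σ => F x (v * q σ) / σ) l0 (𝓝 (K x * v ^ (-1/ξ))) := by
    intro x hx v hv
    have hcomp : Tendsto (fun σ => v * q σ) l0 atBot := hqatBot.const_mul_atBot hv
    have hrat : Tendsto (fun σ => F x (v * q σ) / Fu (v * q σ)) l0 (𝓝 (K x)) :=
      (hxratio x hx).comp hcomp
    have := hrat.mul (hS2 v hv)
    refine this.congr fun σ => ?_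
    rw [div_mul_div_comm, mul_comm (F x (v * q σ)) (Fu (v * q σ)),
      mul_div_mul_left _ _ (hFupos (v * q σ)).ne']
  set Q : (Fin d → ℝ) → ℝ → ℝ := fun x σ => sInf {z | σ < F x z} with hQdef
  have hrpowA : ∀ k v : ℝ, 0 < k → 0 < v → ∀ x ∈ Xs,
      (v < k ^ (-ξ) * K x ^ ξ → k < K x * v ^ (-1/ξ)) ∧
      (k ^ (-ξ) * K x ^ ξ < v → K x * v ^ (-1/ξ) < k) := by
    intro k v hk hv x hx
    have hκ := hKpos x hx
    have hL : (k ^ (-ξ) * K x ^ ξ) ^ (-1/ξ) = k * (K x)⁻¹ := by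
      rw [Real.mul_rpow (by positivity) (by positivity),
        ← Real.rpow_mul hk.le, ← Real.rpow_mul hκ.le,
        show (-ξ) * (-1/ξ) = 1 by field_simp,
        show ξ * (-1/ξ) = -1 by field_simp, Real.rpow_one, Real.rpow_neg_one]
    have hexp : (-1/ξ) < 0 := by rw [neg_div]; exact neg_neg_of_pos (by positivity)
    constructor
    · intro hlt
      have := Real.rpow_lt_rpow_of_neg hv hlt hexp
      rw [hL] at this
      calc k = K x * (k * (K x)⁻¹) := by field_simp
        _ < K x * v ^ (-1/ξ) := by
            exact mul_lt_mul_of_pos_left this hκ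
    · intro hlt
      have := Real.rpow_lt_rpow_of_neg (by positivity) hlt hexp
      rw [hL] at this
      calc K x * v ^ (-1/ξ) < K x * (k * (K x)⁻¹) := mul_lt_mul_of_pos_left this hκ
        _ = k := by field_simp
  have hLx : ∀ x ∈ Xs, ∀ k : ℝ, 0 < k →
      Tendsto (fun σ => Q x (k * σ) / q σ) l0 (𝓝 (k ^ (-ξ) * K x ^ ξ)) := by
    intro x hx k hk
    obtain ⟨δx, hδx, hδne⟩ := hQne x hx
    set L : ℝ := k ^ (-ξ) * K x ^ ξ with hLdef
    have hLpos : 0 < L := by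
      have := hKpos x hx
      have h1 : (0:ℝ) < k ^ (-ξ) := Real.rpow_pos_of_pos hk _
      have h2 : (0:ℝ) < K x ^ ξ := Real.rpow_pos_of_pos this _
      exact mul_pos h1 h2
    rw [tendsto_order]
    constructor
    · intro v hvL
      set v2 : ℝ := (max v 0 + L) / 2 with hv2def
      have hmax : max v 0 < L := max_lt hvL hLpos
      have hv2pos : 0 < v2 := by
        have := le_max_right v 0
        simp only [hv2def]; linarith
      have hv2L : v2 < L := by simp only [hv2def]; linarith
      have hvv2 : v < v2 := by
        have := le_max_left v 0
        simp only [hv2def]; linarith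
      have hkκ : k < K x * v2 ^ (-1/ξ) := (hrpowA k v2 hk hv2pos x hx).1 hv2L
      have hev1 : ∀ᶠ σ in l0, k < F x (v2 * q σ) / σ :=
        (hS3 x hx v2 hv2pos).eventually_const_lt hkκ
      filter_upwards [hev1, hσpos, hqneg] with σ h1 h2 h3
      have hkσ : k * σ < F x (v2 * q σ) := by
        rw [lt_div_iff₀ h2] at h1
        exact h1
      have hQle : Q x (k * σ) ≤ v2 * q σ :=
        EQR.gi_le (hQbdd x hx _ (by positivity)) hkσ
      have : v2 ≤ Q x (k * σ) / q σ := by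
        rw [le_div_iff_of_neg h3]
        exact hQle
      exact lt_of_lt_of_le hvv2 this
    · intro w hwL
      set w2 : ℝ := (L + w) / 2 with hw2def
      have hw2L : L < w2 := by simp only [hw2def]; linarith
      have hw2w : w2 < w := by simp only [hw2def]; linarith
      have hw2pos : 0 < w2 := lt_trans hLpos hw2L
      have hkκ : K x * w2 ^ (-1/ξ) < k := (hrpowA k w2 hk hw2pos x hx).2 hw2L
      have hev1 : ∀ᶠ σ in l0, F x (w2 * q σ) / σ < k :=
        (hS3 x hx w2 hw2pos).eventually_lt_const hkκ
      filter_upwards [hev1, hσpos, hqneg, hσlt (δx / k) (by positivity)] with σ h1 h2 h3 h4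
      have hkσ : F x (w2 * q σ) < k * σ := by
        rw [div_lt_iff₀ h2] at h1
        exact h1
      have hne : {z | k * σ < F x z}.Nonempty := by
        apply hδne
        rw [← lt_div_iff₀' hk]
        exact h4
      have hQge : w2 * q σ ≤ Q x (k * σ) :=
        EQR.le_gi (hFmono x hx) hne hkσ
      have : Q x (k * σ) / q σ ≤ w2 := by
        rw [div_le_iff_of_neg h3]
        exact hQge
      exact lt_of_le_of_lt this hw2w
  -- ## Part 2 : support and basis
  have hXsnull : μ Xsᶜ = 0 := by
    obtain ⟨Tc, hTcount, hTsub, hTeq⟩ :=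
      TopologicalSpace.isOpen_sUnion_countable {U : Set (Fin d → ℝ) | IsOpen U ∧ μ U = 0}
        (fun U hU => hU.1)
    have hμT : μ (⋃₀ Tc) = 0 := by
      rw [measure_sUnion_null_iff hTcount]
      exact fun U hU => (hTsub hU).2
    refine measure_mono_null ?_ hμT
    intro x hx
    rw [Set.mem_compl_iff, hXssupp] at hx
    push_neg at hx
    obtain ⟨U, hU, hUz⟩ := hx
    have hUz' : μ U = 0 := le_antisymm hUz zero_le
    rw [hTeq]
    exact ⟨interior U, ⟨isOpen_interior, measure_mono_null interior_subset hUz'⟩,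
      mem_interior_iff_mem_nhds.2 hU⟩
  have haeXs : ∀ᵐ x ∂μ, x ∈ Xs := by
    rw [MeasureTheory.ae_iff]
    exact hXsnull
  obtain ⟨R, hR0, hR⟩ : ∃ R : ℝ, 0 ≤ R ∧ ∀ x ∈ Xs, ‖x‖ ≤ R := by
    obtain ⟨R, hR⟩ := hXscpt.isBounded.exists_norm_le
    exact ⟨max R 0, le_max_right _ _, fun x hx => (hR x hx).trans (le_max_left _ _)⟩
  have hint : ∀ i j : Fin d, Integrable (fun x : Fin d → ℝ => x i * x j) μ := by
    intro i j
    refine MeasureTheory.Integrable.mono' (integrable_const (R * R))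
      (((continuous_apply i).mul (continuous_apply j)).aestronglyMeasurable) ?_
    filter_upwards [haeXs] with x hx
    rw [norm_mul]
    exact mul_le_mul ((norm_le_pi_norm x i).trans (hR x hx))
      ((norm_le_pi_norm x j).trans (hR x hx)) (norm_nonneg _) hR0
  have hspan : Submodule.span ℝ Xs = ⊤ := by
    by_contra hne
    obtain ⟨f, hf0, hfbot⟩ :=
      Submodule.exists_dual_map_eq_bot_of_lt_top (Ne.lt_top hne) inferInstance
    set v : Fin d → ℝ := fun j => f (fun i => if j = i then (1:ℝ) else 0) with hvdef
    have hfeq : ∀ y : Fin d → ℝ, f y = ∑ j, y j * v j := by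
      intro y
      conv_lhs => rw [pi_eq_sum_univ y]
      rw [map_sum]
      refine Finset.sum_congr rfl fun j _ => ?_
      rw [_root_.map_smul, smul_eq_mul, hvdef]
    have hvanish : ∀ y ∈ Xs, ∑ j, y j * v j = 0 := by
      intro y hy
      rw [← hfeq]
      have hmem : f y ∈ Submodule.map f (Submodule.span ℝ Xs) :=
        ⟨y, Submodule.subset_span hy, rfl⟩
      rw [hfbot] at hmem
      simpa using hmem
    have hv0 : v ≠ 0 := by
      intro hv
      apply hf0
      apply LinearMap.ext
      intro y
      rw [hfeq y, hv]
      simp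
    have key := hposdef.dotProduct_mulVec_pos hv0
    have hstar : star v = v := by
      funext j
      simp
    rw [hstar] at key
    have hint1 : ∀ i : Fin d, Integrable (fun x : Fin d → ℝ => x i * (∑ j, x j * v j)) μ := by
      intro i
      have h0 : Integrable (fun x : Fin d → ℝ => ∑ j, x i * x j * v j) μ :=
        MeasureTheory.integrable_finset_sum _ (fun j _ => (hint i j).mul_const (v j))
      refine h0.congr (Filter.Eventually.of_forall fun x => ?_)
      simp only [Finset.mul_sum]
      exact Finset.sum_congr rfl fun j _ => by ring
    have hcompute : dotProduct v (Matrix.mulVec (Matrix.of fun i j : Fin d => ∫ x, x i * x j ∂μ) v)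
        = ∫ x, (∑ j, x j * v j) * (∑ j, x j * v j) ∂μ := by
      have hdp : dotProduct v (Matrix.mulVec (Matrix.of fun i j : Fin d => ∫ x, x i * x j ∂μ) v)
          = ∑ i, v i * (∑ j, (∫ x, x i * x j ∂μ) * v j) := rfl
      rw [hdp]
      have h1 : ∀ i : Fin d, (∑ j, (∫ x, x i * x j ∂μ) * v j) = ∫ x, x i * (∑ j, x j * v j) ∂μ := by
        intro i
        have h2 : ∀ j ∈ Finset.univ, (∫ x, x i * x j ∂μ) * v j = ∫ x, x i * x j * v j ∂μ :=
          fun j _ => (MeasureTheory.integral_mul_const (v j) _).symm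
        rw [Finset.sum_congr rfl h2,
          ← MeasureTheory.integral_finset_sum _ (fun j _ => (hint i j).mul_const (v j))]
        congr 1
        funext x
        rw [Finset.mul_sum]
        exact Finset.sum_congr rfl fun j _ => by ring
      calc ∑ i, v i * (∑ j, (∫ x, x i * x j ∂μ) * v j)
          = ∑ i, ∫ x, v i * (x i * (∑ j, x j * v j)) ∂μ := by
            refine Finset.sum_congr rfl fun i _ => ?_
            rw [h1 i, MeasureTheory.integral_const_mul]
        _ = ∫ x, ∑ i, v i * (x i * (∑ j, x j * v j)) ∂μ :=
            (MeasureTheory.integral_finset_sum _ (fun i _ => (hint1 i).const_mul (v i))).symm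
        _ = ∫ x, (∑ j, x j * v j) * (∑ j, x j * v j) ∂μ := by
            congr 1
            funext x
            simp_rw [← mul_assoc]
            rw [← Finset.sum_mul]
            congr 1
            exact Finset.sum_congr rfl fun i _ => by ring
    rw [hcompute] at key
    have hzero : ∫ x, (∑ j, x j * v j) * (∑ j, x j * v j) ∂μ = 0 := by
      apply MeasureTheory.integral_eq_zero_of_ae
      filter_upwards [haeXs] with x hx
      rw [hvanish x hx, mul_zero]
      rfl
    rw [hzero] at key
    exact lt_irrefl _ key
  obtain ⟨B, hBXs⟩ : ∃ B : Module.Basis (Fin d) ℝ (Fin d → ℝ), ∀ i, B i ∈ Xs := by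
    obtain ⟨s, hs_sub, hs_span, hs_li⟩ := exists_linearIndependent ℝ Xs
    rw [hspan] at hs_span
    have hb0span : ⊤ ≤ Submodule.span ℝ (Set.range ((↑) : s → (Fin d → ℝ))) := by
      rw [Subtype.range_coe, hs_span]
    let b0 : Module.Basis s ℝ (Fin d → ℝ) := Module.Basis.mk hs_li hb0span
    haveI : Fintype s := FiniteDimensional.fintypeBasisIndex b0
    have hcard : Fintype.card s = d := by
      rw [← Module.finrank_eq_card_basis b0, Module.finrank_fin_fun]
    let e := Fintype.equivFinOfCardEq hcard
    refine ⟨b0.reindex e, fun i => ?_⟩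
    rw [Module.Basis.reindex_apply]
    have : b0 (e.symm i) = ((e.symm i : s) : Fin d → ℝ) := by
      simp [b0, Module.Basis.mk_apply]
    rw [this]
    exact hs_sub (e.symm i).2
  have hdotrepr : ∀ (u y : Fin d → ℝ),
      ∑ j, y j * u j = ∑ i, B.repr y i * (∑ j, B i j * u j) := by
    intro u y
    calc ∑ j, y j * u j = ∑ j, (∑ i, B.repr y i * B i j) * u j := by
          refine Finset.sum_congr rfl fun j _ => ?_
          congr 1
          conv_lhs => rw [← B.sum_repr y]
          simp [Finset.sum_apply]
      _ = ∑ i, B.repr y i * (∑ j, B i j * u j) := by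
          simp_rw [Finset.sum_mul, Finset.mul_sum]
          rw [Finset.sum_comm]
          simp_rw [mul_assoc]
  -- ## Part 3 : construction of c
  set Lm : (Fin d → ℝ) →ₗ[ℝ] (Fin d → ℝ) := (Matrix.of fun i j => B i j).mulVecLin with hLmdef
  have hLmapply : ∀ (u : Fin d → ℝ) (i : Fin d), Lm u i = ∑ j, B i j * u j := by
    intro u i
    simp [hLmdef, Matrix.mulVecLin, Matrix.mulVec, dotProduct]
  have hinj : Function.Injective Lm := by
    rw [← LinearMap.ker_eq_bot, LinearMap.ker_eq_bot']
    intro u hu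
    have hBu : ∀ i, (∑ j, B i j * u j) = 0 := by
      intro i
      have := congrFun hu i
      rw [hLmapply u i] at this
      exact this
    have huu : ∑ j, u j * u j = 0 := by
      rw [hdotrepr u u]
      simp [hBu]
    funext j
    have hterm := (Finset.sum_eq_zero_iff_of_nonneg
      (fun j _ => mul_self_nonneg (u j))).1 huu j (Finset.mem_univ j)
    exact mul_self_eq_zero.1 hterm
  have hsurj : Function.Surjective Lm := LinearMap.injective_iff_surjective.1 hinj
  obtain ⟨c, hcraw⟩ := hsurj (fun i => K (B i) ^ ξ)
  have hc : ∀ i, (∑ j, B i j * c j) = K (B i) ^ ξ := by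
    intro i
    rw [← hLmapply c i, hcraw]
  -- limits of dot products
  have hBlim : ∀ i, Tendsto (fun τ => Q (B i) τ / q τ) l0 (𝓝 (K (B i) ^ ξ)) := by
    intro i
    have h := hLx (B i) (hBXs i) 1 one_pos
    simpa using h
  have hyQ : ∀ y : Fin d → ℝ, ∀ᶠ τ in l0, (∑ j, y j * γ τ j) = ∑ i, B.repr y i * Q (B i) τ := by
    intro y
    filter_upwards [hσpos, hσlt η hη.1] with τ h1 h2
    rw [hdotrepr (γ τ) y]
    refine Finset.sum_congr rfl fun i _ => ?_
    rw [← hlin τ ⟨h1, h2.le⟩ (B i) (hBXs i)]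
  have hlimgen : ∀ y : Fin d → ℝ,
      Tendsto (fun τ => (∑ j, y j * γ τ j) / q τ) l0 (𝓝 (∑ j, y j * c j)) := by
    intro y
    have h1 : Tendsto (fun τ => ∑ i, B.repr y i * (Q (B i) τ / q τ)) l0
        (𝓝 (∑ i, B.repr y i * (K (B i) ^ ξ))) :=
      tendsto_finset_sum _ fun i _ => (hBlim i).const_mul _
    have heq : (fun τ => ∑ i, B.repr y i * (Q (B i) τ / q τ)) =ᶠ[l0]
        (fun τ => (∑ j, y j * γ τ j) / q τ) := by
      filter_upwards [hyQ y] with τ h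
      rw [h, Finset.sum_div]
      simp_rw [mul_div_assoc]
    have hval : (∑ i, B.repr y i * (K (B i) ^ ξ)) = ∑ j, y j * c j := by
      rw [hdotrepr c y]
      exact Finset.sum_congr rfl fun i _ => by rw [hc i]
    rw [← hval]
    exact h1.congr' heq
  -- key identities for K and c
  have hKc : ∀ x ∈ Xs, K x ^ ξ = ∑ j, x j * c j := by
    intro x hx
    have h1 : Tendsto (fun τ => Q x τ / q τ) l0 (𝓝 (K x ^ ξ)) := by
      have h := hLx x hx 1 one_pos
      simpa using h
    have h2 : Tendsto (fun τ => Q x τ / q τ) l0 (𝓝 (∑ j, x j * c j)) := by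
      refine (hlimgen x).congr' ?_
      filter_upwards [hσpos, hσlt η hη.1] with τ ht1 ht2
      rw [← hlin τ ⟨ht1, ht2.le⟩ x hx]
    exact tendsto_nhds_unique h1 h2
  set m : Fin d → ℝ := fun i => if (i : ℕ) = 0 then (1:ℝ) else 0 with hmdef
  have hmc : (∑ j, m j * c j) = 1 := by
    have h2 : Tendsto (fun τ => (∑ j, m j * γ τ j) / q τ) l0 (𝓝 (∑ j, m j * c j)) := hlimgen m
    have h1 : Tendsto (fun τ => (∑ j, m j * γ τ j) / q τ) l0 (𝓝 1) := by
      have heq : (fun τ => (1:ℝ)) =ᶠ[l0] (fun τ => (∑ j, m j * γ τ j) / q τ) := by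
        filter_upwards [hσpos, hσlt η hη.1, hqneg] with τ ht1 ht2 ht3
        have hq : q τ = ∑ j, m j * γ τ j := by
          have h0 : q τ = sInf {z | τ < Fu z} := rfl
          rw [h0, hFuinv τ ⟨ht1, ht2.le⟩]
          exact Finset.sum_congr rfl fun i _ => by rw [hmean i]
        rw [← hq, div_self (ne_of_lt ht3)]
      exact tendsto_const_nhds.congr' heq
    exact tendsto_nhds_unique h2 h1
  refine ⟨c, ?_, ?_, ?_⟩
  · rw [show (∑ i, (∫ x, x i ∂μ) * c i) = ∑ j, m j * c j from
      Finset.sum_congr rfl fun i _ => by rw [hmean i], hmc]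
  · intro x hx
    have hpos : 0 < ∑ j, x j * c j := by
      rw [← hKc x hx]
      exact Real.rpow_pos_of_pos (hKpos x hx) _
    refine ⟨hpos, ?_⟩
    rw [← hKc x hx, ← Real.rpow_mul (hKpos x hx).le, mul_one_div_cancel hξ.ne', Real.rpow_one]
  · intro Ks hKs hKs0 ε hε
    rcases Ks.eq_empty_or_nonempty with rfl | hKne
    · exact Filter.Eventually.of_forall (by simp)
    set a := sInf Ks with hadef
    set b := sSup Ks with hbdef
    have haK : a ∈ Ks := hKs.sInf_mem hKne
    have hbK : b ∈ Ks := hKs.sSup_mem hKne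
    have ha : 0 < a := hKs0 haK
    have hb : 0 < b := hKs0 hbK
    have hKsub : Ks ⊆ Set.Icc a b := fun k hk =>
      ⟨csInf_le hKs.bddBelow hk, le_csSup hKs.bddAbove hk⟩
    set eqv := LinearEquiv.ofBijective Lm ⟨hinj, hsurj⟩ with heqv
    set g0 := LinearMap.toContinuousLinearMap ((eqv.symm : (Fin d → ℝ) ≃ₗ[ℝ] (Fin d → ℝ)) :
      (Fin d → ℝ) →ₗ[ℝ] (Fin d → ℝ)) with hg0
    set C := ‖g0‖ with hCdef
    have hC0 : 0 ≤ C := norm_nonneg _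
    have hnorm : ∀ w : Fin d → ℝ, ‖w‖ ≤ C * ‖Lm w‖ := by
      intro w
      have h1 : eqv.symm (Lm w) = w := by
        have h2 : Lm w = eqv w := rfl
        rw [h2, LinearEquiv.symm_apply_apply]
      calc ‖w‖ = ‖g0 (Lm w)‖ := by
            rw [show g0 (Lm w) = eqv.symm (Lm w) from rfl, h1]
        _ ≤ C * ‖Lm w‖ := g0.le_opNorm _
    set ε1 := ε / (C + 1) with hε1def
    have hε1 : 0 < ε1 := by positivity
    have hτT : Tendsto (fun T : ℕ => 1 / (T:ℝ)) atTop l0 := by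
      rw [hl0def]
      apply tendsto_nhdsWithin_of_tendsto_nhds_of_eventually_within _
        tendsto_one_div_atTop_nhds_zero_nat
      filter_upwards [Filter.eventually_gt_atTop 0] with T hT
      exact Set.mem_Ioi.2 (one_div_pos.2 (by exact_mod_cast hT : (0:ℝ) < (T:ℝ)))
    have hunif : ∀ i : Fin d, ∀ᶠ T : ℕ in atTop, ∀ k ∈ Set.Icc a b,
        |(-1 / q (1 / (T:ℝ))) * Q (B i) (k / (T:ℝ)) - (-(k ^ (-ξ) * K (B i) ^ ξ))| < ε1 := by
      intro i
      obtain ⟨δi, hδi, hδine⟩ := hQne (B i) (hBXs i)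
      have hgcont : ContinuousOn (fun k : ℝ => -(k ^ (-ξ) * K (B i) ^ ξ)) (Set.Icc a b) := by
        refine ContinuousOn.neg (ContinuousOn.mul ?_ continuousOn_const)
        intro k hk
        exact (Real.continuousAt_rpow_const k (-ξ)
          (Or.inl (ne_of_gt (lt_of_lt_of_le ha hk.1)))).continuousWithinAt
      have huc := isCompact_Icc.uniformContinuousOn_of_continuous hgcont
      rw [Metric.uniformContinuousOn_iff_le] at huc
      refine EQR.polya (f := fun (T : ℕ) k => (-1 / q (1 / (T:ℝ))) * Q (B i) (k / (T:ℝ)))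
        (g := fun k => -(k ^ (-ξ) * K (B i) ^ ξ)) ?_ ?_ ?_ hε1
      · intro ε' hε'
        obtain ⟨δ, hδ, hd2⟩ := huc ε' hε'
        refine ⟨δ, hδ, fun x hx y hy hxy => ?_⟩
        have := hd2 x hx y hy (by rwa [Real.dist_eq])
        rwa [Real.dist_eq] at this
      · have hbδ : ∀ᶠ T : ℕ in atTop, b / (T:ℝ) < δi := by
          have h0 : Tendsto (fun T : ℕ => b * (1/(T:ℝ))) atTop (𝓝 (b * 0)) :=
            tendsto_one_div_atTop_nhds_zero_nat.const_mul b
          rw [mul_zero] at h0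
          exact ((h0.congr fun T => by rw [mul_one_div]).eventually_lt_const hδi)
        filter_upwards [hτT.eventually hqneg, Filter.eventually_gt_atTop 0, hbδ]
          with T h1 h2 h3
        intro k hk k' hk' hkk'
        have hTpos : (0:ℝ) < T := by exact_mod_cast h2
        have hcoef : 0 ≤ -1 / q (1/(T:ℝ)) := (div_pos_of_neg_of_neg (by norm_num) h1).le
        apply mul_le_mul_of_nonneg_left _ hcoef
        apply csInf_le_csInf
        · exact hQbdd (B i) (hBXs i) _ (div_pos (lt_of_lt_of_le ha hk.1) hTpos)
        · apply hδine
          exact lt_of_le_of_lt ((div_le_div_iff_of_pos_right hTpos).2 hk'.2) h3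
        · intro z hz
          exact lt_of_le_of_lt ((div_le_div_iff_of_pos_right hTpos).2 hkk') hz
      · intro k hk
        have hk0 : 0 < k := lt_of_lt_of_le ha hk.1
        have base := (hLx (B i) (hBXs i) k hk0).comp hτT
        refine Tendsto.congr ?_ base.neg
        intro T
        show -(Q (B i) (k * (1/(T:ℝ))) / q (1/(T:ℝ)))
          = (-1 / q (1/(T:ℝ))) * Q (B i) (k/(T:ℝ))
        rw [mul_one_div]
        ring
    have hmain : ∀ᶠ T : ℕ in atTop, ∀ i : Fin d, ∀ k ∈ Set.Icc a b,
        |(-1 / q (1/(T:ℝ))) * Q (B i) (k/(T:ℝ)) + k ^ (-ξ) * K (B i) ^ ξ| < ε1 := by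
      rw [eventually_all]
      intro i
      refine (hunif i).mono fun T h k hk => ?_
      have h5 := h k hk
      rwa [sub_neg_eq_add] at h5
    have hηT : ∀ᶠ T : ℕ in atTop, ∀ k ∈ Set.Icc a b, k / (T:ℝ) ∈ Set.Ioc 0 η := by
      have hbη : ∀ᶠ T : ℕ in atTop, b / (T:ℝ) < η := by
        have h0 : Tendsto (fun T : ℕ => b * (1/(T:ℝ))) atTop (𝓝 (b * 0)) :=
          tendsto_one_div_atTop_nhds_zero_nat.const_mul b
        rw [mul_zero] at h0
        exact ((h0.congr fun T => by rw [mul_one_div]).eventually_lt_const hη.1)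
      filter_upwards [hbη, Filter.eventually_gt_atTop 0] with T h1 h2 k hk
      have hTpos : (0:ℝ) < T := by exact_mod_cast h2
      refine ⟨div_pos (lt_of_lt_of_le ha hk.1) hTpos, ?_⟩
      exact le_of_lt (lt_of_le_of_lt ((div_le_div_iff_of_pos_right hTpos).2 hk.2) h1)
    filter_upwards [hmain, hηT] with T h1 h2
    intro k hkK
    have hk := hKsub hkK
    show ‖(-1 / q (1/(T:ℝ))) • γ (k/(T:ℝ)) + (k ^ (-ξ)) • c‖ < ε
    set w : Fin d → ℝ := (-1 / q (1/(T:ℝ))) • γ (k/(T:ℝ)) + (k ^ (-ξ)) • c with hwdef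
    have hcomp : ∀ i, Lm w i
        = (-1/q (1/(T:ℝ))) * Q (B i) (k/(T:ℝ)) + k ^ (-ξ) * K (B i) ^ ξ := by
      intro i
      rw [hLmapply w i]
      have hsplit : ∑ j, B i j * w j
          = (-1/q (1/(T:ℝ))) * (∑ j, B i j * γ (k/(T:ℝ)) j)
            + k ^ (-ξ) * (∑ j, B i j * c j) := by
        simp only [hwdef, Pi.add_apply, Pi.smul_apply, smul_eq_mul]
        rw [Finset.mul_sum, Finset.mul_sum, ← Finset.sum_add_distrib]
        exact Finset.sum_congr rfl fun j _ => by ring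
      rw [hsplit, hc i, ← hlin (k/(T:ℝ)) (h2 k hk) (B i) (hBXs i)]
    have hLmle : ‖Lm w‖ ≤ ε1 := by
      rw [pi_norm_le_iff_of_nonneg hε1.le]
      intro i
      rw [Real.norm_eq_abs, hcomp i]
      exact (h1 i k hk).le
    calc ‖w‖ ≤ C * ‖Lm w‖ := hnorm w
      _ ≤ C * ε1 := mul_le_mul_of_nonneg_left hLmle hC0
      _ < ε := by
          rw [hε1def, ← mul_div_assoc, div_lt_iff₀ (by positivity : (0:ℝ) < C + 1)]
          nlinarith
end

section
/- (Lemma 9.1(iii), type 3 tails) Under the linear quantile regression setup with type 3 tails of index ξ < 0, there exists a vector c ∈ ℝ^d with μ_Xᵀc = 1, xᵀc > 0 and K(x) = (xᵀc)^{1/ξ} for all x ∈ 𝐗, such that for every compact set M ⊂ (0,1) ∪ (1,∞) and every compact set L ⊂ (0,∞): (a) sup_{m∈M, s∈L} ‖γ₋₁(sτ′)/(F_u⁻¹(m s τ′) − F_u⁻¹(sτ′)) − c₋₁/(m^{−ξ} − 1)‖ → 0 as τ′ ↘ 0, with F_u⁻¹(m s τ′) − F_u⁻¹(sτ′) ≠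 0 for all sufficiently small τ′ and all m ∈ M, s ∈ L; and (b) sup_{s∈L} ‖γ₋₁(sτ′)/F_u⁻¹(sτ′) − c₋₁‖ → 0 as τ′ ↘ 0 (all quantile arguments lying in (0,η] for τ′ small enough). -/
open MeasureTheory Filter Topology Real
open Set


namespace EQR

noncomputable def q (Fu : ℝ → ℝ) (τ : ℝ) : ℝ := sInf {z | τ < Fu z}

variable {Fu : ℝ → ℝ} {ξ : ℝ}

lemma eventually_lt_nhdsGT {δ : ℝ} (hδ : 0 < δ) : ∀ᶠ τ in 𝓝[>] (0:ℝ), τ < δ := by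
  filter_upwards [Ioo_mem_nhdsGT hδ]
    with τ hτ using hτ.2

lemma eventually_pos_nhdsGT : ∀ᶠ τ in 𝓝[>] (0:ℝ), 0 < τ := self_mem_nhdsWithin

lemma mul_tendsto_nhdsGT {u : ℝ} (hu : 0 < u) :
    Tendsto (fun τ : ℝ => u * τ) (𝓝[>] (0:ℝ)) (𝓝[>] (0:ℝ)) := by
  rw [tendsto_nhdsWithin_iff]
  constructor
  · have h : Tendsto (fun τ : ℝ => u * τ) (𝓝 (0:ℝ)) (𝓝 (u * 0)) :=
      (continuous_const.mul continuous_id).tendsto 0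
    rw [mul_zero] at h
    exact h.mono_left nhdsWithin_le_nhds
  · filter_upwards [eventually_pos_nhdsGT] with τ hτ using mul_pos hu hτ

lemma bddBelow_S (hFu0 : ∀ z < (0:ℝ), Fu z = 0) {τ : ℝ} (hτ : 0 ≤ τ) :
    BddBelow {z | τ < Fu z} := by
  refine ⟨0, fun z hz => ?_⟩
  by_contra h
  push_neg at h
  have hz' : τ < Fu z := hz
  rw [hFu0 z h] at hz'
  exact absurd hz' (not_lt.2 hτ)

lemma Fu_le_of_lt_q (hFu0 : ∀ z < (0:ℝ), Fu z = 0) {τ z : ℝ} (hτ : 0 ≤ τ)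
    (hz : z < q Fu τ) : Fu z ≤ τ := by
  by_contra h
  push_neg at h
  exact absurd (csInf_le (bddBelow_S hFu0 hτ) h) (not_le.2 hz)

lemma lt_Fu_of_q_lt (hFumono : Monotone Fu) (hFu0 : ∀ z < (0:ℝ), Fu z = 0)
    {τ z : ℝ} (hτ : 0 ≤ τ) (hne : τ < Fu 1) (hz : q Fu τ < z) : τ < Fu z := by
  obtain ⟨w, hw, hwz⟩ := (csInf_lt_iff (bddBelow_S hFu0 hτ) ⟨1, hne⟩).1 hz
  exact lt_of_lt_of_le hw (hFumono hwz.le)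

lemma Fu_tendsto_zero (hFumono : Monotone Fu) (hFur0 : ∀ z, 0 ≤ Fu z) (hξ : ξ < 0)
    (hreg : ∀ v > (0:ℝ), Tendsto (fun z => Fu (v * z) / Fu z) (𝓝[>] (0:ℝ)) (𝓝 (v ^ (-1/ξ)))) :
    Tendsto Fu (𝓝[>] (0:ℝ)) (𝓝 0) := by
  have hlim : Tendsto Fu (𝓝[>] (0:ℝ)) (𝓝 (sInf (Fu '' Ioi 0))) :=
    hFumono.tendsto_nhdsGT 0
  set L := sInf (Fu '' Ioi 0) with hL
  have hL0 : 0 ≤ L :=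
    le_csInf ⟨Fu 1, ⟨1, by norm_num, rfl⟩⟩ (by rintro y ⟨z, hz, rfl⟩; exact hFur0 z)
  rcases eq_or_lt_of_le hL0 with h | h
  · rwa [← h] at hlim
  · exfalso
    have h2 : Tendsto (fun z => Fu (2*z) / Fu z) (𝓝[>] (0:ℝ)) (𝓝 (L / L)) :=
      (hlim.comp (mul_tendsto_nhdsGT two_pos)).div hlim h.ne'
    have huniq := tendsto_nhds_unique (hreg 2 two_pos) h2
    rw [div_self h.ne'] at huniq
    have hexp : (0:ℝ) < -1/ξ := by
      rw [neg_div]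
      exact neg_pos.2 (div_neg_of_pos_of_neg one_pos hξ)
    have : (1:ℝ) < 2 ^ (-1/ξ) := by
      calc (1:ℝ) = 2 ^ (0:ℝ) := (Real.rpow_zero 2).symm
      _ < 2 ^ (-1/ξ) := by
        exact Real.rpow_lt_rpow_left_iff (by norm_num) |>.2 hexp
    rw [huniq] at this
    exact lt_irrefl 1 this

lemma q_pos (hFumono : Monotone Fu) (hFu0 : ∀ z < (0:ℝ), Fu z = 0)
    (hFutend : Tendsto Fu (𝓝[>] (0:ℝ)) (𝓝 0)) {τ : ℝ} (hτ : 0 < τ) (hne : τ < Fu 1) :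
    0 < q Fu τ := by
  obtain ⟨z0, hz0, hz0pos⟩ :=
    ((hFutend.eventually_lt_const hτ).and eventually_pos_nhdsGT).exists
  have : z0 ≤ q Fu τ := by
    refine le_csInf ⟨1, hne⟩ fun z hz => ?_
    by_contra h
    push_neg at h
    exact absurd (lt_of_le_of_lt (hFumono h.le) hz0) (not_lt.2 (le_of_lt hz))
  exact lt_of_lt_of_le hz0pos this

lemma q_mono (hFu0 : ∀ z < (0:ℝ), Fu z = 0) {τ₁ τ₂ : ℝ} (h1 : 0 ≤ τ₁) (h12 : τ₁ ≤ τ₂)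
    (hne : {z | τ₂ < Fu z}.Nonempty) : q Fu τ₁ ≤ q Fu τ₂ :=
  csInf_le_csInf (bddBelow_S hFu0 h1) hne (fun z hz => lt_of_le_of_lt h12 hz)

lemma q_tendsto (hFumono : Monotone Fu) (hFu0 : ∀ z < (0:ℝ), Fu z = 0)
    (hFupos : ∀ z > (0:ℝ), 0 < Fu z)
    (hFutend : Tendsto Fu (𝓝[>] (0:ℝ)) (𝓝 0)) :
    Tendsto (q Fu) (𝓝[>] (0:ℝ)) (𝓝[>] (0:ℝ)) := by
  have hqpos : ∀ᶠ τ in 𝓝[>] (0:ℝ), 0 < q Fu τ := by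
    filter_upwards [eventually_pos_nhdsGT, eventually_lt_nhdsGT (hFupos 1 one_pos)]
      with τ h1 h2 using q_pos hFumono hFu0 hFutend h1 h2
  rw [tendsto_nhdsWithin_iff]
  refine ⟨?_, hqpos⟩
  rw [tendsto_order]
  constructor
  · intro b hb
    filter_upwards [hqpos] with τ h using lt_trans hb h
  · intro b hb
    filter_upwards [eventually_pos_nhdsGT,
      eventually_lt_nhdsGT (hFupos (b/2) (half_pos hb))] with τ h1 h2
    have : q Fu τ ≤ b/2 := csInf_le (bddBelow_S hFu0 h1.le) h2
    exact lt_of_le_of_lt this (half_lt_self hb)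


lemma ratio_tendsto (hFumono : Monotone Fu) (hFu0 : ∀ z < (0:ℝ), Fu z = 0)
    (hFupos : ∀ z > (0:ℝ), 0 < Fu z)
    (hFutend : Tendsto Fu (𝓝[>] (0:ℝ)) (𝓝 0))
    (hreg : ∀ v > (0:ℝ), Tendsto (fun z => Fu (v * z) / Fu z) (𝓝[>] (0:ℝ)) (𝓝 (v ^ (-1/ξ))))
    {v w : ℝ} (hv : 0 < v) (hw : 0 < w) :
    Tendsto (fun τ => Fu (v * q Fu τ) / Fu (w * q Fu τ)) (𝓝[>] (0:ℝ))
      (𝓝 ((v/w) ^ (-1/ξ))) := by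
  have hq := q_tendsto hFumono hFu0 hFupos hFutend
  have h1 : Tendsto (fun τ => Fu (v * q Fu τ) / Fu (q Fu τ)) (𝓝[>] (0:ℝ))
      (𝓝 (v ^ (-1/ξ))) := (hreg v hv).comp hq
  have h2 : Tendsto (fun τ => Fu (w * q Fu τ) / Fu (q Fu τ)) (𝓝[>] (0:ℝ))
      (𝓝 (w ^ (-1/ξ))) := (hreg w hw).comp hq
  have hw0 : w ^ (-1/ξ) ≠ 0 := (Real.rpow_pos_of_pos hw _).ne'
  have h3 := h1.div h2 hw0
  rw [← Real.div_rpow hv.le hw.le] at h3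
  apply h3.congr'
  have hqpos : ∀ᶠ τ in 𝓝[>] (0:ℝ), 0 < q Fu τ :=
    (tendsto_nhdsWithin_iff.1 hq).2
  filter_upwards [hqpos] with τ hτ
  have hFuq : Fu (q Fu τ) ≠ 0 := (hFupos _ hτ).ne'
  have hFuw : Fu (w * q Fu τ) ≠ 0 := (hFupos _ (mul_pos hw hτ)).ne'
  rw [Pi.div_apply]
  field_simp

lemma rpow_negxi_inv {u : ℝ} (hu : 0 < u) (hξ : ξ < 0) :
    (u ^ (-ξ)) ^ (-1/ξ) = u := by
  rw [← Real.rpow_mul hu.le]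
  have : -ξ * (-1/ξ) = 1 := by
    field_simp
    exact div_self hξ.ne
  rw [this, Real.rpow_one]

lemma rpow_negxi_mul_rpow_xi {u : ℝ} (hu : 0 < u) :
    u ^ (-ξ) * u ^ ξ = 1 := by
  rw [← Real.rpow_add hu, neg_add_cancel, Real.rpow_zero]

lemma q_upper (hFumono : Monotone Fu) (hFu0 : ∀ z < (0:ℝ), Fu z = 0)
    (hFupos : ∀ z > (0:ℝ), 0 < Fu z)
    (hFutend : Tendsto Fu (𝓝[>] (0:ℝ)) (𝓝 0)) (hξ : ξ < 0)
    (hreg : ∀ v > (0:ℝ), Tendsto (fun z => Fu (v * z) / Fu z) (𝓝[>] (0:ℝ)) (𝓝 (v ^ (-1/ξ))))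
    {u a : ℝ} (hu : 0 < u) (ha : u ^ (-ξ) < a) :
    ∀ᶠ τ in 𝓝[>] (0:ℝ), q Fu (u * τ) ≤ a * q Fu τ := by
  have hxipos : (0:ℝ) < u ^ ξ := Real.rpow_pos_of_pos hu ξ
  have ha0 : 0 < a := lt_trans (Real.rpow_pos_of_pos hu _) ha
  set θ := (1 + a * u ^ ξ) / 2 with hθdef
  have h1a : (1:ℝ) < a * u ^ ξ := by
    have := mul_lt_mul_of_pos_right ha hxipos
    rwa [rpow_negxi_mul_rpow_xi hu] at this
  have hθ1 : 1 < θ := by rw [hθdef]; linarith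
  have hθlt : θ < a * u ^ ξ := by rw [hθdef]; linarith
  have hθpos : 0 < θ := lt_trans one_pos hθ1
  have hdiv : u ^ (-ξ) < a / θ := by
    have h2 : a / (a * u ^ ξ) < a / θ := by
      apply div_lt_div_of_pos_left ha0 hθpos hθlt
    have h3 : a / (a * u ^ ξ) = u ^ (-ξ) := by
      rw [Real.rpow_neg hu.le]
      field_simp
    rwa [h3] at h2
  have hexp : (0:ℝ) < -1/ξ := by
    rw [neg_div]; exact neg_pos.2 (div_neg_of_pos_of_neg one_pos hξ)
  have hulim : u < (a/θ) ^ (-1/ξ) := by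
    have := Real.rpow_lt_rpow (Real.rpow_nonneg hu.le _) hdiv hexp
    rwa [rpow_negxi_inv hu hξ] at this
  have hratio := (ratio_tendsto hFumono hFu0 hFupos hFutend hreg ha0 hθpos).eventually_const_lt hulim
  have hqpos : ∀ᶠ τ in 𝓝[>] (0:ℝ), 0 < q Fu τ :=
    (tendsto_nhdsWithin_iff.1 (q_tendsto hFumono hFu0 hFupos hFutend)).2
  have hFu1 : 0 < Fu 1 := hFupos 1 one_pos
  filter_upwards [hratio, hqpos, eventually_pos_nhdsGT, eventually_lt_nhdsGT hFu1,
    eventually_lt_nhdsGT (show (0:ℝ) < Fu 1 / u from div_pos hFu1 hu)]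
    with τ hr hq hτ hτFu hτFuu
  -- τ < Fu (θ * q Fu τ)
  have hθq : q Fu τ < θ * q Fu τ := by nlinarith
  have hFuθ : τ < Fu (θ * q Fu τ) := lt_Fu_of_q_lt hFumono hFu0 hτ.le hτFu hθq
  have hFuθpos : 0 < Fu (θ * q Fu τ) := lt_trans hτ hFuθ
  have hFua : u * τ < Fu (a * q Fu τ) := by
    have h5 : u * Fu (θ * q Fu τ) < Fu (a * q Fu τ) := by
      have := (lt_div_iff₀ hFuθpos).1 hr
      linarith
    nlinarith
  exact csInf_le (bddBelow_S hFu0 (mul_pos hu hτ).le) hFua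

lemma q_lower (hFumono : Monotone Fu) (hFu0 : ∀ z < (0:ℝ), Fu z = 0)
    (hFupos : ∀ z > (0:ℝ), 0 < Fu z)
    (hFutend : Tendsto Fu (𝓝[>] (0:ℝ)) (𝓝 0)) (hξ : ξ < 0)
    (hreg : ∀ v > (0:ℝ), Tendsto (fun z => Fu (v * z) / Fu z) (𝓝[>] (0:ℝ)) (𝓝 (v ^ (-1/ξ))))
    {u b : ℝ} (hu : 0 < u) (hb0 : 0 < b) (hb : b < u ^ (-ξ)) :
    ∀ᶠ τ in 𝓝[>] (0:ℝ), b * q Fu τ ≤ q Fu (u * τ) := by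
  have hxipos : (0:ℝ) < u ^ ξ := Real.rpow_pos_of_pos hu ξ
  set θ := (1 + b * u ^ ξ) / 2 with hθdef
  have h1b : b * u ^ ξ < 1 := by
    have := mul_lt_mul_of_pos_right hb hxipos
    rwa [rpow_negxi_mul_rpow_xi hu] at this
  have hθgt : b * u ^ ξ < θ := by rw [hθdef]; nlinarith [mul_pos hb0 hxipos]
  have hθ1 : θ < 1 := by rw [hθdef]; linarith
  have hθpos : 0 < θ := lt_trans (mul_pos hb0 hxipos) hθgt
  have hdiv : b / θ < u ^ (-ξ) := by
    have h2 : b / θ < b / (b * u ^ ξ) := div_lt_div_of_pos_left hb0 (mul_pos hb0 hxipos) hθgt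
    have h3 : b / (b * u ^ ξ) = u ^ (-ξ) := by
      rw [Real.rpow_neg hu.le]
      field_simp
    rwa [h3] at h2
  have hexp : (0:ℝ) < -1/ξ := by
    rw [neg_div]; exact neg_pos.2 (div_neg_of_pos_of_neg one_pos hξ)
  have hulim : (b/θ) ^ (-1/ξ) < u := by
    have := Real.rpow_lt_rpow (by positivity) hdiv hexp
    rwa [rpow_negxi_inv hu hξ] at this
  have hratio := (ratio_tendsto hFumono hFu0 hFupos hFutend hreg hb0 hθpos).eventually_lt_const hulim
  have hqpos : ∀ᶠ τ in 𝓝[>] (0:ℝ), 0 < q Fu τ :=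
    (tendsto_nhdsWithin_iff.1 (q_tendsto hFumono hFu0 hFupos hFutend)).2
  have hFu1 : 0 < Fu 1 := hFupos 1 one_pos
  filter_upwards [hratio, hqpos, eventually_pos_nhdsGT,
    eventually_lt_nhdsGT (show (0:ℝ) < Fu 1 / u from div_pos hFu1 hu)]
    with τ hr hq hτ hτFuu
  have hne : {z | u * τ < Fu z}.Nonempty := ⟨1, by
    have : u * τ < Fu 1 := by rw [← lt_div_iff₀' hu]; exact hτFuu
    exact this⟩
  have hθq : θ * q Fu τ < q Fu τ := by nlinarith
  have hFuθ : Fu (θ * q Fu τ) ≤ τ := Fu_le_of_lt_q hFu0 hτ.le hθq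
  have hFuθpos : 0 < Fu (θ * q Fu τ) := hFupos _ (mul_pos hθpos hq)
  have hFub : Fu (b * q Fu τ) ≤ u * τ := by
    have h5 : Fu (b * q Fu τ) < u * Fu (θ * q Fu τ) := by
      have := (div_lt_iff₀ hFuθpos).1 hr
      linarith
    nlinarith
  refine le_csInf hne fun z hz => ?_
  by_contra h
  push_neg at h
  have : Fu z ≤ u * τ := le_trans (hFumono h.le) hFub
  exact absurd (lt_of_lt_of_le hz this) (lt_irrefl _)

lemma q_ratio_tendsto (hFumono : Monotone Fu) (hFu0 : ∀ z < (0:ℝ), Fu z = 0)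
    (hFupos : ∀ z > (0:ℝ), 0 < Fu z)
    (hFutend : Tendsto Fu (𝓝[>] (0:ℝ)) (𝓝 0)) (hξ : ξ < 0)
    (hreg : ∀ v > (0:ℝ), Tendsto (fun z => Fu (v * z) / Fu z) (𝓝[>] (0:ℝ)) (𝓝 (v ^ (-1/ξ))))
    {u : ℝ} (hu : 0 < u) :
    Tendsto (fun τ => q Fu (u * τ) / q Fu τ) (𝓝[>] (0:ℝ)) (𝓝 (u ^ (-ξ))) := by
  have hqpos : ∀ᶠ τ in 𝓝[>] (0:ℝ), 0 < q Fu τ :=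
    (tendsto_nhdsWithin_iff.1 (q_tendsto hFumono hFu0 hFupos hFutend)).2
  have hupos : (0:ℝ) < u ^ (-ξ) := Real.rpow_pos_of_pos hu _
  rw [tendsto_order]
  constructor
  · intro b hb
    set b' := max b (u ^ (-ξ) / 2) with hb'def
    have hb'lt : b' < u ^ (-ξ) := max_lt hb (half_lt_self hupos)
    have hb'pos : 0 < b' := lt_of_lt_of_le (half_pos hupos) (le_max_right _ _)
    set b'' := (b' + u ^ (-ξ)) / 2 with hb''def
    have h1 : b' < b'' := by rw [hb''def]; linarith
    have h2 : b'' < u ^ (-ξ) := by rw [hb''def]; linarith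
    have h3 : 0 < b'' := lt_trans hb'pos h1
    filter_upwards [q_lower hFumono hFu0 hFupos hFutend hξ hreg hu h3 h2, hqpos]
      with τ hl hq
    have : b'' ≤ q Fu (u * τ) / q Fu τ := (le_div_iff₀ hq).2 (by linarith)
    have hbb' : b ≤ b' := le_max_left _ _
    linarith
  · intro a ha
    set a' := (u ^ (-ξ) + a) / 2 with ha'def
    have h1 : u ^ (-ξ) < a' := by rw [ha'def]; linarith
    have h2 : a' < a := by rw [ha'def]; linarith
    filter_upwards [q_upper hFumono hFu0 hFupos hFutend hξ hreg hu h1, hqpos]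
      with τ hl hq
    have : q Fu (u * τ) / q Fu τ ≤ a' := (div_le_iff₀ hq).2 (by linarith)
    linarith


lemma q_ratio_uniform (hFumono : Monotone Fu) (hFu0 : ∀ z < (0:ℝ), Fu z = 0)
    (hFupos : ∀ z > (0:ℝ), 0 < Fu z)
    (hFutend : Tendsto Fu (𝓝[>] (0:ℝ)) (𝓝 0)) (hξ : ξ < 0)
    (hreg : ∀ v > (0:ℝ), Tendsto (fun z => Fu (v * z) / Fu z) (𝓝[>] (0:ℝ)) (𝓝 (v ^ (-1/ξ))))
    {M : Set ℝ} (hM : IsCompact M) (hM0 : M ⊆ Ioi 0) {ε : ℝ} (hε : 0 < ε) :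
    ∀ᶠ τ in 𝓝[>] (0:ℝ), ∀ m ∈ M, |q Fu (m * τ) / q Fu τ - m ^ (-ξ)| ≤ ε := by
  have hqpos : ∀ᶠ τ in 𝓝[>] (0:ℝ), 0 < q Fu τ :=
    (tendsto_nhdsWithin_iff.1 (q_tendsto hFumono hFu0 hFupos hFutend)).2
  have hFu1 : 0 < Fu 1 := hFupos 1 one_pos
  have key : ∀ m : ℝ, ∃ I : Set ℝ, m ∈ M → (I ∈ 𝓝 m ∧
      ∀ᶠ τ in 𝓝[>] (0:ℝ), ∀ m' ∈ I, |q Fu (m' * τ) / q Fu τ - m' ^ (-ξ)| ≤ ε) := by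
    intro m
    by_cases hm : m ∈ M
    swap
    · exact ⟨∅, fun h => absurd h hm⟩
    have hmpos : 0 < m := hM0 hm
    have hcont : ContinuousAt (fun t : ℝ => t ^ (-ξ)) m :=
      Real.continuousAt_rpow_const m (-ξ) (Or.inl hmpos.ne')
    obtain ⟨δ0, hδ0, hδ0p⟩ := Metric.continuousAt_iff.1 hcont (ε/4) (by linarith)
    set δ := min δ0 m with hδdef
    have hδpos : 0 < δ := lt_min hδ0 hmpos
    set lo := m - δ/2 with hlodef
    set hi := m + δ/2 with hhidef
    have hδm : δ ≤ m := min_le_right _ _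
    have hδδ0 : δ ≤ δ0 := min_le_left _ _
    have hlopos : 0 < lo := by rw [hlodef]; linarith
    have hhipos : 0 < hi := by rw [hhidef]; linarith
    refine ⟨Ioo lo hi, fun _ => ⟨isOpen_Ioo.mem_nhds ⟨by rw [hlodef]; linarith,
      by rw [hhidef]; linarith⟩, ?_⟩⟩
    have hloT := Metric.tendsto_nhds.1
      (q_ratio_tendsto hFumono hFu0 hFupos hFutend hξ hreg hlopos) (ε/2) (half_pos hε)
    have hhiT := Metric.tendsto_nhds.1
      (q_ratio_tendsto hFumono hFu0 hFupos hFutend hξ hreg hhipos) (ε/2) (half_pos hε)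
    filter_upwards [hloT, hhiT, hqpos, eventually_pos_nhdsGT,
      eventually_lt_nhdsGT (show (0:ℝ) < Fu 1 / hi from div_pos hFu1 hhipos)]
      with τ hlo hhi hq hτ hτhi
    intro m' hm'
    have hm'1 := hm'.1
    have hm'2 := hm'.2
    have hm'pos : 0 < m' := lt_trans hlopos hm'1
    have hhiFu : hi * τ < Fu 1 := by rw [← lt_div_iff₀' hhipos]; exact hτhi
    have hm'Fu : {z | m' * τ < Fu z}.Nonempty :=
      ⟨1, lt_of_le_of_lt (by nlinarith : m' * τ ≤ hi * τ) hhiFu⟩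
    have hhiFune : {z | hi * τ < Fu z}.Nonempty := ⟨1, hhiFu⟩
    have h1 : q Fu (lo * τ) ≤ q Fu (m' * τ) :=
      q_mono hFu0 (mul_pos hlopos hτ).le (by nlinarith) hm'Fu
    have h2 : q Fu (m' * τ) ≤ q Fu (hi * τ) :=
      q_mono hFu0 (mul_pos hm'pos hτ).le (by nlinarith) hhiFune
    have h1' : q Fu (lo * τ) / q Fu τ ≤ q Fu (m' * τ) / q Fu τ := by gcongr
    have h2' : q Fu (m' * τ) / q Fu τ ≤ q Fu (hi * τ) / q Fu τ := by gcongr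
    rw [Real.dist_eq] at hlo hhi
    have d1 : dist lo m < δ0 := by
      rw [Real.dist_eq, hlodef, abs_of_nonpos (by linarith)]; linarith
    have d2 : dist hi m < δ0 := by
      rw [Real.dist_eq, hhidef, abs_of_nonneg (by linarith)]; linarith
    have d3 : dist m' m < δ0 := by
      rw [Real.dist_eq, abs_lt]
      rw [hlodef] at hm'1; rw [hhidef] at hm'2
      constructor <;> linarith
    have e1 := abs_lt.1 ((Real.dist_eq _ _) ▸ hδ0p d1)
    have e2 := abs_lt.1 ((Real.dist_eq _ _) ▸ hδ0p d2)
    have e3 := abs_lt.1 ((Real.dist_eq _ _) ▸ hδ0p d3)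
    have a1 := abs_lt.1 hlo
    have a2 := abs_lt.1 hhi
    rw [abs_le]
    obtain ⟨a1l, a1r⟩ := a1
    obtain ⟨a2l, a2r⟩ := a2
    obtain ⟨e1l, e1r⟩ := e1
    obtain ⟨e2l, e2r⟩ := e2
    obtain ⟨e3l, e3r⟩ := e3
    constructor <;> linarith
  choose I hI using key
  obtain ⟨t, htM, hcov⟩ := hM.elim_nhds_subcover I (fun m hm => (hI m hm).1)
  have hev : ∀ᶠ τ in 𝓝[>] (0:ℝ), ∀ m ∈ t, ∀ m' ∈ I m,
      |q Fu (m' * τ) / q Fu τ - m' ^ (-ξ)| ≤ ε :=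
    (Filter.eventually_all_finset t).2 fun m hm => (hI m (htM m hm)).2
  filter_upwards [hev] with τ hτ m hm
  obtain ⟨n, hn, hmn⟩ := Set.mem_iUnion₂.1 (hcov hm)
  exact hτ n hn m hmn


set_option maxHeartbeats 2000000 in
lemma qx_tendsto (hFumono : Monotone Fu) (hFu0 : ∀ z < (0:ℝ), Fu z = 0)
    (hFupos : ∀ z > (0:ℝ), 0 < Fu z)
    (hFutend : Tendsto Fu (𝓝[>] (0:ℝ)) (𝓝 0)) (hξ : ξ < 0)
    (hreg : ∀ v > (0:ℝ), Tendsto (fun z => Fu (v * z) / Fu z) (𝓝[>] (0:ℝ)) (𝓝 (v ^ (-1/ξ))))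
    {Fx : ℝ → ℝ} (hFx : Monotone Fx) {k : ℝ} (hk : 0 < k)
    (htail : Tendsto (fun z => Fx z / Fu z) (𝓝[>] (0:ℝ)) (𝓝 k)) :
    Tendsto (fun τ => sInf {z | τ < Fx z} / q Fu τ) (𝓝[>] (0:ℝ)) (𝓝 (k ^ ξ)) := by
  have hqpos : ∀ᶠ τ in 𝓝[>] (0:ℝ), 0 < q Fu τ :=
    (tendsto_nhdsWithin_iff.1 (q_tendsto hFumono hFu0 hFupos hFutend)).2
  have hqto0 : Tendsto (q Fu) (𝓝[>] (0:ℝ)) (𝓝 0) :=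
    (tendsto_nhdsWithin_iff.1 (q_tendsto hFumono hFu0 hFupos hFutend)).1
  have hFu1 : 0 < Fu 1 := hFupos 1 one_pos
  have hexp : (0:ℝ) < -1/ξ := by
    rw [neg_div]; exact neg_pos.2 (div_neg_of_pos_of_neg one_pos hξ)
  have hkinv : 0 < k⁻¹ := inv_pos.2 hk
  have hkk : (k⁻¹) ^ (-ξ) = k ^ ξ := by
    rw [Real.inv_rpow hk.le, ← Real.rpow_neg hk.le, neg_neg]
  have hkpow : 0 < k ^ ξ := Real.rpow_pos_of_pos hk ξ
  -- Fx is ≤ 0 on nonpositive reals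
  have hFx0 : ∀ z ≤ (0:ℝ), Fx z ≤ 0 := by
    intro z hz
    have hev : ∀ᶠ w in 𝓝[>] (0:ℝ), Fx z ≤ (Fx w / Fu w) * Fu w := by
      filter_upwards [eventually_pos_nhdsGT] with w hw
      rw [div_mul_cancel₀ _ (hFupos w hw).ne']
      exact hFx (le_trans hz hw.le)
    have hlim : Tendsto (fun w => (Fx w / Fu w) * Fu w) (𝓝[>] (0:ℝ)) (𝓝 (k * 0)) :=
      htail.mul hFutend
    rw [mul_zero] at hlim
    exact ge_of_tendsto hlim hev
  have hSxpos : ∀ {τ : ℝ}, 0 < τ → ∀ z ∈ {z | τ < Fx z}, 0 < z := by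
    intro τ hτ z hz
    by_contra h
    push_neg at h
    exact absurd (lt_of_lt_of_le hz (hFx0 z h)) (not_lt.2 hτ.le)
  have hSxbdd : ∀ {τ : ℝ}, 0 < τ → BddBelow {z | τ < Fx z} := by
    intro τ hτ
    exact ⟨0, fun z hz => (hSxpos hτ z hz).le⟩
  -- nonemptiness witness
  obtain ⟨w0, hw0r, hw0pos⟩ :=
    ((htail.eventually_const_lt (half_lt_self hk)).and eventually_pos_nhdsGT).exists
  have hw0Fu : 0 < Fu w0 := hFupos w0 hw0pos
  have hτ0 : 0 < k/2 * Fu w0 := mul_pos (half_pos hk) hw0Fu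
  have hw0Fx : k/2 * Fu w0 < Fx w0 := by
    have := (lt_div_iff₀ hw0Fu).1 hw0r
    linarith
  have hSxne : ∀ᶠ τ in 𝓝[>] (0:ℝ), {z | τ < Fx z}.Nonempty := by
    filter_upwards [eventually_lt_nhdsGT hτ0] with τ hτ
    exact ⟨w0, lt_trans hτ hw0Fx⟩
  rw [tendsto_order]
  constructor
  · -- lower bound
    intro b hb
    set b' := max b (k ^ ξ / 2) with hb'def
    have hb'lt : b' < k ^ ξ := max_lt hb (half_lt_self hkpow)
    have hb'pos : 0 < b' := lt_of_lt_of_le (half_pos hkpow) (le_max_right _ _)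
    set b'' := (b' + k ^ ξ) / 2 with hb''def
    have hb''1 : b' < b'' := by rw [hb''def]; linarith
    have hb''2 : b'' < k ^ ξ := by rw [hb''def]; linarith
    have hb''pos : 0 < b'' := lt_trans hb'pos hb''1
    -- choose u ∈ (0, k⁻¹) with b'' < u^(-ξ)
    have hcont : ContinuousAt (fun t : ℝ => t ^ (-ξ)) k⁻¹ :=
      Real.continuousAt_rpow_const _ _ (Or.inl hkinv.ne')
    have hev1 : ∀ᶠ t in 𝓝 (k⁻¹), b'' < t ^ (-ξ) := by
      have : b'' < (fun t : ℝ => t ^ (-ξ)) k⁻¹ := by simp only []; rw [hkk]; exact hb''2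
      exact hcont.eventually_const_lt this
    have hev2 : ∀ᶠ t in 𝓝 (k⁻¹), 0 < t := eventually_gt_nhds hkinv
    have hne' : (𝓝[<] (k⁻¹)).NeBot := nhdsLT_neBot _
    obtain ⟨u, ⟨hub, hupos⟩, huk⟩ :=
      (((hev1.and hev2).filter_mono (nhdsWithin_le_nhds (s := Iio (k⁻¹)))).and
        self_mem_nhdsWithin).exists
    have huinv : k < u⁻¹ := by
      rw [← inv_inv k]
      exact inv_strictAnti₀ hupos huk
    set ke := (k + u⁻¹) / 2 with hkedef
    have hke1 : k < ke := by rw [hkedef]; linarith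
    have hkepos : 0 < ke := lt_trans hk hke1
    have hθ : ke * u < 1 := by
      have h5 : ke < u⁻¹ := by rw [hkedef]; linarith
      calc ke * u < u⁻¹ * u := by nlinarith
      _ = 1 := inv_mul_cancel₀ hupos.ne'
    -- tail event
    have htl : ∀ᶠ z in 𝓝[>] (0:ℝ), Fx z < ke * Fu z := by
      filter_upwards [htail.eventually_lt_const hke1, eventually_pos_nhdsGT] with z h1 h2
      exact (div_lt_iff₀ (hFupos z h2)).1 h1
    obtain ⟨ze, hze, hzesub⟩ := mem_nhdsGT_iff_exists_Ioo_subset.1 htl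
    filter_upwards [q_lower hFumono hFu0 hFupos hFutend hξ hreg hupos hb''pos hub,
      hqpos, eventually_pos_nhdsGT, hSxne,
      (hqto0.eventually_lt_const (show (0:ℝ) < ze / b'' from div_pos hze hb''pos))]
      with τ hqlow hq hτ hne hqze
    have hbze : b'' * q Fu τ < ze := by
      rw [← lt_div_iff₀' hb''pos]; exact hqze
    have hmain : b'' * q Fu τ ≤ sInf {z | τ < Fx z} := by
      refine le_csInf hne fun z hz => ?_
      have hzpos : 0 < z := hSxpos hτ z hz
      rcases lt_or_ge z ze with hcase | hcase
      · have hzFu : Fx z < ke * Fu z := hzesub ⟨hzpos, hcase⟩ 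
        have hFuz : u * τ < Fu z := by
          have h6 : τ < ke * Fu z := lt_trans hz hzFu
          have h7 : 0 < Fu z := hFupos z hzpos
          nlinarith
        have : q Fu (u * τ) ≤ z := csInf_le (bddBelow_S hFu0 (mul_pos hupos hτ).le) hFuz
        linarith
      · linarith
    have : b'' ≤ sInf {z | τ < Fx z} / q Fu τ := (le_div_iff₀ hq).2 (by linarith)
    have hbb' : b ≤ b' := le_max_left _ _
    linarith
  · -- upper bound
    intro a ha
    set a' := (k ^ ξ + a) / 2 with ha'def
    have ha'1 : k ^ ξ < a' := by rw [ha'def]; linarith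
    have ha'2 : a' < a := by rw [ha'def]; linarith
    have ha'pos : 0 < a' := lt_trans hkpow ha'1
    -- choose u > k⁻¹ with u^(-ξ) < a'
    have hcont : ContinuousAt (fun t : ℝ => t ^ (-ξ)) k⁻¹ :=
      Real.continuousAt_rpow_const _ _ (Or.inl hkinv.ne')
    have hev1 : ∀ᶠ t in 𝓝 (k⁻¹), t ^ (-ξ) < a' := by
      have : (fun t : ℝ => t ^ (-ξ)) k⁻¹ < a' := by simp only []; rw [hkk]; exact ha'1
      exact hcont.eventually_lt_const this
    have hne' : (𝓝[>] (k⁻¹)).NeBot := nhdsGT_neBot _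
    obtain ⟨u, hua, huk⟩ :=
      ((hev1.filter_mono (nhdsWithin_le_nhds (s := Ioi (k⁻¹)))).and
        self_mem_nhdsWithin).exists
    have hupos : 0 < u := lt_trans hkinv huk
    have huinv : u⁻¹ < k := by
      rw [← inv_inv k]
      exact inv_strictAnti₀ hkinv huk
    set ke := (k + u⁻¹) / 2 with hkedef
    have hke1 : ke < k := by rw [hkedef]; linarith
    have hkepos : 0 < ke := by
      have : 0 < u⁻¹ := inv_pos.2 hupos
      rw [hkedef]; linarith
    have hθ : 1 < ke * u := by
      have h5 : u⁻¹ < ke := by rw [hkedef]; linarith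
      calc (1:ℝ) = u⁻¹ * u := (inv_mul_cancel₀ hupos.ne').symm
      _ < ke * u := by nlinarith
    -- tail event
    have htl : ∀ᶠ z in 𝓝[>] (0:ℝ), ke * Fu z < Fx z := by
      filter_upwards [htail.eventually_const_lt hke1, eventually_pos_nhdsGT] with z h1 h2
      exact (lt_div_iff₀ (hFupos z h2)).1 h1
    obtain ⟨ze, hze, hzesub⟩ := mem_nhdsGT_iff_exists_Ioo_subset.1 htl
    set a'' := (u ^ (-ξ) + a') / 2 with ha''def
    have ha''1 : u ^ (-ξ) < a'' := by rw [ha''def]; linarith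
    have ha''2 : a'' < a' := by rw [ha''def]; linarith
    filter_upwards [q_upper hFumono hFu0 hFupos hFutend hξ hreg hupos ha''1,
      hqpos, eventually_pos_nhdsGT, hSxne,
      eventually_lt_nhdsGT (show (0:ℝ) < Fu 1 / u from div_pos hFu1 hupos),
      (hqto0.eventually_lt_const (show (0:ℝ) < ze / a' from div_pos hze ha'pos))]
      with τ hqup hq hτ hne hτFuu hqze
    have hzlt : a' * q Fu τ < ze := by
      rw [← lt_div_iff₀' ha'pos]; exact hqze
    have hquτ : q Fu (u * τ) < a' * q Fu τ := lt_of_le_of_lt hqup (mul_lt_mul_of_pos_right ha''2 hq)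
    have huτFu : u * τ < Fu 1 := by rw [← lt_div_iff₀' hupos]; exact hτFuu
    have hFua : u * τ < Fu (a' * q Fu τ) :=
      lt_Fu_of_q_lt hFumono hFu0 (mul_pos hupos hτ).le huτFu hquτ
    have hzin : a' * q Fu τ ∈ {z | τ < Fx z} := by
      have h8 : ke * Fu (a' * q Fu τ) < Fx (a' * q Fu τ) :=
        hzesub ⟨mul_pos ha'pos hq, hzlt⟩
      have : τ < ke * Fu (a' * q Fu τ) := by nlinarith
      exact lt_trans this h8
    have hle : sInf {z | τ < Fx z} ≤ a' * q Fu τ := csInf_le (hSxbdd hτ) hzin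
    have : sInf {z | τ < Fx z} / q Fu τ ≤ a' := (div_le_iff₀ hq).2 (by linarith)
    linarith


open MeasureTheory in
lemma compl_null {d : ℕ} (μ : Measure (Fin d → ℝ)) (Xs : Set (Fin d → ℝ))
    (hXssupp : ∀ x, x ∈ Xs ↔ ∀ U ∈ 𝓝 x, 0 < μ U) : μ Xsᶜ = 0 := by
  have hcov : ∀ x : (Fin d → ℝ), ∃ V : Set (Fin d → ℝ),
      x ∈ Xsᶜ → (IsOpen V ∧ x ∈ V ∧ μ V = 0) := by
    intro x
    by_cases hx : x ∈ Xsᶜ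
    · rw [Set.mem_compl_iff, hXssupp x] at hx
      push_neg at hx
      obtain ⟨U, hU, hU0⟩ := hx
      obtain ⟨V, hVU, hVopen, hxV⟩ := mem_nhds_iff.1 hU
      refine ⟨V, fun _ => ⟨hVopen, hxV, ?_⟩⟩
      exact le_antisymm (le_trans (measure_mono hVU) (le_of_not_gt (by simpa using hU0)))
        zero_le
    · exact ⟨∅, fun h => absurd h hx⟩
  choose V hV using hcov
  have hopen : ∀ i : ↥(Xsᶜ), IsOpen (V i) := fun i => (hV i i.2).1
  obtain ⟨T, hTc, hTU⟩ := TopologicalSpace.isOpen_iUnion_countable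
    (fun i : ↥(Xsᶜ) => V i) hopen
  have hsub : Xsᶜ ⊆ ⋃ i ∈ T, V (i : Fin d → ℝ) := by
    rw [hTU]
    intro x hx
    exact Set.mem_iUnion.2 ⟨⟨x, hx⟩, (hV x hx).2.1⟩
  have h0 : μ (⋃ i ∈ T, V (i : Fin d → ℝ)) = 0 :=
    (measure_biUnion_null_iff hTc).2 fun i _ => (hV i i.2).2.2
  exact measure_mono_null hsub h0

open MeasureTheory in
lemma span_top {d : ℕ} (μ : Measure (Fin d → ℝ)) [IsProbabilityMeasure μ]
    (Xs : Set (Fin d → ℝ)) (hXscpt : IsCompact Xs)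
    (hposdef : (Matrix.of fun i j : Fin d => ∫ x, x i * x j ∂μ).PosDef)
    (hnull : μ Xsᶜ = 0) : Submodule.span ℝ Xs = ⊤ := by
  by_contra hne
  obtain ⟨φ, hφ0, hφbot⟩ := Submodule.exists_dual_map_eq_bot_of_lt_top
    (lt_top_iff_ne_top.2 hne) inferInstance
  have hφker : ∀ x ∈ Xs, φ x = 0 := by
    intro x hx
    have : φ x ∈ (Submodule.span ℝ Xs).map φ :=
      Submodule.mem_map_of_mem (Submodule.subset_span hx)
    rw [hφbot] at this
    simpa using this
  set y : Fin d → ℝ := fun i => φ (fun j => if i = j then 1 else 0) with hydef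
  have hφy : ∀ x, φ x = ∑ i, x i * y i := by
    intro x
    rw [LinearMap.pi_apply_eq_sum_univ φ x]
    simp [hydef, smul_eq_mul]
  have hy0 : y ≠ 0 := by
    intro h
    apply hφ0
    refine LinearMap.ext fun x => ?_
    rw [hφy x, h]
    simp
  -- integrability
  obtain ⟨C, hC⟩ := (isBounded_iff_forall_norm_le).1 hXscpt.isBounded
  have haeXs : ∀ᵐ x ∂μ, x ∈ Xs := by
    rw [MeasureTheory.ae_iff]
    exact hnull
  have hint : ∀ i j : Fin d, Integrable (fun x : Fin d → ℝ => x i * x j) μ := by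
    intro i j
    refine Integrable.mono' (integrable_const (C^2)) ?_ ?_
    · exact ((continuous_apply i).mul (continuous_apply j)).aestronglyMeasurable
    · filter_upwards [haeXs] with x hx
      have h1 : |x i| ≤ C := le_trans (norm_le_pi_norm x i) (hC x hx)
      have h2 : |x j| ≤ C := le_trans (norm_le_pi_norm x j) (hC x hx)
      have h3 : |x i| * |x j| ≤ C^2 := by
        nlinarith [abs_nonneg (x i), abs_nonneg (x j)]
      simpa [Real.norm_eq_abs, abs_mul] using h3
  have hint2 : ∀ i j : Fin d, Integrable (fun x : Fin d → ℝ => y i * y j * (x i * x j)) μ :=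
    fun i j => (hint i j).const_mul _
  -- the quadratic form evaluates to the integral of (φ x)^2
  have hquad : dotProduct (star y)
      (Matrix.mulVec (Matrix.of fun i j : Fin d => ∫ x, x i * x j ∂μ) y)
      = ∫ x, (φ x)^2 ∂μ := by
    have hsq : ∀ x : Fin d → ℝ, (φ x)^2 = ∑ i, ∑ j, y i * y j * (x i * x j) := by
      intro x
      rw [hφy x, sq, Finset.sum_mul_sum]
      congr 1; ext i; congr 1; ext j; ring
    rw [MeasureTheory.integral_congr_ae (Filter.Eventually.of_forall hsq)]
    rw [MeasureTheory.integral_finset_sum _ (fun i _ => integrable_finset_sum _ (fun j _ => hint2 i j))]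
    have : ∀ i : Fin d, (∫ x, ∑ j, y i * y j * (x i * x j) ∂μ)
        = ∑ j, y i * y j * ∫ x, x i * x j ∂μ := by
      intro i
      rw [MeasureTheory.integral_finset_sum _ (fun j _ => hint2 i j)]
      exact Finset.sum_congr rfl fun j _ => integral_const_mul _ _
    simp_rw [this]
    simp only [star_trivial, dotProduct, Matrix.mulVec, Matrix.of_apply]
    rw [Finset.sum_congr rfl]
    intro i _
    rw [Finset.mul_sum]
    exact Finset.sum_congr rfl fun j _ => by ring
  have hzero : (∫ x, (φ x)^2 ∂μ) = 0 := by
    rw [MeasureTheory.integral_eq_zero_iff_of_nonneg]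
    · filter_upwards [haeXs] with x hx
      rw [hφker x hx]
      norm_num
    · intro x; positivity
    · -- integrability of (φ x)^2
      have : (fun x : Fin d → ℝ => (φ x)^2) = fun x => ∑ i, ∑ j, y i * y j * (x i * x j) := by
        ext x
        rw [hφy x, sq, Finset.sum_mul_sum]
        congr 1; ext i; congr 1; ext j; ring
      rw [this]
      exact integrable_finset_sum _ (fun i _ => integrable_finset_sum _ (fun j _ => hint2 i j))
  have hpos := hposdef.dotProduct_mulVec_pos hy0
  rw [hquad, hzero] at hpos
  exact lt_irrefl 0 hpos


lemma abs_div_sub_div_le {A A0 Bv B0 : ℝ} (hBv : Bv ≠ 0) (hB0 : B0 ≠ 0) :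
    |A/Bv - A0/B0| ≤ |A - A0|/|Bv| + |A0| * |Bv - B0| / (|Bv| * |B0|) := by
  have h : A/Bv - A0/B0 = (A-A0)/Bv + A0*(B0-Bv)/(Bv*B0) := by
    field_simp
    ring
  rw [h]
  refine le_trans (abs_add_le _ _) ?_
  rw [abs_div, abs_div, abs_mul, abs_mul, abs_sub_comm B0 Bv]

end EQR


set_option maxHeartbeats 2000000 in
theorem extremal_qr_lem91iii_type3
    (d : ℕ) (hd : 1 ≤ d)
    (μ : Measure (Fin d → ℝ)) [IsProbabilityMeasure μ]
    (Xs : Set (Fin d → ℝ))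
    (hXssupp : ∀ x, x ∈ Xs ↔ ∀ U ∈ 𝓝 x, 0 < μ U)
    (hXscpt : IsCompact Xs)
    (hposdef : (Matrix.of fun i j : Fin d => ∫ x, x i * x j ∂μ).PosDef)
    (hmean : ∀ i : Fin d, (∫ x, x i ∂μ) = if (i : ℕ) = 0 then (1:ℝ) else 0)
    (η : ℝ) (hη : η ∈ Set.Ioc (0:ℝ) 1)
    (γ : ℝ → Fin d → ℝ)
    (F : (Fin d → ℝ) → ℝ → ℝ)
    (hFmono : ∀ x ∈ Xs, Monotone (F x))
    (hFrc : ∀ x ∈ Xs, ∀ z : ℝ, ContinuousWithinAt (F x) (Set.Ici z) z)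
    (hFrange : ∀ x ∈ Xs, ∀ z : ℝ, F x z ∈ Set.Icc (0:ℝ) 1)
    (hlin : ∀ τ ∈ Set.Ioc (0:ℝ) η, ∀ x ∈ Xs, sInf {z | τ < F x z} = ∑ i, x i * γ τ i)
    (Fu : ℝ → ℝ)
    (hFumono : Monotone Fu)
    (hFurc : ∀ z : ℝ, ContinuousWithinAt Fu (Set.Ici z) z)
    (hFurange : ∀ z : ℝ, Fu z ∈ Set.Icc (0:ℝ) 1)
    (hFuinv : ∀ τ ∈ Set.Ioc (0:ℝ) η, sInf {z | τ < Fu z} = ∑ i, (∫ x, x i ∂μ) * γ τ i)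
    (K : (Fin d → ℝ) → ℝ)
    (hKcont : ContinuousOn K Xs)
    (hKbdd : BddAbove (K '' Xs))
    (hKpos : ∀ x ∈ Xs, 0 < K x)
    (ξ : ℝ) (hξ : ξ < 0)
    (hFu0 : ∀ z < (0:ℝ), Fu z = 0)
    (hFupos : ∀ z > (0:ℝ), 0 < Fu z)
    (hreg : ∀ v > (0:ℝ), Tendsto (fun z => Fu (v * z) / Fu z) (𝓝[>] (0:ℝ)) (𝓝 (v ^ (-1/ξ))))
    (htaileq : TendstoUniformlyOn (fun z x => F x z / Fu z) K (𝓝[>] (0:ℝ)) Xs)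
    :
    ∃ c : Fin d → ℝ, (∑ i, (∫ x, x i ∂μ) * c i) = 1 ∧
      (∀ x ∈ Xs, 0 < (∑ i, x i * c i) ∧ K x = (∑ i, x i * c i) ^ (1/ξ)) ∧
      ∀ M : Set ℝ, IsCompact M → M ⊆ Set.Ioo 0 1 ∪ Set.Ioi 1 →
      ∀ L : Set ℝ, IsCompact L → L ⊆ Set.Ioi 0 →
        ((∀ ε > (0:ℝ), ∀ᶠ τ' in 𝓝[>] (0:ℝ), ∀ m ∈ M, ∀ s ∈ L, ∀ i : Fin d, (i : ℕ) ≠ 0 →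
            |γ (s * τ') i / (sInf {z | m * s * τ' < Fu z} - sInf {z | s * τ' < Fu z}) -
              c i / (m ^ (-ξ) - 1)| < ε) ∧
          (∀ᶠ τ' in 𝓝[>] (0:ℝ), ∀ m ∈ M, ∀ s ∈ L,
            sInf {z | m * s * τ' < Fu z} - sInf {z | s * τ' < Fu z} ≠ 0)) ∧
        (∀ ε > (0:ℝ), ∀ᶠ τ' in 𝓝[>] (0:ℝ), ∀ s ∈ L, ∀ i : Fin d, (i : ℕ) ≠ 0 →
          |γ (s * τ') i / sInf {z | s * τ' < Fu z} - c i| < ε) := by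
  classical
  have hd0 : 0 < d := hd
  set i0 : Fin d := ⟨0, hd0⟩ with hi0
  have hFur0 : ∀ z, 0 ≤ Fu z := fun z => (hFurange z).1
  have hFutend : Tendsto Fu (𝓝[>] (0:ℝ)) (𝓝 0) := EQR.Fu_tendsto_zero hFumono hFur0 hξ hreg
  have hqtendsto := EQR.q_tendsto hFumono hFu0 hFupos hFutend
  have hqpos : ∀ᶠ τ in 𝓝[>] (0:ℝ), 0 < EQR.q Fu τ := (tendsto_nhdsWithin_iff.1 hqtendsto).2
  have hη0 : 0 < η := hη.1
  have hsummean : ∀ w : Fin d → ℝ, (∑ i, (∫ x, x i ∂μ) * w i) = w i0 := by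
    intro w
    rw [Finset.sum_eq_single i0]
    · rw [hmean i0]
      simp [hi0]
    · intro b _ hb
      rw [hmean b, if_neg, zero_mul]
      intro hb0
      exact hb (Fin.ext (by simp [hi0, hb0]))
    · exact fun h => absurd (Finset.mem_univ i0) h
  have hqγ : ∀ τ, τ ∈ Set.Ioc (0:ℝ) η → EQR.q Fu τ = γ τ i0 := by
    intro τ hτ
    have h0 : EQR.q Fu τ = sInf {z | τ < Fu z} := rfl
    rw [h0, hFuinv τ hτ, hsummean]
  -- spanning
  have hnull : μ Xsᶜ = 0 := EQR.compl_null μ Xs hXssupp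
  have hspan : Submodule.span ℝ Xs = ⊤ := EQR.span_top μ Xs hXscpt hposdef hnull
  obtain ⟨sb, hsXs, hsspan, hsli⟩ := exists_linearIndependent ℝ Xs
  rw [hspan] at hsspan
  have hsfin : sb.Finite := hsli.setFinite
  haveI : Fintype ↥sb := hsfin.fintype
  let B : Module.Basis ↥sb ℝ (Fin d → ℝ) := Module.Basis.mk hsli (by rw [Subtype.range_coe, hsspan])
  let T : (Fin d → ℝ) →ₗ[ℝ] (↥sb → ℝ) :=
    { toFun := fun y j => ∑ i, (j : Fin d → ℝ) i * y i
      map_add' := by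
        intro y z
        funext j
        simp [mul_add, Finset.sum_add_distrib]
      map_smul' := by
        intro r y
        funext j
        simp only [Pi.smul_apply, smul_eq_mul, RingHom.id_apply]
        rw [Finset.mul_sum]
        exact Finset.sum_congr rfl fun i _ => by ring }
  have hTapp : ∀ (y : Fin d → ℝ) (j : ↥sb), T y j = ∑ i, (j : Fin d → ℝ) i * y i :=
    fun _ _ => rfl
  have hTinj : Function.Injective T := by
    rw [← LinearMap.ker_eq_bot, Submodule.eq_bot_iff]
    intro y hy
    have hy' : ∀ j : ↥sb, (∑ i, (j : Fin d → ℝ) i * y i) = 0 := by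
      intro j
      have := congrFun (LinearMap.mem_ker.1 hy) j
      exact this
    let ψ : (Fin d → ℝ) →ₗ[ℝ] ℝ :=
      { toFun := fun x => ∑ i, x i * y i
        map_add' := by intro a b; simp [add_mul, Finset.sum_add_distrib]
        map_smul' := by
          intro r a
          simp only [Pi.smul_apply, smul_eq_mul, RingHom.id_apply]
          rw [Finset.mul_sum]
          exact Finset.sum_congr rfl fun i _ => by ring }
    have hψs : Submodule.span ℝ sb ≤ LinearMap.ker ψ :=
      Submodule.span_le.2 fun v hv => LinearMap.mem_ker.2 (hy' ⟨v, hv⟩)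
    rw [hsspan] at hψs
    have h0 : ∀ x, ψ x = 0 := fun x => LinearMap.mem_ker.1 (hψs Submodule.mem_top)
    funext i
    have h1 := h0 (fun j => if j = i then 1 else 0)
    have h2 : ψ (fun j => if j = i then (1:ℝ) else 0)
        = ∑ j, (if j = i then (1:ℝ) else 0) * y j := rfl
    rw [h2] at h1
    rw [Finset.sum_eq_single i] at h1
    · simpa using h1
    · intro b _ hb; simp [hb]
    · intro h; exact absurd (Finset.mem_univ i) h
  have hrank : Module.finrank ℝ (Fin d → ℝ) = Module.finrank ℝ (↥sb → ℝ) := by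
    rw [Module.finrank_eq_card_basis B, Module.finrank_pi]
  let E := LinearMap.linearEquivOfInjective T hTinj hrank
  have hEapp : ∀ y, E y = T y := fun y => rfl
  set kvec : ↥sb → ℝ := fun j => K (j : Fin d → ℝ) ^ ξ with hkvecdef
  set c : Fin d → ℝ := E.symm kvec with hcdef
  set w : ℝ → ↥sb → ℝ := fun τ j => sInf {z | τ < F (j : Fin d → ℝ) z} / EQR.q Fu τ
    with hwdef
  have hwj : ∀ j : ↥sb, Tendsto (fun τ => w τ j) (𝓝[>] (0:ℝ)) (𝓝 (kvec j)) := by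
    intro j
    exact EQR.qx_tendsto hFumono hFu0 hFupos hFutend hξ hreg
      (hFmono _ (hsXs j.2)) (hKpos _ (hsXs j.2)) (htaileq.tendsto_at (hsXs j.2))
  have hwten : Tendsto w (𝓝[>] (0:ℝ)) (𝓝 kvec) := tendsto_pi_nhds.2 hwj
  have hEsc : Continuous (E.symm : (↥sb → ℝ) →ₗ[ℝ] (Fin d → ℝ)) :=
    LinearMap.continuous_of_finiteDimensional _
  have hvc : Tendsto (fun τ => fun i => γ τ i / EQR.q Fu τ) (𝓝[>] (0:ℝ)) (𝓝 c) := by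
    have h1 : Tendsto (fun τ => E.symm (w τ)) (𝓝[>] (0:ℝ)) (𝓝 (E.symm kvec)) :=
      (hEsc.tendsto _).comp hwten
    refine Filter.Tendsto.congr' ?_ h1
    filter_upwards [hqpos, EQR.eventually_lt_nhdsGT hη0, EQR.eventually_pos_nhdsGT]
      with τ hq hτη hτ0
    have hmem : τ ∈ Set.Ioc (0:ℝ) η := ⟨hτ0, le_of_lt hτη⟩
    have hTv : T (fun i => γ τ i / EQR.q Fu τ) = w τ := by
      funext j
      rw [hTapp]
      calc (∑ i, (j : Fin d → ℝ) i * (γ τ i / EQR.q Fu τ))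
          = ∑ i, ((j : Fin d → ℝ) i * γ τ i) / EQR.q Fu τ :=
            Finset.sum_congr rfl fun i _ => (mul_div_assoc _ _ _).symm
        _ = (∑ i, (j : Fin d → ℝ) i * γ τ i) / EQR.q Fu τ := (Finset.sum_div _ _ _).symm
        _ = w τ j := by rw [← hlin τ hmem _ (hsXs j.2)]
    rw [← hTv, ← hEapp, LinearEquiv.symm_apply_apply]
  have hvi : ∀ i, Tendsto (fun τ => γ τ i / EQR.q Fu τ) (𝓝[>] (0:ℝ)) (𝓝 (c i)) :=
    fun i => (tendsto_pi_nhds.1 hvc) i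
  have hxKc : ∀ x ∈ Xs, (∑ i, x i * c i) = K x ^ ξ := by
    intro x hx
    have h1 : Tendsto (fun τ => ∑ i, x i * (γ τ i / EQR.q Fu τ)) (𝓝[>] (0:ℝ))
        (𝓝 (∑ i, x i * c i)) :=
      tendsto_finset_sum _ fun i _ => (hvi i).const_mul (x i)
    have h2 : Tendsto (fun τ => sInf {z | τ < F x z} / EQR.q Fu τ) (𝓝[>] (0:ℝ))
        (𝓝 (K x ^ ξ)) :=
      EQR.qx_tendsto hFumono hFu0 hFupos hFutend hξ hreg
        (hFmono x hx) (hKpos x hx) (htaileq.tendsto_at hx)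
    have h3 : (fun τ => ∑ i, x i * (γ τ i / EQR.q Fu τ)) =ᶠ[𝓝[>] (0:ℝ)]
        (fun τ => sInf {z | τ < F x z} / EQR.q Fu τ) := by
      filter_upwards [EQR.eventually_pos_nhdsGT, EQR.eventually_lt_nhdsGT hη0]
        with τ h1' h2'
      rw [hlin τ ⟨h1', h2'.le⟩ x hx, Finset.sum_div]
      exact Finset.sum_congr rfl fun i _ => (mul_div_assoc _ _ _).symm
    exact tendsto_nhds_unique (Filter.Tendsto.congr' h3 h1) h2
  have hc0 : c i0 = 1 := by
    have h1 : (fun τ => γ τ i0 / EQR.q Fu τ) =ᶠ[𝓝[>] (0:ℝ)] (fun _ => (1:ℝ)) := by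
      filter_upwards [hqpos, EQR.eventually_pos_nhdsGT, EQR.eventually_lt_nhdsGT hη0]
        with τ hq h1' h2'
      rw [← hqγ τ ⟨h1', h2'.le⟩, div_self hq.ne']
    exact tendsto_nhds_unique (Filter.Tendsto.congr' h1 (hvi i0)) tendsto_const_nhds
  refine ⟨c, ?_, ?_, ?_⟩
  · rw [hsummean]; exact hc0
  · intro x hx
    have h := hxKc x hx
    constructor
    · rw [h]; exact Real.rpow_pos_of_pos (hKpos x hx) ξ
    · rw [h, ← Real.rpow_mul (hKpos x hx).le, mul_one_div, div_self hξ.ne, Real.rpow_one]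
  · intro M hMc hMsub L hLc hLsub
    rcases L.eq_empty_or_nonempty with rfl | hLne
    · refine ⟨⟨?_, ?_⟩, ?_⟩
      · intro ε _
        exact Filter.Eventually.of_forall fun τ' m _ s hs => absurd hs (Set.notMem_empty s)
      · exact Filter.Eventually.of_forall fun τ' m _ s hs => absurd hs (Set.notMem_empty s)
      · intro ε _
        exact Filter.Eventually.of_forall fun τ' s hs => absurd hs (Set.notMem_empty s)
    obtain ⟨s0, hs0⟩ := hLne
    have hLpos : ∀ s ∈ L, 0 < s := fun s hs => hLsub hs
    set βL := sSup L with hβLdef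
    have hβLub : ∀ s ∈ L, s ≤ βL := fun s hs => le_csSup hLc.bddAbove hs
    have hβLpos : 0 < βL := lt_of_lt_of_le (hLpos s0 hs0) (hβLub s0 hs0)
    have hMpos : ∀ m ∈ M, 0 < m :=
      fun m hm => (hMsub hm).elim (fun h => h.1) (fun h => lt_trans one_pos h)
    constructor
    · rcases M.eq_empty_or_nonempty with rfl | hMne
      · constructor
        · intro ε _
          exact Filter.Eventually.of_forall fun τ' m hm => absurd hm (Set.notMem_empty m)
        · exact Filter.Eventually.of_forall fun τ' m hm => absurd hm (Set.notMem_empty m)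
      have hfcont : ContinuousOn (fun m : ℝ => |m ^ (-ξ) - 1|) M := fun m hm =>
        (((Real.continuousAt_rpow_const m (-ξ)
          (Or.inl (hMpos m hm).ne')).continuousWithinAt).sub continuousWithinAt_const).abs
      obtain ⟨m₀, hm₀M, hm₀min⟩ := hMc.exists_isMinOn hMne hfcont
      set β0 := |m₀ ^ (-ξ) - 1| with hβ0def
      have hβ0le : ∀ m ∈ M, β0 ≤ |m ^ (-ξ) - 1| := fun m hm => isMinOn_iff.1 hm₀min m hm
      have hβ0pos : 0 < β0 := by
        rw [hβ0def, abs_pos, sub_ne_zero]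
        have hexp : (0:ℝ) < -ξ := neg_pos.2 hξ
        rcases hMsub hm₀M with h | h
        · exact ne_of_lt (Real.rpow_lt_one (le_of_lt h.1) h.2 hexp)
        · exact ne_of_gt ((Real.one_lt_rpow_iff_of_pos (lt_trans one_pos h)).2 (Or.inl ⟨h, hexp⟩))
      set Cb := 1 + ∑ i, |c i| with hCbdef
      have hCbpos : 0 < Cb := by
        rw [hCbdef]
        have : (0:ℝ) ≤ ∑ i, |c i| := Finset.sum_nonneg fun i _ => abs_nonneg _
        linarith
      have hCble : ∀ i, |c i| ≤ Cb := by
        intro i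
        have h1 : |c i| ≤ ∑ j, |c j| :=
          Finset.single_le_sum (fun j _ => abs_nonneg (c j)) (Finset.mem_univ i)
        rw [hCbdef]; linarith
      constructor
      · intro ε hε
        set εa := ε * β0 / 8 with hεadef
        have hεapos : 0 < εa := by rw [hεadef]; positivity
        set εb := min (β0/2) (ε * β0^2 / (8 * Cb)) with hεbdef
        have hεbpos : 0 < εb := lt_min (by positivity) (by positivity)
        have hE1 : ∀ᶠ σ in 𝓝[>] (0:ℝ), ∀ i, |γ σ i / EQR.q Fu σ - c i| < εa := by
          rw [eventually_all]
          intro i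
          have h5 := Metric.tendsto_nhds.1 (hvi i) εa hεapos
          simpa [Real.dist_eq] using h5
        have hE2 : ∀ᶠ σ in 𝓝[>] (0:ℝ), ∀ m ∈ M,
            |EQR.q Fu (m * σ) / EQR.q Fu σ - m ^ (-ξ)| ≤ εb/2 :=
          EQR.q_ratio_uniform hFumono hFu0 hFupos hFutend hξ hreg hMc
            (fun m hm => hMpos m hm) (half_pos hεbpos)
        obtain ⟨δ, hδ0, hδsub⟩ :=
          mem_nhdsGT_iff_exists_Ioo_subset.1 ((hE1.and hE2).and hqpos)
        filter_upwards [EQR.eventually_lt_nhdsGT (div_pos hδ0 hβLpos),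
          EQR.eventually_pos_nhdsGT] with τ' hτ'lt hτ'pos
        intro m hm s hs i _
        have hσpos : 0 < s * τ' := mul_pos (hLpos s hs) hτ'pos
        have hσlt : s * τ' < δ := by
          calc s * τ' ≤ βL * τ' := mul_le_mul_of_nonneg_right (hβLub s hs) hτ'pos.le
            _ < δ := by rw [← lt_div_iff₀' hβLpos]; exact hτ'lt
        obtain ⟨⟨h1, h2⟩, hq⟩ := hδsub ⟨hσpos, hσlt⟩
        rw [mul_assoc m s τ']
        set σ := s * τ' with hσdef
        set A := γ σ i / EQR.q Fu σ with hAdef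
        set B0 := m ^ (-ξ) - 1 with hB0def
        set Bv := EQR.q Fu (m * σ) / EQR.q Fu σ - 1 with hBvdef
        have hB0 : β0 ≤ |B0| := hβ0le m hm
        have hBvB0 : |Bv - B0| ≤ εb/2 := by
          have h6 := h2 m hm
          have heq : Bv - B0 = EQR.q Fu (m*σ)/EQR.q Fu σ - m ^ (-ξ) := by
            rw [hBvdef, hB0def]; ring
          rw [heq]; exact h6
        have hεbβ : εb ≤ β0/2 := min_le_left _ _
        have habs : |B0| - |Bv| ≤ |Bv - B0| := by
          rw [abs_sub_comm Bv B0]; exact abs_sub_abs_le_abs_sub B0 Bv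
        have hBv : β0/2 ≤ |Bv| := by linarith
        have hBvne : Bv ≠ 0 := by
          intro h; rw [h, abs_zero] at hBv; linarith
        have hB0ne : B0 ≠ 0 := by
          intro h; rw [h, abs_zero] at hB0; linarith
        have hsplit : EQR.q Fu (m*σ) - EQR.q Fu σ = EQR.q Fu σ * Bv := by
          rw [hBvdef]
          field_simp
        have hgoal1 : γ σ i / (EQR.q Fu (m*σ) - EQR.q Fu σ) = A / Bv := by
          rw [hsplit, hAdef, div_mul_eq_div_div]
        have hrw : sInf {z | m * σ < Fu z} - sInf {z | σ < Fu z}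
            = EQR.q Fu (m*σ) - EQR.q Fu σ := rfl
        rw [hrw, hgoal1]
        have hbound := EQR.abs_div_sub_div_le (A := A) (A0 := c i) hBvne hB0ne
        have hAA0 : |A - c i| ≤ εa := le_of_lt (h1 i)
        have t1 : |A - c i| / |Bv| ≤ εa / (β0/2) :=
          div_le_div₀ hεapos.le hAA0 (by positivity) hBv
        have t1' : εa / (β0/2) = ε/4 := by
          rw [hεadef]; field_simp; ring
        have t2 : |c i| * |Bv - B0| / (|Bv| * |B0|) ≤ (Cb * (εb/2)) / ((β0/2) * β0) := by
          apply div_le_div₀ (by positivity) ?_ (by positivity) ?_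
          · exact mul_le_mul (hCble i) hBvB0 (abs_nonneg _) hCbpos.le
          · exact mul_le_mul hBv hB0 hβ0pos.le (abs_nonneg _)
        have t2' : (Cb * (εb/2)) / ((β0/2) * β0) ≤ ε/4 := by
          have hεb2 : εb ≤ ε * β0^2/(8*Cb) := min_le_right _ _
          rw [div_le_iff₀ (by positivity)]
          calc Cb * (εb/2) ≤ Cb * ((ε * β0^2/(8*Cb))/2) := by nlinarith
            _ = ε * β0^2 / 16 := by field_simp; ring
            _ ≤ ε/4 * ((β0/2)*β0) := by nlinarith [mul_pos hε (mul_pos hβ0pos hβ0pos)]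
        calc |A/Bv - c i/B0| ≤ |A - c i|/|Bv| + |c i| * |Bv - B0| / (|Bv| * |B0|) := hbound
          _ ≤ ε/4 + ε/4 := add_le_add (t1.trans (le_of_eq t1')) (t2.trans t2')
          _ < ε := by linarith
      · have hE2 : ∀ᶠ σ in 𝓝[>] (0:ℝ), ∀ m ∈ M,
            |EQR.q Fu (m * σ) / EQR.q Fu σ - m ^ (-ξ)| ≤ β0/4 :=
          EQR.q_ratio_uniform hFumono hFu0 hFupos hFutend hξ hreg hMc
            (fun m hm => hMpos m hm) (by positivity)
        obtain ⟨δ, hδ0, hδsub⟩ :=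
          mem_nhdsGT_iff_exists_Ioo_subset.1 (hE2.and hqpos)
        filter_upwards [EQR.eventually_lt_nhdsGT (div_pos hδ0 hβLpos),
          EQR.eventually_pos_nhdsGT] with τ' hτ'lt hτ'pos
        intro m hm s hs
        have hσpos : 0 < s * τ' := mul_pos (hLpos s hs) hτ'pos
        have hσlt : s * τ' < δ := by
          calc s * τ' ≤ βL * τ' := mul_le_mul_of_nonneg_right (hβLub s hs) hτ'pos.le
            _ < δ := by rw [← lt_div_iff₀' hβLpos]; exact hτ'lt
        obtain ⟨h2, hq⟩ := hδsub ⟨hσpos, hσlt⟩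
        rw [mul_assoc m s τ']
        set σ := s * τ' with hσdef
        set B0 := m ^ (-ξ) - 1 with hB0def
        set Bv := EQR.q Fu (m * σ) / EQR.q Fu σ - 1 with hBvdef
        have hB0 : β0 ≤ |B0| := hβ0le m hm
        have hBvB0 : |Bv - B0| ≤ β0/4 := by
          have h6 := h2 m hm
          have heq : Bv - B0 = EQR.q Fu (m*σ)/EQR.q Fu σ - m ^ (-ξ) := by
            rw [hBvdef, hB0def]; ring
          rw [heq]; exact h6
        have habs : |B0| - |Bv| ≤ |Bv - B0| := by
          rw [abs_sub_comm Bv B0]; exact abs_sub_abs_le_abs_sub B0 Bv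
        have hBv : β0/2 ≤ |Bv| := by linarith
        have hBvne : Bv ≠ 0 := by
          intro h; rw [h, abs_zero] at hBv; linarith
        have hsplit : EQR.q Fu (m*σ) - EQR.q Fu σ = EQR.q Fu σ * Bv := by
          rw [hBvdef]
          field_simp
        have hrw : sInf {z | m * σ < Fu z} - sInf {z | σ < Fu z}
            = EQR.q Fu (m*σ) - EQR.q Fu σ := rfl
        rw [hrw, hsplit]
        exact mul_ne_zero hq.ne' hBvne
    · intro ε hε
      have hE1 : ∀ᶠ σ in 𝓝[>] (0:ℝ), ∀ i, |γ σ i / EQR.q Fu σ - c i| < ε := by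
        rw [eventually_all]
        intro i
        have h5 := Metric.tendsto_nhds.1 (hvi i) ε hε
        simpa [Real.dist_eq] using h5
      obtain ⟨δ, hδ0, hδsub⟩ := mem_nhdsGT_iff_exists_Ioo_subset.1 hE1
      filter_upwards [EQR.eventually_lt_nhdsGT (div_pos hδ0 hβLpos),
        EQR.eventually_pos_nhdsGT] with τ' hτ'lt hτ'pos
      intro s hs i _
      have hσpos : 0 < s * τ' := mul_pos (hLpos s hs) hτ'pos
      have hσlt : s * τ' < δ := by
        calc s * τ' ≤ βL * τ' := mul_le_mul_of_nonneg_right (hβLub s hs) hτ'pos.le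
          _ < δ := by rw [← lt_div_iff₀' hβLpos]; exact hτ'lt
      exact hδsub ⟨hσpos, hσlt⟩ i
end

section
/- (Key step (9.12) in the proof of Theorem 3.1, type 3 tails) Under the two-distribution tail-equivalence setup with ξ < 0, for every m ∈ (0,1) ∪ (1,∞): (F₂⁻¹(τ) − F₁⁻¹(τ)) / (F₁⁻¹(mτ) − F₁⁻¹(τ)) → (K^ξ − 1)/(m^{−ξ} − 1) as τ ↘ 0, and F₁⁻¹(mτ) − F₁⁻¹(τ) ≠ 0 for all sufficiently small τ > 0. -/
open MeasureTheory Filter Topology Real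

private lemma mul_left_tendsto_nhdsGT {c : ℝ} (hc : 0 < c) :
    Tendsto (fun z : ℝ => c * z) (𝓝[>] (0:ℝ)) (𝓝[>] (0:ℝ)) := by
  rw [tendsto_nhdsWithin_iff]
  constructor
  · have h : Tendsto (fun z : ℝ => c * z) (𝓝 (0:ℝ)) (𝓝 (c * 0)) :=
      (continuous_const.mul continuous_id).tendsto 0
    simpa using h.mono_left nhdsWithin_le_nhds
  · filter_upwards [self_mem_nhdsWithin] with z hz
    exact mul_pos hc hz

private lemma rpow_inv_aux {L ξ : ℝ} (hL : 0 < L) (hξ : ξ < 0) :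
    (L ^ ξ) ^ (-1/ξ) = L⁻¹ := by
  rw [← Real.rpow_mul hL.le]
  have h : ξ * (-1/ξ) = -1 := by
    field_simp
    rw [div_self (ne_of_lt hξ)]
  rw [h, Real.rpow_neg_one]

private lemma quantile_ratio
    (ξ : ℝ) (hξ : ξ < 0)
    (F G : ℝ → ℝ)
    (hFmono : Monotone F)
    (hFrc : ∀ z : ℝ, ContinuousWithinAt F (Set.Ici z) z)
    (hFzero : ∀ z ≤ (0:ℝ), F z = 0)
    (hFpos : ∀ z > (0:ℝ), 0 < F z)
    (hFlim : Tendsto F (𝓝[>] (0:ℝ)) (𝓝 0))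
    (hGmono : Monotone G)
    (hGzero : ∀ z ≤ (0:ℝ), G z = 0)
    (hGpos1 : 0 < G 1)
    (L : ℝ) (hL : 0 < L)
    (hratio : ∀ c > (0:ℝ),
      Tendsto (fun z => G (c * z) / F z) (𝓝[>] (0:ℝ)) (𝓝 (L * c ^ (-1/ξ)))) :
    Tendsto (fun τ => sInf {z | τ < G z} / sInf {z | τ < F z}) (𝓝[>] (0:ℝ))
      (𝓝 (L ^ ξ)) ∧
    Tendsto (fun τ => sInf {z | τ < F z}) (𝓝[>] (0:ℝ)) (𝓝[>] (0:ℝ)) := by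
  have hξ' : (0:ℝ) < -1/ξ := div_pos_iff.2 (Or.inr ⟨by norm_num, hξ⟩)
  have hF1 : (0:ℝ) < F 1 := hFpos 1 one_pos
  -- bounded below
  have hbddF : ∀ τ : ℝ, 0 < τ → BddBelow {z | τ < F z} := by
    intro τ hτ
    refine ⟨0, fun z hz => le_of_not_gt fun h => ?_⟩
    simp only [Set.mem_setOf_eq, hFzero z h.le] at hz
    linarith
  have hbddG : ∀ τ : ℝ, 0 < τ → BddBelow {z | τ < G z} := by
    intro τ hτ
    refine ⟨0, fun z hz => le_of_not_gt fun h => ?_⟩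
    simp only [Set.mem_setOf_eq, hGzero z h.le] at hz
    linarith
  have hA3 : ∀ τ : ℝ, 0 < τ → ∀ w, w < sInf {z | τ < F z} → F w ≤ τ := by
    intro τ hτ w hw
    by_contra h
    push_neg at h
    exact absurd (csInf_le (hbddF τ hτ) h) (not_le.2 hw)
  have hneF : ∀ τ : ℝ, τ < F 1 → Set.Nonempty {z | τ < F z} := fun τ h => ⟨1, h⟩
  have hbase : ∀ᶠ τ in 𝓝[>] (0:ℝ), τ ∈ Set.Ioo 0 (F 1) :=
    Ioo_mem_nhdsGT_of_mem ⟨le_refl 0, hF1⟩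
  have hQFpos : ∀ τ ∈ Set.Ioo (0:ℝ) (F 1), 0 < sInf {z | τ < F z} := by
    intro τ hτ
    have hev : F ⁻¹' (Set.Iio τ) ∈ 𝓝[>] (0:ℝ) := hFlim (Iio_mem_nhds hτ.1)
    obtain ⟨u, hu, hsub⟩ := mem_nhdsGT_iff_exists_Ioo_subset.1 hev
    have hle : u ≤ sInf {z | τ < F z} := by
      apply le_csInf (hneF τ hτ.2)
      intro s hs
      by_contra h
      push_neg at h
      have hs0 : 0 < s := by
        by_contra h0
        push_neg at h0
        simp only [Set.mem_setOf_eq, hFzero s h0] at hs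
        linarith [hτ.1]
      have h2 := hsub ⟨hs0, h⟩
      simp only [Set.mem_preimage, Set.mem_Iio] at h2
      simp only [Set.mem_setOf_eq] at hs
      linarith
    exact lt_of_lt_of_le hu hle
  have hQF : Tendsto (fun τ => sInf {z | τ < F z}) (𝓝[>] (0:ℝ)) (𝓝[>] (0:ℝ)) := by
    rw [tendsto_nhdsWithin_iff]
    constructor
    · rw [tendsto_order]
      constructor
      · intro a ha
        filter_upwards [hbase] with τ hτ
        exact ha.trans (hQFpos τ hτ)
      · intro b hb
        have h2 : (0:ℝ) < F (b/2) := hFpos _ (by linarith)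
        filter_upwards [Ioo_mem_nhdsGT_of_mem ⟨le_refl 0, h2⟩] with τ hτ
        have hle : sInf {z | τ < F z} ≤ b/2 := csInf_le (hbddF τ hτ.1) hτ.2
        linarith
    · filter_upwards [hbase] with τ hτ using hQFpos τ hτ
  have hQFmem : ∀ᶠ τ in 𝓝[>] (0:ℝ), 0 < sInf {z | τ < F z} := by
    filter_upwards [hbase] with τ hτ using hQFpos τ hτ
  have hA2 : ∀ᶠ τ in 𝓝[>] (0:ℝ), τ ≤ F (sInf {z | τ < F z}) := by
    filter_upwards [hbase] with τ hτ
    have hne := hneF τ hτ.2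
    have hup : ∀ z ∈ Set.Ioi (sInf {z | τ < F z}), τ ≤ F z := by
      intro z hz
      obtain ⟨s, hs, hsz⟩ := (csInf_lt_iff (hbddF τ hτ.1) hne).1 hz
      exact le_trans (le_of_lt hs) (hFmono hsz.le)
    have hFt : Tendsto F (𝓝[>] (sInf {z | τ < F z})) (𝓝 (F (sInf {z | τ < F z}))) :=
      (hFrc _).mono_left (nhdsWithin_mono _ Set.Ioi_subset_Ici_self)
    exact ge_of_tendsto hFt (eventually_nhdsWithin_of_forall hup)
  have hLξ : 0 < L ^ ξ := rpow_pos_of_pos hL ξ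
  have hupper : ∀ c : ℝ, L ^ ξ < c →
      ∀ᶠ τ in 𝓝[>] (0:ℝ), sInf {z | τ < G z} ≤ c * sInf {z | τ < F z} := by
    intro c hc
    have hc0 : 0 < c := hLξ.trans hc
    have h1 : 1 < L * c ^ (-1/ξ) := by
      have h2 : (L ^ ξ) ^ (-1/ξ) < c ^ (-1/ξ) := Real.rpow_lt_rpow hLξ.le hc hξ'
      rw [rpow_inv_aux hL hξ] at h2
      have h3 := mul_lt_mul_of_pos_left h2 hL
      rwa [mul_inv_cancel₀ (ne_of_gt hL)] at h3
    have hev : ∀ᶠ z in 𝓝[>] (0:ℝ), F z < G (c * z) := by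
      filter_upwards [(tendsto_order.1 (hratio c hc0)).1 1 h1, self_mem_nhdsWithin]
        with z hz hz0
      exact (one_lt_div (hFpos z hz0)).1 hz
    filter_upwards [hbase, hA2, hQF.eventually hev] with τ hτ h2 h3
    exact csInf_le (hbddG τ hτ.1) (lt_of_le_of_lt h2 h3)
  have hlower : ∀ c : ℝ, 0 < c → c < L ^ ξ →
      ∀ᶠ τ in 𝓝[>] (0:ℝ), c * sInf {z | τ < F z} ≤ sInf {z | τ < G z} := by
    intro c hc0 hc
    have h1 : L * c ^ (-1/ξ) < 1 := by
      have h2 : c ^ (-1/ξ) < (L ^ ξ) ^ (-1/ξ) := Real.rpow_lt_rpow hc0.le hc hξ'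
      rw [rpow_inv_aux hL hξ] at h2
      have h3 := mul_lt_mul_of_pos_left h2 hL
      rwa [mul_inv_cancel₀ (ne_of_gt hL)] at h3
    have hev : ∀ᶠ z in 𝓝[>] (0:ℝ), G (c * z) < F z := by
      filter_upwards [(tendsto_order.1 (hratio c hc0)).2 1 h1, self_mem_nhdsWithin]
        with z hz hz0
      exact (div_lt_one (hFpos z hz0)).1 hz
    obtain ⟨u, hu, hsub⟩ := mem_nhdsGT_iff_exists_Ioo_subset.1 hev
    have hQFu : ∀ᶠ τ in 𝓝[>] (0:ℝ), sInf {z | τ < F z} < u :=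
      (tendsto_order.1 (hQF.mono_right nhdsWithin_le_nhds)).2 u hu
    have hbaseG : ∀ᶠ τ in 𝓝[>] (0:ℝ), τ ∈ Set.Ioo 0 (G 1) :=
      Ioo_mem_nhdsGT_of_mem ⟨le_refl 0, hGpos1⟩
    filter_upwards [hbase, hbaseG, hQFu] with τ hτ hτG hlt
    refine le_csInf ⟨1, hτG.2⟩ fun s hs => ?_
    by_contra h
    push_neg at h
    have hGs : G s ≤ τ := by
      rcases le_or_gt s 0 with h0 | h0
      · rw [hGzero s h0]; exact hτ.1.le
      · have hw0 : 0 < s / c := div_pos h0 hc0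
        have hwQF : s / c < sInf {z | τ < F z} := (div_lt_iff₀ hc0).2 (by linarith [h])
        have hwu : s / c < u := hwQF.trans hlt
        have h4 := hsub ⟨hw0, hwu⟩
        simp only [Set.mem_setOf_eq] at h4
        rw [mul_div_cancel₀ s (ne_of_gt hc0)] at h4
        exact le_trans h4.le (hA3 τ hτ.1 _ hwQF)
    simp only [Set.mem_setOf_eq] at hs
    linarith
  refine ⟨?_, hQF⟩
  rw [tendsto_order]
  constructor
  · intro a ha
    set c := max (L ^ ξ / 2) ((a + L ^ ξ) / 2) with hcdef
    have hc0 : 0 < c := lt_of_lt_of_le (by linarith) (le_max_left _ _)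
    have hcL : c < L ^ ξ := max_lt (by linarith) (by linarith)
    have hac : a < c := lt_of_lt_of_le (by linarith) (le_max_right _ _)
    filter_upwards [hlower c hc0 hcL, hQFmem] with τ h1 h2
    have h3 : c ≤ sInf {z | τ < G z} / sInf {z | τ < F z} := (le_div_iff₀ h2).2 h1
    linarith
  · intro b hb
    have hcL : L ^ ξ < (L ^ ξ + b) / 2 := by linarith
    have hcb : (L ^ ξ + b) / 2 < b := by linarith
    filter_upwards [hupper _ hcL, hQFmem] with τ h1 h2
    have h3 : sInf {z | τ < G z} / sInf {z | τ < F z} ≤ (L ^ ξ + b) / 2 :=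
      (div_le_iff₀ h2).2 h1
    linarith

theorem extremal_qr_step912_type3
    (ξ : ℝ) (hξ : ξ < 0)
    (F₁ F₂ : ℝ → ℝ)
    (h₁mono : Monotone F₁) (h₂mono : Monotone F₂)
    (h₁rc : ∀ z : ℝ, ContinuousWithinAt F₁ (Set.Ici z) z)
    (h₂rc : ∀ z : ℝ, ContinuousWithinAt F₂ (Set.Ici z) z)
    (h₁range : ∀ z : ℝ, F₁ z ∈ Set.Icc (0:ℝ) 1)
    (h₂range : ∀ z : ℝ, F₂ z ∈ Set.Icc (0:ℝ) 1)
    (h₁0 : ∀ z < (0:ℝ), F₁ z = 0) (h₁pos : ∀ z > (0:ℝ), 0 < F₁ z)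
    (h₂0 : ∀ z < (0:ℝ), F₂ z = 0) (h₂pos : ∀ z > (0:ℝ), 0 < F₂ z)
    (hreg : ∀ v > (0:ℝ), Tendsto (fun z => F₁ (v * z) / F₁ z) (𝓝[>] (0:ℝ)) (𝓝 (v ^ (-1/ξ))))
    (K : ℝ) (hK : 0 < K)
    (heq : Tendsto (fun z => F₂ z / F₁ z) (𝓝[>] (0:ℝ)) (𝓝 K))
    (m : ℝ) (hm : m ∈ Set.Ioo (0:ℝ) 1 ∪ Set.Ioi 1)
    :
    Tendsto (fun τ => (sInf {z | τ < F₂ z} - sInf {z | τ < F₁ z}) /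
        (sInf {z | m * τ < F₁ z} - sInf {z | τ < F₁ z})) (𝓝[>] (0:ℝ))
      (𝓝 ((K ^ ξ - 1) / (m ^ (-ξ) - 1))) ∧
    ∀ᶠ τ in 𝓝[>] (0:ℝ), sInf {z | m * τ < F₁ z} - sInf {z | τ < F₁ z} ≠ 0 := by
  have hm0 : 0 < m := by
    rcases hm with h | h
    · exact h.1
    · have : (1:ℝ) < m := h
      linarith
  have hξ' : (0:ℝ) < -ξ := neg_pos.2 hξ
  have hinv : (0:ℝ) < -1/ξ := div_pos_iff.2 (Or.inr ⟨by norm_num, hξ⟩)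
  have h1 : (0:ℝ) < F₁ 1 := h₁pos 1 one_pos
  -- F₁ tends to 0 from the right
  have hlimF₁ : Tendsto F₁ (𝓝[>] (0:ℝ)) (𝓝 0) := by
    have hmt := h₁mono.tendsto_nhdsGT 0
    have hL₀0 : 0 ≤ sInf (F₁ '' Set.Ioi 0) := by
      apply le_csInf (Set.nonempty_Ioi.image F₁)
      rintro b ⟨z, hz, rfl⟩
      exact (h₁range z).1
    rcases eq_or_lt_of_le hL₀0 with h | h
    · rwa [← h] at hmt
    · exfalso
      have h2 : Tendsto (fun z => F₁ (2 * z)) (𝓝[>] (0:ℝ)) (𝓝 (sInf (F₁ '' Set.Ioi 0))) :=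
        hmt.comp (mul_left_tendsto_nhdsGT two_pos)
      have h3 := h2.div hmt (ne_of_gt h)
      rw [div_self (ne_of_gt h)] at h3
      have h4 := tendsto_nhds_unique h3 (hreg 2 two_pos)
      have h5 : (1:ℝ) < 2 ^ (-1/ξ) :=
        (Real.one_lt_rpow_iff_of_pos two_pos).2 (Or.inl ⟨one_lt_two, hinv⟩)
      rw [← h4] at h5
      exact lt_irrefl 1 h5
  have hF₁zero : ∀ z ≤ (0:ℝ), F₁ z = 0 := by
    intro z hz
    rcases eq_or_lt_of_le hz with h | h
    · rw [h]
      have hle : F₁ 0 ≤ 0 := by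
        apply ge_of_tendsto hlimF₁
        filter_upwards [self_mem_nhdsWithin] with w hw
        exact h₁mono (le_of_lt hw)
      exact le_antisymm hle (h₁range 0).1
    · exact h₁0 z h
  have hlimF₂ : Tendsto F₂ (𝓝[>] (0:ℝ)) (𝓝 0) := by
    have h2 := heq.mul hlimF₁
    rw [mul_zero] at h2
    apply h2.congr'
    filter_upwards [self_mem_nhdsWithin] with z hz
    exact div_mul_cancel₀ _ (ne_of_gt (h₁pos z hz))
  have hF₂zero : ∀ z ≤ (0:ℝ), F₂ z = 0 := by
    intro z hz
    rcases eq_or_lt_of_le hz with h | h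
    · rw [h]
      have hle : F₂ 0 ≤ 0 := by
        apply ge_of_tendsto hlimF₂
        filter_upwards [self_mem_nhdsWithin] with w hw
        exact h₂mono (le_of_lt hw)
      exact le_antisymm hle (h₂range 0).1
    · exact h₂0 z h
  -- application 1 : G = F₂
  have hratio₂ : ∀ c > (0:ℝ),
      Tendsto (fun z => F₂ (c * z) / F₁ z) (𝓝[>] (0:ℝ)) (𝓝 (K * c ^ (-1/ξ))) := by
    intro c hc
    have hmap := mul_left_tendsto_nhdsGT hc
    have ha : Tendsto (fun z => F₂ (c * z) / F₁ (c * z)) (𝓝[>] (0:ℝ)) (𝓝 K) :=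
      heq.comp hmap
    have hb := ha.mul (hreg c hc)
    apply hb.congr'
    filter_upwards [self_mem_nhdsWithin] with z hz
    have h1 : F₁ (c * z) ≠ 0 := ne_of_gt (h₁pos _ (mul_pos hc hz))
    have h2 : F₁ z ≠ 0 := ne_of_gt (h₁pos _ hz)
    field_simp
  obtain ⟨happ1, hQF⟩ := quantile_ratio ξ hξ F₁ F₂ h₁mono h₁rc hF₁zero h₁pos hlimF₁
    h₂mono hF₂zero (h₂pos 1 one_pos) K hK hratio₂
  -- application 2 : G = F₁ / m
  have hGmono : Monotone (fun z => F₁ z / m) := fun a b hab =>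
    (div_le_div_iff_of_pos_right hm0).2 (h₁mono hab)
  have hGzero : ∀ z ≤ (0:ℝ), F₁ z / m = 0 := fun z hz => by rw [hF₁zero z hz, zero_div]
  have hratioG : ∀ c > (0:ℝ),
      Tendsto (fun z => F₁ (c * z) / m / F₁ z) (𝓝[>] (0:ℝ)) (𝓝 (m⁻¹ * c ^ (-1/ξ))) := by
    intro c hc
    have := (hreg c hc).const_mul m⁻¹
    exact this.congr fun z => by ring
  obtain ⟨happ2, -⟩ := quantile_ratio ξ hξ F₁ (fun z => F₁ z / m) h₁mono h₁rc hF₁zero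
    h₁pos hlimF₁ hGmono hGzero (div_pos h1 hm0) m⁻¹ (inv_pos.2 hm0) hratioG
  have hMinv : (m⁻¹ : ℝ) ^ ξ = m ^ (-ξ) := by
    rw [Real.inv_rpow hm0.le, ← Real.rpow_neg hm0.le]
  have hsetm : ∀ τ : ℝ, {z | τ < F₁ z / m} = {z | m * τ < F₁ z} := by
    intro τ
    ext z
    rw [Set.mem_setOf_eq, Set.mem_setOf_eq, lt_div_iff₀ hm0, mul_comm]
  have happ2' : Tendsto (fun τ => sInf {z | m * τ < F₁ z} / sInf {z | τ < F₁ z})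
      (𝓝[>] (0:ℝ)) (𝓝 (m ^ (-ξ))) := by
    rw [← hMinv]
    simp only [← hsetm]
    exact happ2
  have hmne : m ^ (-ξ) ≠ 1 := by
    rcases hm with h | h
    · exact ne_of_lt (Real.rpow_lt_one hm0.le h.2 hξ')
    · exact ne_of_gt ((Real.one_lt_rpow_iff_of_pos hm0).2 (Or.inl ⟨h, hξ'⟩))
  have hnum := happ1.sub (tendsto_const_nhds (x := (1:ℝ)))
  have hden := happ2'.sub (tendsto_const_nhds (x := (1:ℝ)))
  have hdiv := hnum.div hden (sub_ne_zero.2 hmne)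
  have hQ1pos : ∀ᶠ τ in 𝓝[>] (0:ℝ), 0 < sInf {z | τ < F₁ z} :=
    hQF.eventually_mem self_mem_nhdsWithin
  have hne' : ∀ᶠ τ in 𝓝[>] (0:ℝ),
      sInf {z | m * τ < F₁ z} / sInf {z | τ < F₁ z} - 1 ≠ 0 :=
    hden.eventually_ne (sub_ne_zero.2 hmne)
  constructor
  · apply hdiv.congr'
    filter_upwards [hQ1pos, hne'] with τ hb hd
    have hbne : sInf {z | τ < F₁ z} ≠ 0 := ne_of_gt hb
    have hdne : sInf {z | m * τ < F₁ z} - sInf {z | τ < F₁ z} ≠ 0 := by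
      intro h
      apply hd
      rw [show sInf {z | m * τ < F₁ z} = sInf {z | τ < F₁ z} from by linarith,
        div_self hbne]
      ring
    simp only [Pi.div_apply]
    field_simp
  · filter_upwards [hQ1pos, hne'] with τ hb hd
    intro h
    apply hd
    rw [show sInf {z | m * τ < F₁ z} = sInf {z | τ < F₁ z} from by linarith,
      div_self (ne_of_gt hb)]
    ring
end

section
/- (Key step (9.12) in the proof of Theorem 3.1, type 1 tails) Under the two-distribution tail-equivalence setup with type 1 tails, for every m ∈ (0,1) ∪ (1,∞): (F₂⁻¹(τ) − F₁⁻¹(τ)) / (F₁⁻¹(mτ) − F₁⁻¹(τ)) → −(log K)/(log m) as τ ↘ 0, and F₁⁻¹(mτ) − F₁⁻¹(τ) ≠ 0 for all sufficiently small τ > 0. -/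
open MeasureTheory Filter Topology Real

/-- `τ ≤ F (F⁻¹ τ)` for monotone right-continuous `F`. -/
lemma quantile_ge (F : ℝ → ℝ) (hmono : Monotone F)
    (hrc : ∀ z : ℝ, ContinuousWithinAt F (Set.Ici z) z) (τ : ℝ)
    (hne : {z | τ < F z}.Nonempty) (hbdd : BddBelow {z | τ < F z}) :
    τ ≤ F (sInf {z | τ < F z}) := by
  set q := sInf {z | τ < F z} with hq
  have h1 : ∀ z, q < z → τ ≤ F z := by
    intro z hz
    obtain ⟨y, hy, hyz⟩ := exists_lt_of_csInf_lt hne hz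
    exact le_trans (le_of_lt hy) (hmono hyz.le)
  have ht : Tendsto F (𝓝[>] q) (𝓝 (F q)) :=
    ((hrc q).mono Set.Ioi_subset_Ici_self).tendsto
  exact ge_of_tendsto ht (eventually_nhdsWithin_of_forall fun z hz => h1 z hz)

/-- points strictly below the quantile have `F ≤ τ`. -/
lemma quantile_lt (F : ℝ → ℝ) (τ : ℝ) (hbdd : BddBelow {z | τ < F z}) :
    ∀ z, z < sInf {z | τ < F z} → F z ≤ τ := by
  intro z hz
  by_contra h
  exact absurd (csInf_le hbdd (show τ < F z from lt_of_not_ge h)) (not_le.2 hz)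

set_option maxHeartbeats 1600000 in
lemma key912
    (F₁ G a : ℝ → ℝ) (lfil : Filter ℝ) (hne : lfil.NeBot)
    (h₁mono : Monotone F₁) (hGmono : Monotone G)
    (h₁rc : ∀ z : ℝ, ContinuousWithinAt F₁ (Set.Ici z) z)
    (hq1 : Tendsto (fun τ => sInf {z | τ < F₁ z}) (𝓝[>] (0:ℝ)) lfil)
    (hS1 : ∀ᶠ τ in 𝓝[>] (0:ℝ), ({z | τ < F₁ z}).Nonempty ∧ BddBelow {z | τ < F₁ z})
    (hSG : ∀ᶠ τ in 𝓝[>] (0:ℝ), ({z | τ < G z}).Nonempty ∧ BddBelow {z | τ < G z})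
    (hApos : ∀ᶠ z in lfil, 0 < a z)
    (htail1 : ∀ v : ℝ, Tendsto (fun z => F₁ (z + v * a z) / F₁ z) lfil (𝓝 (Real.exp v)))
    (hmove : ∀ v : ℝ, Tendsto (fun z => z + v * a z) lfil lfil)
    (L : ℝ) (hL : 0 < L)
    (hG : Tendsto (fun z => G z / F₁ z) lfil (𝓝 L)) :
    Tendsto (fun τ => (sInf {z | τ < G z} - sInf {z | τ < F₁ z}) / a (sInf {z | τ < F₁ z}))
      (𝓝[>] (0:ℝ)) (𝓝 (-Real.log L)) := by
  haveI := hne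
  set Q : ℝ → ℝ := fun τ => sInf {z | τ < F₁ z} with hQ
  set QG : ℝ → ℝ := fun τ => sInf {z | τ < G z} with hQG
  -- τ ≤ F₁ (Q τ) eventually
  have hK1 : ∀ᶠ τ in 𝓝[>] (0:ℝ), τ ≤ F₁ (Q τ) := by
    filter_upwards [hS1] with τ hS
    exact quantile_ge F₁ h₁mono h₁rc τ hS.1 hS.2
  have hτpos : ∀ᶠ τ in 𝓝[>] (0:ℝ), (0:ℝ) < τ := self_mem_nhdsWithin
  have hQpos : ∀ᶠ τ in 𝓝[>] (0:ℝ), 0 < F₁ (Q τ) := by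
    filter_upwards [hK1, hτpos] with τ h1 h2; linarith
  have hApos' : ∀ᶠ τ in 𝓝[>] (0:ℝ), 0 < a (Q τ) := hq1.eventually hApos
  have htailQ : ∀ v : ℝ, Tendsto (fun τ => F₁ (Q τ + v * a (Q τ)) / F₁ (Q τ))
      (𝓝[>] (0:ℝ)) (𝓝 (Real.exp v)) := fun v => (htail1 v).comp hq1
  have hGQ : ∀ v : ℝ, Tendsto (fun τ => G (Q τ + v * a (Q τ)) / F₁ (Q τ + v * a (Q τ)))
      (𝓝[>] (0:ℝ)) (𝓝 L) := fun v => hG.comp ((hmove v).comp hq1)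
  -- positivity of F₁ at moved points
  have hwpos : ∀ v : ℝ, ∀ᶠ τ in 𝓝[>] (0:ℝ), 0 < F₁ (Q τ + v * a (Q τ)) := by
    intro v
    filter_upwards [(htailQ v).eventually_const_lt (show (0:ℝ) < Real.exp v from Real.exp_pos v),
      hQpos] with τ h1 h2
    have := mul_pos h1 h2
    rwa [div_mul_cancel₀ _ (ne_of_gt h2)] at this
  -- K5 : F₁ (Q τ) ≤ c * τ eventually, for any c > 1
  have hK5 : ∀ c : ℝ, 1 < c → ∀ᶠ τ in 𝓝[>] (0:ℝ), F₁ (Q τ) ≤ c * τ := by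
    intro c hc
    set v : ℝ := -(Real.log c) / 2 with hv
    have hlogc : 0 < Real.log c := Real.log_pos hc
    have hcinv : c⁻¹ < Real.exp v := by
      rw [show c⁻¹ = Real.exp (-(Real.log c)) by
        rw [Real.exp_neg, Real.exp_log (by linarith)]]
      apply Real.exp_lt_exp.2; rw [hv]; linarith
    filter_upwards [(htailQ v).eventually_const_lt hcinv, hApos', hQpos, hS1, hτpos]
      with τ h1 hA hQp hS hτ
    have hwlt : Q τ + v * a (Q τ) < Q τ := by nlinarith
    have hFw : F₁ (Q τ + v * a (Q τ)) ≤ τ := quantile_lt F₁ τ hS.2 _ hwlt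
    have h2 : c⁻¹ * F₁ (Q τ) < F₁ (Q τ + v * a (Q τ)) := (lt_div_iff₀ hQp).1 h1
    have hcpos : (0:ℝ) < c := by linarith
    rw [inv_mul_lt_iff₀ hcpos] at h2
    nlinarith
  -- main estimate
  rw [Metric.tendsto_nhds]
  intro ε hε
  set v : ℝ := -Real.log L + ε/2 with hv
  set v' : ℝ := -Real.log L - ε/2 with hv'
  have hexp8 : Real.exp (-(ε/8)) < 1 := by
    rw [show (1:ℝ) = Real.exp 0 from (Real.exp_zero).symm]
    exact Real.exp_lt_exp.2 (by linarith)
  have hexp8' : (1:ℝ) < Real.exp (ε/8) := by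
    rw [show (1:ℝ) = Real.exp 0 from (Real.exp_zero).symm]
    exact Real.exp_lt_exp.2 (by linarith)
  have hexp4 : (1:ℝ) < Real.exp (ε/4) := by
    rw [show (1:ℝ) = Real.exp 0 from (Real.exp_zero).symm]
    exact Real.exp_lt_exp.2 (by linarith)
  have hGwu := (hGQ v).eventually_const_lt
    (show L * Real.exp (-(ε/8)) < L by nlinarith [Real.exp_pos (-(ε/8))])
  have htwu := (htailQ v).eventually_const_lt
    (show Real.exp v * Real.exp (-(ε/8)) < Real.exp v by nlinarith [Real.exp_pos v])
  have hGwl := (hGQ v').eventually_lt_const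
    (show L < L * Real.exp (ε/8) by nlinarith)
  have htwl := (htailQ v').eventually_lt_const
    (show Real.exp v' < Real.exp v' * Real.exp (ε/8) by nlinarith [Real.exp_pos v'])
  have hexpv : Real.exp v = Real.exp (ε/2) / L := by
    rw [hv, Real.exp_add, Real.exp_neg, Real.exp_log hL]; ring
  have hexpv' : Real.exp v' = Real.exp (-(ε/2)) / L := by
    rw [hv', show -Real.log L - ε/2 = -Real.log L + (-(ε/2)) by ring,
      Real.exp_add, Real.exp_neg, Real.exp_log hL, Real.exp_neg]; ring
  have hLne : L ≠ 0 := ne_of_gt hL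
  have hcoef : L * Real.exp (-(ε/8)) * (Real.exp v * Real.exp (-(ε/8))) = Real.exp (ε/4) := by
    rw [hexpv, Real.exp_neg]
    rw [show ε/2 = ε/4 + ε/8 + ε/8 by ring, Real.exp_add, Real.exp_add]
    field_simp
  have hcoef' : (L * Real.exp (ε/8)) * ((Real.exp v' * Real.exp (ε/8)) * Real.exp (ε/8))
      = Real.exp (-(ε/8)) := by
    rw [hexpv', show -(ε/2) = -(ε/8) + (-(ε/8) + (-(ε/8) + -(ε/8))) by ring,
      Real.exp_add, Real.exp_add, Real.exp_add, Real.exp_neg]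
    field_simp
  filter_upwards [hτpos, hApos', hK1, hQpos, hGwu, htwu, hGwl, htwl, hwpos v, hwpos v',
    hK5 (Real.exp (ε/8)) hexp8', hSG] with τ hτ hA hK1τ hQp hGu htu hGl htl hwu hwl hK5τ hSGτ
  have hGw2 : (L * Real.exp (-(ε/8))) * F₁ (Q τ + v * a (Q τ)) < G (Q τ + v * a (Q τ)) :=
    (lt_div_iff₀ hwu).1 hGu
  have htw2 : (Real.exp v * Real.exp (-(ε/8))) * F₁ (Q τ) < F₁ (Q τ + v * a (Q τ)) :=
    (lt_div_iff₀ hQp).1 htu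
  have hp1 : 0 < L * Real.exp (-(ε/8)) := mul_pos hL (Real.exp_pos _)
  have hchain : Real.exp (ε/4) * F₁ (Q τ) < G (Q τ + v * a (Q τ)) := by
    calc Real.exp (ε/4) * F₁ (Q τ)
        = (L * Real.exp (-(ε/8))) * ((Real.exp v * Real.exp (-(ε/8))) * F₁ (Q τ)) := by
          rw [← hcoef]; ring
      _ < (L * Real.exp (-(ε/8))) * F₁ (Q τ + v * a (Q τ)) :=
          mul_lt_mul_of_pos_left htw2 hp1
      _ < G (Q τ + v * a (Q τ)) := hGw2
  have hτGw : τ < G (Q τ + v * a (Q τ)) := by nlinarith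
  have hQGle : QG τ ≤ Q τ + v * a (Q τ) := csInf_le hSGτ.2 hτGw
  -- lower bound
  have hGw2' : G (Q τ + v' * a (Q τ)) < (L * Real.exp (ε/8)) * F₁ (Q τ + v' * a (Q τ)) :=
    (div_lt_iff₀ hwl).1 hGl
  have htw2' : F₁ (Q τ + v' * a (Q τ)) < (Real.exp v' * Real.exp (ε/8)) * F₁ (Q τ) :=
    (div_lt_iff₀ hQp).1 htl
  have hp2 : 0 < L * Real.exp (ε/8) := mul_pos hL (Real.exp_pos _)
  have hp3 : 0 < Real.exp v' * Real.exp (ε/8) := mul_pos (Real.exp_pos _) (Real.exp_pos _)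
  have hGw'lt : G (Q τ + v' * a (Q τ)) < τ := by
    calc G (Q τ + v' * a (Q τ))
        < (L * Real.exp (ε/8)) * F₁ (Q τ + v' * a (Q τ)) := hGw2'
      _ < (L * Real.exp (ε/8)) * ((Real.exp v' * Real.exp (ε/8)) * F₁ (Q τ)) :=
          mul_lt_mul_of_pos_left htw2' hp2
      _ ≤ (L * Real.exp (ε/8)) * ((Real.exp v' * Real.exp (ε/8)) * (Real.exp (ε/8) * τ)) := by
          apply mul_le_mul_of_nonneg_left _ hp2.le
          exact mul_le_mul_of_nonneg_left hK5τ hp3.le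
      _ = Real.exp (-(ε/8)) * τ := by rw [← hcoef']; ring
      _ < τ := by nlinarith
  have hQGge : Q τ + v' * a (Q τ) ≤ QG τ := by
    apply le_csInf hSGτ.1
    intro z hz
    by_contra h
    push_neg at h
    have := hGmono h.le
    have hzz : τ < G z := hz
    linarith
  rw [Real.dist_eq, abs_lt]
  constructor
  · have h5 : v' ≤ (QG τ - Q τ) / a (Q τ) := (le_div_iff₀ hA).2 (by linarith)
    rw [hv'] at h5; linarith
  · have h5 : (QG τ - Q τ) / a (Q τ) ≤ v := (div_le_iff₀ hA).2 (by linarith)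
    rw [hv] at h5; linarith
theorem extremal_qr_step912_type1
    (F₁ F₂ : ℝ → ℝ)
    (h₁mono : Monotone F₁) (h₂mono : Monotone F₂)
    (h₁rc : ∀ z : ℝ, ContinuousWithinAt F₁ (Set.Ici z) z)
    (h₂rc : ∀ z : ℝ, ContinuousWithinAt F₂ (Set.Ici z) z)
    (h₁range : ∀ z : ℝ, F₁ z ∈ Set.Icc (0:ℝ) 1)
    (h₂range : ∀ z : ℝ, F₂ z ∈ Set.Icc (0:ℝ) 1)
    (a : ℝ → ℝ) (lfil : Filter ℝ)
    (hcase :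
      (lfil = 𝓝[>] (0:ℝ) ∧
        (∀ z < (0:ℝ), F₁ z = 0) ∧ (∀ z > (0:ℝ), 0 < F₁ z) ∧
        (∀ z < (0:ℝ), F₂ z = 0) ∧ (∀ z > (0:ℝ), 0 < F₂ z) ∧
        (∀ z > (0:ℝ), IntegrableOn F₁ (Set.Ioc 0 z)) ∧
        (∀ z > (0:ℝ), a z = (∫ v in Set.Ioc (0:ℝ) z, F₁ v) / F₁ z)) ∨
      (lfil = atBot ∧ (∀ z : ℝ, 0 < F₁ z) ∧ (∀ z : ℝ, 0 < F₂ z) ∧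
        (∀ z : ℝ, IntegrableOn F₁ (Set.Iic z)) ∧
        (∀ z : ℝ, a z = (∫ v in Set.Iic z, F₁ v) / F₁ z)))
    (htail1 : ∀ v : ℝ, Tendsto (fun z => F₁ (z + v * a z) / F₁ z) lfil (𝓝 (Real.exp v)))
    (K : ℝ) (hK : 0 < K)
    (heq : Tendsto (fun z => F₂ z / F₁ z) lfil (𝓝 K))
    (m : ℝ) (hm : m ∈ Set.Ioo (0:ℝ) 1 ∪ Set.Ioi 1)
    :
    Tendsto (fun τ => (sInf {z | τ < F₂ z} - sInf {z | τ < F₁ z}) /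
        (sInf {z | m * τ < F₁ z} - sInf {z | τ < F₁ z})) (𝓝[>] (0:ℝ))
      (𝓝 (-(Real.log K) / Real.log m)) ∧
    ∀ᶠ τ in 𝓝[>] (0:ℝ), sInf {z | m * τ < F₁ z} - sInf {z | τ < F₁ z} ≠ 0 := by
  have hm0 : 0 < m := by
    rcases hm with h | h
    · exact h.1
    · exact lt_trans one_pos h
  have hlogm : Real.log m ≠ 0 := by
    rcases hm with h | h
    · exact ne_of_lt (Real.log_neg h.1 h.2)
    · exact ne_of_gt (Real.log_pos h)
  have hset : ∀ τ : ℝ, {z : ℝ | τ < F₁ z / m} = {z : ℝ | m * τ < F₁ z} := by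
    intro τ; ext z
    simp only [Set.mem_setOf_eq]
    rw [lt_div_iff₀ hm0, mul_comm]
  have hmono_m : Monotone (fun z => F₁ z / m) := fun x y h => by
    simp only [div_eq_mul_inv]
    exact mul_le_mul_of_nonneg_right (h₁mono h) (inv_nonneg.2 hm0.le)
  obtain ⟨hne, hq1, hS1, hS2, hSm, hApos, hmove, hGm⟩ :
      lfil.NeBot ∧
      Tendsto (fun τ => sInf {z | τ < F₁ z}) (𝓝[>] (0:ℝ)) lfil ∧
      (∀ᶠ τ in 𝓝[>] (0:ℝ), ({z | τ < F₁ z}).Nonempty ∧ BddBelow {z | τ < F₁ z}) ∧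
      (∀ᶠ τ in 𝓝[>] (0:ℝ), ({z | τ < F₂ z}).Nonempty ∧ BddBelow {z | τ < F₂ z}) ∧
      (∀ᶠ τ in 𝓝[>] (0:ℝ), ({z | τ < F₁ z / m}).Nonempty ∧ BddBelow {z | τ < F₁ z / m}) ∧
      (∀ᶠ z in lfil, 0 < a z) ∧
      (∀ v : ℝ, Tendsto (fun z => z + v * a z) lfil lfil) ∧
      Tendsto (fun z => (F₁ z / m) / F₁ z) lfil (𝓝 (1/m)) := by
    rcases hcase with ⟨hlf, hz1, hp1, hz2, hp2, hint, ha⟩ | ⟨hlf, hp1, hp2, hint, ha⟩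
    · subst hlf
      have hintle : ∀ z : ℝ, 0 < z → (∫ v in Set.Ioc (0:ℝ) z, F₁ v) ≤ z * F₁ z := by
        intro z hz
        have h2 : (∫ v in Set.Ioc (0:ℝ) z, F₁ v) ≤ ∫ _ in Set.Ioc (0:ℝ) z, F₁ z := by
          apply setIntegral_mono_on (hint z hz) ?_ measurableSet_Ioc
          · exact fun x hx => h₁mono hx.2
          · exact integrableOn_const (by
              rw [Real.volume_Ioc]; exact ENNReal.ofReal_ne_top)
        rwa [setIntegral_const, Real.volume_real_Ioc_of_le hz.le,
          smul_eq_mul, sub_zero] at h2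
      have hanonneg : ∀ z : ℝ, 0 < z → 0 ≤ a z := by
        intro z hz
        rw [ha z hz]
        exact div_nonneg (setIntegral_nonneg measurableSet_Ioc fun x _ => (h₁range x).1)
          (hp1 z hz).le
      have hale : ∀ z : ℝ, 0 < z → a z ≤ z := by
        intro z hz
        rw [ha z hz, div_le_iff₀ (hp1 z hz)]
        exact hintle z hz
      have hF₁to0' : Tendsto F₁ (𝓝[>] (0:ℝ)) (𝓝 (F₁ 0)) :=
        ((h₁rc 0).tendsto).mono_left (nhdsWithin_mono _ Set.Ioi_subset_Ici_self)
      have hF10 : F₁ 0 = 0 := by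
        by_contra hne0
        have hc : 0 < F₁ 0 := lt_of_le_of_ne (h₁range 0).1 (Ne.symm hne0)
        have h2z : Tendsto (fun z : ℝ => 2 * z) (𝓝[>] (0:ℝ)) (𝓝[>] (0:ℝ)) := by
          apply tendsto_nhdsWithin_of_tendsto_nhds_of_eventually_within
          · have h : Tendsto (fun z : ℝ => 2 * z) (𝓝 (0:ℝ)) (𝓝 (2 * 0)) :=
              (continuous_const.mul continuous_id).tendsto 0
            rw [mul_zero] at h
            exact h.mono_left nhdsWithin_le_nhds
          · filter_upwards [self_mem_nhdsWithin] with z hz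
            exact mul_pos two_pos (show (0:ℝ) < z from hz)
        have hto : Tendsto (fun z : ℝ => F₁ (2 * z)) (𝓝[>] (0:ℝ)) (𝓝 (F₁ 0)) :=
          hF₁to0'.comp h2z
        have hsq : Tendsto (fun z => F₁ (z + 1 * a z) / F₁ z) (𝓝[>] (0:ℝ)) (𝓝 1) := by
          apply tendsto_of_tendsto_of_tendsto_of_le_of_le' tendsto_const_nhds
            (h := fun z => F₁ (2 * z) / F₁ z)
          · have h := hto.div hF₁to0' (ne_of_gt hc)
            rwa [div_self (ne_of_gt hc)] at h
          · filter_upwards [self_mem_nhdsWithin] with z hz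
            rw [le_div_iff₀ (hp1 z hz), one_mul]
            exact h₁mono (by nlinarith [hanonneg z hz])
          · filter_upwards [self_mem_nhdsWithin] with z hz
            exact div_le_div_of_nonneg_right (h₁mono (by nlinarith [hale z hz])) (hp1 z hz).le
        have h1 := tendsto_nhds_unique (htail1 1) hsq
        exact one_ne_zero ((Real.exp_eq_one_iff 1).1 h1)
      have hzero1 : ∀ z : ℝ, z ≤ 0 → F₁ z = 0 := fun z hz =>
        le_antisymm (hF10 ▸ h₁mono hz) (h₁range z).1
      have hFlim : Tendsto F₁ (𝓝[>] (0:ℝ)) (𝓝 0) := by rwa [hF10] at hF₁to0'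
      have hlb0 : ∀ τ : ℝ, 0 < τ → ∀ z ∈ {z | τ < F₁ z}, (0:ℝ) ≤ z := by
        intro τ hτ z hz
        by_contra h
        push_neg at h
        rw [Set.mem_setOf_eq, hzero1 z h.le] at hz
        linarith
      have hBdd : ∀ τ : ℝ, 0 < τ → BddBelow {z | τ < F₁ z} := fun τ hτ => ⟨0, hlb0 τ hτ⟩
      have hS1 : ∀ᶠ τ in 𝓝[>] (0:ℝ), ({z | τ < F₁ z}).Nonempty ∧ BddBelow {z | τ < F₁ z} := by
        filter_upwards [Ioo_mem_nhdsGT_of_mem ⟨le_refl (0:ℝ), hp1 1 one_pos⟩] with τ hτ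
        exact ⟨⟨1, hτ.2⟩, hBdd τ hτ.1⟩
      have hq1 : Tendsto (fun τ => sInf {z | τ < F₁ z}) (𝓝[>] (0:ℝ)) (𝓝[>] (0:ℝ)) := by
        rw [tendsto_nhdsWithin_iff]
        constructor
        · rw [tendsto_order]
          constructor
          · intro b hb
            filter_upwards [hS1, self_mem_nhdsWithin] with τ hS hτ
            have h0 : (0:ℝ) ≤ sInf {z | τ < F₁ z} := le_csInf hS.1 (hlb0 τ hτ)
            linarith
          · intro b hb
            filter_upwards [Ioo_mem_nhdsGT_of_mem
              ⟨le_refl (0:ℝ), hp1 (b/2) (by linarith)⟩] with τ hτ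
            have h1 : sInf {z | τ < F₁ z} ≤ b/2 := csInf_le (hBdd τ hτ.1) hτ.2
            linarith
        · filter_upwards [hS1, self_mem_nhdsWithin] with τ hS hτ
          have h0 : (0:ℝ) ≤ sInf {z | τ < F₁ z} := le_csInf hS.1 (hlb0 τ hτ)
          have hge := quantile_ge F₁ h₁mono h₁rc τ hS.1 hS.2
          rcases eq_or_lt_of_le h0 with h | h
          · exfalso
            rw [← h, hF10] at hge
            exact absurd hge (not_le.2 hτ)
          · exact h
      have hmove : ∀ v : ℝ, Tendsto (fun z => z + v * a z) (𝓝[>] (0:ℝ)) (𝓝[>] (0:ℝ)) := by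
        intro v
        have hposev : ∀ᶠ z in 𝓝[>] (0:ℝ), 0 < z + v * a z := by
          filter_upwards [(htail1 v).eventually_const_lt (Real.exp_pos v),
            self_mem_nhdsWithin] with z hr hz
          by_contra h
          push_neg at h
          rw [hzero1 _ h, zero_div] at hr
          exact lt_irrefl 0 hr
        rw [tendsto_nhdsWithin_iff]
        refine ⟨?_, hposev⟩
        apply tendsto_of_tendsto_of_tendsto_of_le_of_le' tendsto_const_nhds
          (h := fun z : ℝ => (1 + |v|) * z)
        · have h : Tendsto (fun z : ℝ => (1 + |v|) * z) (𝓝 (0:ℝ)) (𝓝 ((1 + |v|) * 0)) :=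
            (continuous_const.mul continuous_id).tendsto 0
          rw [mul_zero] at h
          exact h.mono_left nhdsWithin_le_nhds
        · filter_upwards [hposev] with z h using h.le
        · filter_upwards [self_mem_nhdsWithin] with z hz
          have h1 : v * a z ≤ |v| * a z :=
            mul_le_mul_of_nonneg_right (le_abs_self v) (hanonneg z hz)
          have h2 : |v| * a z ≤ |v| * z := mul_le_mul_of_nonneg_left (hale z hz) (abs_nonneg v)
          nlinarith
      have hApos : ∀ᶠ z in 𝓝[>] (0:ℝ), 0 < a z := by
        filter_upwards [self_mem_nhdsWithin] with z hz
        rw [ha z hz]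
        apply div_pos ?_ (hp1 z hz)
        rw [setIntegral_pos_iff_support_of_nonneg_ae
          (Filter.Eventually.of_forall fun x => (h₁range x).1) (hint z hz)]
        have hsub : Set.Ioc (0:ℝ) z ⊆ Function.support F₁ ∩ Set.Ioc 0 z :=
          fun x hx => ⟨ne_of_gt (hp1 x hx.1), hx⟩
        calc (0:ENNReal) < ENNReal.ofReal z := ENNReal.ofReal_pos.2 hz
          _ = volume (Set.Ioc (0:ℝ) z) := by rw [Real.volume_Ioc, sub_zero]
          _ ≤ volume (Function.support F₁ ∩ Set.Ioc 0 z) := measure_mono hsub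
      have hF₂lim : Tendsto F₂ (𝓝[>] (0:ℝ)) (𝓝 0) := by
        have h := heq.mul hFlim
        rw [mul_zero] at h
        apply Filter.Tendsto.congr' ?_ h
        filter_upwards [self_mem_nhdsWithin] with z hz
        exact div_mul_cancel₀ _ (ne_of_gt (hp1 z hz))
      have hF20 : F₂ 0 = 0 := tendsto_nhds_unique
        (((h₂rc 0).tendsto).mono_left (nhdsWithin_mono _ Set.Ioi_subset_Ici_self)) hF₂lim
      have hzero2 : ∀ z : ℝ, z ≤ 0 → F₂ z = 0 := fun z hz =>
        le_antisymm (hF20 ▸ h₂mono hz) (h₂range z).1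
      have hS2 : ∀ᶠ τ in 𝓝[>] (0:ℝ), ({z | τ < F₂ z}).Nonempty ∧ BddBelow {z | τ < F₂ z} := by
        filter_upwards [Ioo_mem_nhdsGT_of_mem ⟨le_refl (0:ℝ), hp2 1 one_pos⟩] with τ hτ
        refine ⟨⟨1, hτ.2⟩, ⟨0, fun z hz => ?_⟩⟩
        by_contra h
        push_neg at h
        rw [Set.mem_setOf_eq, hzero2 z h.le] at hz
        linarith [hτ.1]
      have hSm : ∀ᶠ τ in 𝓝[>] (0:ℝ),
          ({z | τ < F₁ z / m}).Nonempty ∧ BddBelow {z | τ < F₁ z / m} := by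
        have hpos : 0 < F₁ 1 / m := div_pos (hp1 1 one_pos) hm0
        filter_upwards [Ioo_mem_nhdsGT_of_mem ⟨le_refl (0:ℝ), hpos⟩] with τ hτ
        rw [hset τ]
        have h1 : m * τ < F₁ 1 := by
          rw [mul_comm]
          exact (lt_div_iff₀ hm0).1 hτ.2
        exact ⟨⟨1, h1⟩, hBdd (m * τ) (mul_pos hm0 hτ.1)⟩
      have hGm : Tendsto (fun z => (F₁ z / m) / F₁ z) (𝓝[>] (0:ℝ)) (𝓝 (1/m)) := by
        apply Filter.Tendsto.congr' ?_ tendsto_const_nhds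
        filter_upwards [self_mem_nhdsWithin] with z hz
        exact (show (F₁ z / m) / F₁ z = 1/m by
          rw [div_right_comm, div_self (ne_of_gt (hp1 z hz))]).symm
      exact ⟨inferInstance, hq1, hS1, hS2, hSm, hApos, hmove, hGm⟩
    · subst hlf
      have hrange0 : (0:ℝ) ≤ ⨅ z, F₁ z := le_ciInf fun z => (h₁range z).1
      have hbddr : BddBelow (Set.range F₁) := ⟨0, fun x hx => by
        obtain ⟨z, rfl⟩ := hx
        exact (h₁range z).1⟩
      have hFlim : Tendsto F₁ atBot (𝓝 0) := by
        have h := tendsto_atBot_ciInf h₁mono hbddr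
        have hiInf : ⨅ z, F₁ z = 0 := by
          refine le_antisymm ?_ hrange0
          by_contra hlt
          push_neg at hlt
          have hci : Integrable (fun _ : ℝ => (⨅ z, F₁ z))
              (volume.restrict (Set.Iic (0:ℝ))) := by
            apply Integrable.mono (hint 0) aestronglyMeasurable_const
            apply Filter.Eventually.of_forall
            intro x
            rw [Real.norm_eq_abs, Real.norm_eq_abs, abs_of_nonneg hrange0,
              abs_of_nonneg (h₁range x).1]
            exact ciInf_le hbddr x
          rcases integrable_const_iff.1 hci with h0 | hfin
          · rw [h0] at hlt
            exact lt_irrefl 0 hlt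
          · rw [isFiniteMeasure_restrict, Real.volume_Iic] at hfin
            exact hfin rfl
        rwa [hiInf] at h
      have hBdd : ∀ τ : ℝ, 0 < τ → BddBelow {z | τ < F₁ z} := by
        intro τ hτ
        obtain ⟨z₁, hz₁⟩ := eventually_atBot.1 (hFlim.eventually_lt_const hτ)
        refine ⟨z₁, fun z hz => ?_⟩
        by_contra h
        push_neg at h
        have h2 := hz₁ z h.le
        rw [Set.mem_setOf_eq] at hz
        linarith
      have hS1 : ∀ᶠ τ in 𝓝[>] (0:ℝ), ({z | τ < F₁ z}).Nonempty ∧ BddBelow {z | τ < F₁ z} := by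
        filter_upwards [Ioo_mem_nhdsGT_of_mem ⟨le_refl (0:ℝ), hp1 0⟩] with τ hτ
        exact ⟨⟨0, hτ.2⟩, hBdd τ hτ.1⟩
      have hF₂lim : Tendsto F₂ atBot (𝓝 0) := by
        have h := heq.mul hFlim
        rw [mul_zero] at h
        apply Filter.Tendsto.congr' ?_ h
        apply Filter.Eventually.of_forall
        intro z
        exact div_mul_cancel₀ _ (ne_of_gt (hp1 z))
      have hBdd₂ : ∀ τ : ℝ, 0 < τ → BddBelow {z | τ < F₂ z} := by
        intro τ hτ
        obtain ⟨z₁, hz₁⟩ := eventually_atBot.1 (hF₂lim.eventually_lt_const hτ)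
        refine ⟨z₁, fun z hz => ?_⟩
        by_contra h
        push_neg at h
        have h2 := hz₁ z h.le
        rw [Set.mem_setOf_eq] at hz
        linarith
      have hS2 : ∀ᶠ τ in 𝓝[>] (0:ℝ), ({z | τ < F₂ z}).Nonempty ∧ BddBelow {z | τ < F₂ z} := by
        filter_upwards [Ioo_mem_nhdsGT_of_mem ⟨le_refl (0:ℝ), hp2 0⟩] with τ hτ
        exact ⟨⟨0, hτ.2⟩, hBdd₂ τ hτ.1⟩
      have hSm : ∀ᶠ τ in 𝓝[>] (0:ℝ),
          ({z | τ < F₁ z / m}).Nonempty ∧ BddBelow {z | τ < F₁ z / m} := by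
        have hpos : 0 < F₁ 0 / m := div_pos (hp1 0) hm0
        filter_upwards [Ioo_mem_nhdsGT_of_mem ⟨le_refl (0:ℝ), hpos⟩] with τ hτ
        rw [hset τ]
        have h1 : m * τ < F₁ 0 := by
          rw [mul_comm]
          exact (lt_div_iff₀ hm0).1 hτ.2
        exact ⟨⟨0, h1⟩, hBdd (m * τ) (mul_pos hm0 hτ.1)⟩
      have hq1 : Tendsto (fun τ => sInf {z | τ < F₁ z}) (𝓝[>] (0:ℝ)) atBot := by
        rw [tendsto_atBot]
        intro b
        filter_upwards [Ioo_mem_nhdsGT_of_mem ⟨le_refl (0:ℝ), hp1 b⟩] with τ hτ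
        exact csInf_le (hBdd τ hτ.1) hτ.2
      have hmove : ∀ v : ℝ, Tendsto (fun z => z + v * a z) atBot atBot := by
        intro v
        have hFw : Tendsto (fun z => F₁ (z + v * a z)) atBot (𝓝 0) := by
          have h := (htail1 v).mul hFlim
          rw [mul_zero] at h
          apply Filter.Tendsto.congr' ?_ h
          apply Filter.Eventually.of_forall
          intro z
          exact div_mul_cancel₀ _ (ne_of_gt (hp1 z))
        rw [tendsto_atBot]
        intro b
        filter_upwards [hFw.eventually_lt_const (hp1 b)] with z hz
        by_contra h
        push_neg at h
        exact absurd (h₁mono h.le) (not_le.2 hz)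
      have hApos : ∀ᶠ z in atBot, 0 < a z := by
        apply Filter.Eventually.of_forall
        intro z
        rw [ha z]
        apply div_pos ?_ (hp1 z)
        rw [setIntegral_pos_iff_support_of_nonneg_ae
          (Filter.Eventually.of_forall fun x => (h₁range x).1) (hint z)]
        have hsub : Set.Iic z ⊆ Function.support F₁ ∩ Set.Iic z :=
          fun x hx => ⟨ne_of_gt (hp1 x), hx⟩
        calc (0:ENNReal) < ⊤ := ENNReal.zero_lt_top
          _ = volume (Set.Iic z) := (Real.volume_Iic).symm
          _ ≤ volume (Function.support F₁ ∩ Set.Iic z) := measure_mono hsub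
      have hGm : Tendsto (fun z => (F₁ z / m) / F₁ z) atBot (𝓝 (1/m)) := by
        apply Filter.Tendsto.congr' ?_ tendsto_const_nhds
        apply Filter.Eventually.of_forall
        intro z
        exact (show (F₁ z / m) / F₁ z = 1/m by
          rw [div_right_comm, div_self (ne_of_gt (hp1 z))]).symm
      exact ⟨atBot_neBot, hq1, hS1, hS2, hSm, hApos, hmove, hGm⟩

  have hnum := key912 F₁ F₂ a lfil hne h₁mono h₂mono h₁rc hq1 hS1 hS2 hApos htail1 hmove
    K hK heq
  have hden0 := key912 F₁ (fun z => F₁ z / m) a lfil hne h₁mono hmono_m h₁rc hq1 hS1 hSm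
    hApos htail1 hmove (1/m) (by positivity) hGm
  simp only [hset] at hden0
  have hval : -Real.log (1/m) = Real.log m := by
    rw [one_div, Real.log_inv, neg_neg]
  rw [hval] at hden0
  have hApos' : ∀ᶠ τ in 𝓝[>] (0:ℝ), 0 < a (sInf {z | τ < F₁ z}) := hq1.eventually hApos
  have hDne : ∀ᶠ τ in 𝓝[>] (0:ℝ),
      (sInf {z | m * τ < F₁ z} - sInf {z | τ < F₁ z}) / a (sInf {z | τ < F₁ z}) ≠ 0 :=
    hden0.eventually_ne hlogm
  constructor
  · have hcomb := hnum.div hden0 hlogm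
    apply hcomb.congr'
    filter_upwards [hApos'] with τ hA
    simp only [Pi.div_apply]
    rcases eq_or_ne (sInf {z | m * τ < F₁ z} - sInf {z | τ < F₁ z}) 0 with h | h
    · rw [h, zero_div, div_zero, div_zero]
    · field_simp
  · filter_upwards [hDne] with τ h
    intro h0
    apply h
    rw [h0, zero_div]
end

section
/- (Lemma 9.2(ii), type 3 tails) Under the two-distribution tail-equivalence setup with ξ < 0, for every m ∈ (0,1) ∪ (1,∞): (F₂⁻¹(mτ) − F₂⁻¹(τ)) / (F₁⁻¹(mτ/K) − F₁⁻¹(τ/K)) → 1 as τ ↘ 0, and F₁⁻¹(mτ/K) − F₁⁻¹(τ/K) ≠ 0 for all sufficiently small τ > 0. -/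
open MeasureTheory Filter Topology Real

set_option linter.unusedSectionVars false

section Aux
open Set

noncomputable def EQ (F : ℝ → ℝ) (τ : ℝ) : ℝ := sInf {z | τ < F z}

lemma EQ_bddBelow {F : ℝ → ℝ} (h0 : ∀ z ≤ (0:ℝ), F z ≤ 0) {τ : ℝ} (hτ : 0 < τ) :
    BddBelow {z | τ < F z} :=
  ⟨0, fun z hz => by by_contra h; push_neg at h; exact absurd (h0 z h.le) (by simp at hz; linarith)⟩

lemma EQ_facts (F : ℝ → ℝ) (hmono : Monotone F)
    (hrc : ∀ z, ContinuousWithinAt F (Set.Ici z) z)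
    (h0 : ∀ z ≤ (0:ℝ), F z ≤ 0)
    {τ : ℝ} (hτ : 0 < τ) (hne : {z | τ < F z}.Nonempty) :
    0 < EQ F τ ∧ τ ≤ F (EQ F τ) ∧ ∀ z < EQ F τ, F z ≤ τ := by
  have hbdd := EQ_bddBelow h0 hτ
  have hnn : (0:ℝ) ≤ EQ F τ := le_csInf hne fun z hz => by
    by_contra h; push_neg at h; exact absurd (h0 z h.le) (by simp at hz; linarith)
  have hgt : ∀ z, EQ F τ < z → τ < F z := by
    intro z hz
    obtain ⟨s, hs, hsz⟩ := exists_lt_of_csInf_lt hne hz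
    exact lt_of_lt_of_le hs (hmono hsz.le)
  have h2 : τ ≤ F (EQ F τ) := by
    have ht : Tendsto F (𝓝[>] (EQ F τ)) (𝓝 (F (EQ F τ))) :=
      (hrc (EQ F τ)).tendsto.mono_left (nhdsWithin_mono _ Ioi_subset_Ici_self)
    exact ge_of_tendsto ht (eventually_nhdsWithin_of_forall fun z hz => (hgt z hz).le)
  refine ⟨?_, h2, fun z hz => ?_⟩
  · rcases lt_or_eq_of_le hnn with h | h
    · exact h
    · exfalso
      have ht : Tendsto F (𝓝[>] (0:ℝ)) (𝓝 (F 0)) :=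
        (hrc 0).tendsto.mono_left (nhdsWithin_mono _ Ioi_subset_Ici_self)
      have : τ ≤ F 0 := ge_of_tendsto ht (eventually_nhdsWithin_of_forall fun z hz =>
        (hgt z (by rw [← h]; exact hz)).le)
      linarith [h0 0 le_rfl]
  · have := notMem_of_lt_csInf (s := {z | τ < F z}) hz hbdd
    simpa using this

lemma EQ_le {F : ℝ → ℝ} (h0 : ∀ z ≤ (0:ℝ), F z ≤ 0) {τ s : ℝ} (hτ : 0 < τ)
    (hs : τ < F s) : EQ F τ ≤ s :=
  csInf_le (EQ_bddBelow h0 hτ) hs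

lemma le_EQ {F : ℝ → ℝ} (hmono : Monotone F) {τ u : ℝ}
    (hne : {z | τ < F z}.Nonempty) (hu : F u ≤ τ) : u ≤ EQ F τ :=
  le_csInf hne fun z hz => by
    by_contra h; push_neg at h
    exact absurd hz (by simp only [Set.mem_setOf_eq, not_lt]; exact (hmono h.le).trans hu)

lemma EQ_tendsto (F : ℝ → ℝ) (hmono : Monotone F)
    (hrc : ∀ z, ContinuousWithinAt F (Set.Ici z) z)
    (h0 : ∀ z ≤ (0:ℝ), F z ≤ 0) (hpos : ∀ z > (0:ℝ), 0 < F z) :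
    Tendsto (EQ F) (𝓝[>] (0:ℝ)) (𝓝[>] (0:ℝ)) := by
  have hfacts : ∀ᶠ τ in 𝓝[>] (0:ℝ), 0 < EQ F τ := by
    filter_upwards [Ioo_mem_nhdsGT_of_mem (Set.mem_Ico.2 ⟨le_rfl, hpos 1 one_pos⟩)] with τ hτ
    exact (EQ_facts F hmono hrc h0 hτ.1 ⟨1, hτ.2⟩).1
  rw [tendsto_nhdsWithin_iff]
  refine ⟨?_, hfacts⟩
  rw [tendsto_order]
  constructor
  · intro a ha
    filter_upwards [hfacts] with τ h; linarith
  · intro b hb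
    filter_upwards [Ioo_mem_nhdsGT_of_mem (Set.mem_Ico.2 ⟨le_rfl, hpos (b/2) (by linarith)⟩)] with τ hτ
    calc EQ F τ ≤ b/2 := EQ_le h0 hτ.1 hτ.2
    _ < b := by linarith

lemma rpow_bridge (ξ : ℝ) (hξ : ξ < 0) {a c : ℝ} (ha : 0 < a) (hc : 0 < c) :
    a < c ^ (-ξ) ↔ a ^ (-1/ξ) < c := by
  have hξ0 : ξ ≠ 0 := ne_of_lt hξ
  have hexp : 0 < -1/ξ := by rw [div_pos_iff]; exact Or.inr ⟨by norm_num, hξ⟩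
  have hexp2 : 0 < -ξ := by linarith
  have key1 : (c ^ (-ξ)) ^ (-1/ξ) = c := by
    rw [← Real.rpow_mul hc.le, show (-ξ) * (-1/ξ) = 1 by field_simp, Real.rpow_one]
  have key2 : (a ^ (-1/ξ)) ^ (-ξ) = a := by
    rw [← Real.rpow_mul ha.le, show (-1/ξ) * (-ξ) = 1 by field_simp, Real.rpow_one]
  constructor
  · intro h
    calc a ^ (-1/ξ) < (c ^ (-ξ)) ^ (-1/ξ) := Real.rpow_lt_rpow ha.le h hexp
    _ = c := key1
  · intro h
    have := Real.rpow_lt_rpow (Real.rpow_nonneg ha.le _) h hexp2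
    rwa [key2] at this

lemma rpow_bridge' (ξ : ℝ) (hξ : ξ < 0) {b c : ℝ} (hb : 0 < b) (hc : 0 < c) :
    c ^ (-ξ) < b ↔ c < b ^ (-1/ξ) := by
  have hξ0 : ξ ≠ 0 := ne_of_lt hξ
  have hexp : 0 < -1/ξ := by rw [div_pos_iff]; exact Or.inr ⟨by norm_num, hξ⟩
  have hexp2 : 0 < -ξ := by linarith
  have key1 : (c ^ (-ξ)) ^ (-1/ξ) = c := by
    rw [← Real.rpow_mul hc.le, show (-ξ) * (-1/ξ) = 1 by field_simp, Real.rpow_one]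
  have key2 : (b ^ (-1/ξ)) ^ (-ξ) = b := by
    rw [← Real.rpow_mul hb.le, show (-1/ξ) * (-ξ) = 1 by field_simp, Real.rpow_one]
  constructor
  · intro h
    have := Real.rpow_lt_rpow (Real.rpow_nonneg hc.le _) h hexp
    rwa [key1] at this
  · intro h
    have := Real.rpow_lt_rpow hc.le h hexp2
    rwa [key2] at this

lemma mul_map_nhdsGT (c : ℝ) (hc : 0 < c) :
    Tendsto (fun τ : ℝ => c * τ) (𝓝[>] (0:ℝ)) (𝓝[>] (0:ℝ)) := by
  rw [tendsto_nhdsWithin_iff]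
  constructor
  · have := ((continuous_mul_left c).tendsto 0).mono_left (nhdsWithin_le_nhds (s := Set.Ioi (0:ℝ)))
    simpa using this
  · filter_upwards [eventually_mem_nhdsWithin] with τ hτ
    exact mul_pos hc hτ

lemma F_zero_at_zero (ξ : ℝ) (hξ : ξ < 0) (F₁ : ℝ → ℝ)
    (h₁rc : ∀ z : ℝ, ContinuousWithinAt F₁ (Set.Ici z) z)
    (h₁range : ∀ z : ℝ, F₁ z ∈ Set.Icc (0:ℝ) 1)
    (hreg : ∀ v > (0:ℝ), Tendsto (fun z => F₁ (v * z) / F₁ z) (𝓝[>] (0:ℝ)) (𝓝 (v ^ (-1/ξ)))) :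
    F₁ 0 = 0 := by
  have ht : Tendsto F₁ (𝓝[>] (0:ℝ)) (𝓝 (F₁ 0)) :=
    (h₁rc 0).tendsto.mono_left (nhdsWithin_mono _ Ioi_subset_Ici_self)
  by_contra h
  have h0 : 0 < F₁ 0 := lt_of_le_of_ne (h₁range 0).1 (Ne.symm h)
  have ht2 : Tendsto (fun z => F₁ (2 * z)) (𝓝[>] (0:ℝ)) (𝓝 (F₁ 0)) :=
    ht.comp (mul_map_nhdsGT 2 two_pos)
  have hdiv : Tendsto (fun z => F₁ (2 * z) / F₁ z) (𝓝[>] (0:ℝ)) (𝓝 (F₁ 0 / F₁ 0)) :=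
    ht2.div ht (ne_of_gt h0)
  rw [div_self (ne_of_gt h0)] at hdiv
  have huniq : (1:ℝ) = (2:ℝ) ^ (-1/ξ) := tendsto_nhds_unique hdiv (hreg 2 two_pos)
  have : (1:ℝ) < (2:ℝ) ^ (-1/ξ) :=
    Real.one_lt_rpow_iff_of_pos two_pos |>.2 (Or.inl ⟨one_lt_two, by rw [div_pos_iff]; exact Or.inr ⟨by norm_num, hξ⟩⟩)
  linarith [huniq ▸ this]
section UpLow
variable (ξ : ℝ) (hξ : ξ < 0) (F₁ F₂ : ℝ → ℝ)
  (h₁mono : Monotone F₁)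
  (h₁rc : ∀ z : ℝ, ContinuousWithinAt F₁ (Set.Ici z) z)
  (h₁0 : ∀ z ≤ (0:ℝ), F₁ z ≤ 0) (h₁pos : ∀ z > (0:ℝ), 0 < F₁ z)
  (h₂mono : Monotone F₂)
  (h₂0 : ∀ z ≤ (0:ℝ), F₂ z ≤ 0) (h₂pos : ∀ z > (0:ℝ), 0 < F₂ z)
  (hreg : ∀ v > (0:ℝ), Tendsto (fun z => F₁ (v * z) / F₁ z) (𝓝[>] (0:ℝ)) (𝓝 (v ^ (-1/ξ))))
  (K : ℝ) (hK : 0 < K)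
  (heq : Tendsto (fun z => F₂ z / F₁ z) (𝓝[>] (0:ℝ)) (𝓝 K))

include hξ h₁mono h₁rc h₁0 h₁pos h₂0 hreg hK heq in
lemma EQ_upper (c b : ℝ) (hc : 0 < c) (hb : 0 < b) (hcb : c < K * b ^ (-1/ξ)) :
    ∀ᶠ τ in 𝓝[>] (0:ℝ), EQ F₂ (c * τ) ≤ b * EQ F₁ τ := by
  have hq := EQ_tendsto F₁ h₁mono h₁rc h₁0 h₁pos
  have hbq : Tendsto (fun τ => b * EQ F₁ τ) (𝓝[>] (0:ℝ)) (𝓝[>] (0:ℝ)) :=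
    (mul_map_nhdsGT b hb).comp hq
  have hratio : Tendsto (fun τ => F₁ (b * EQ F₁ τ) / F₁ (EQ F₁ τ)) (𝓝[>] (0:ℝ))
      (𝓝 (b ^ (-1/ξ))) := (hreg b hb).comp hq
  have hr : Tendsto (fun τ => (F₂ (b * EQ F₁ τ) / F₁ (b * EQ F₁ τ)) *
      (F₁ (b * EQ F₁ τ) / F₁ (EQ F₁ τ))) (𝓝[>] (0:ℝ)) (𝓝 (K * b ^ (-1/ξ))) :=
    (heq.comp hbq).mul hratio
  have hfacts : ∀ᶠ τ in 𝓝[>] (0:ℝ),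
      0 < EQ F₁ τ ∧ τ ≤ F₁ (EQ F₁ τ) ∧ ∀ z < EQ F₁ τ, F₁ z ≤ τ := by
    filter_upwards [Ioo_mem_nhdsGT_of_mem (Set.mem_Ico.2 ⟨le_rfl, h₁pos 1 one_pos⟩)] with τ hτ
    exact EQ_facts F₁ h₁mono h₁rc h₁0 hτ.1 ⟨1, hτ.2⟩
  filter_upwards [hr.eventually (eventually_gt_nhds hcb), hfacts,
    eventually_mem_nhdsWithin] with τ hrτ hf hτ
  obtain ⟨hq0, hFq, -⟩ := hf
  have hτ0 : (0:ℝ) < τ := hτ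
  have hFbq : 0 < F₁ (b * EQ F₁ τ) := h₁pos _ (mul_pos hb hq0)
  have hFqpos : 0 < F₁ (EQ F₁ τ) := lt_of_lt_of_le hτ0 hFq
  apply EQ_le h₂0 (mul_pos hc hτ0)
  have hEqn : (F₂ (b * EQ F₁ τ) / F₁ (b * EQ F₁ τ)) * (F₁ (b * EQ F₁ τ) / F₁ (EQ F₁ τ)) *
      F₁ (EQ F₁ τ) = F₂ (b * EQ F₁ τ) := by field_simp
  calc c * τ < ((F₂ (b * EQ F₁ τ) / F₁ (b * EQ F₁ τ)) *
        (F₁ (b * EQ F₁ τ) / F₁ (EQ F₁ τ))) * τ := mul_lt_mul_of_pos_right hrτ hτ0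
  _ ≤ ((F₂ (b * EQ F₁ τ) / F₁ (b * EQ F₁ τ)) *
        (F₁ (b * EQ F₁ τ) / F₁ (EQ F₁ τ))) * F₁ (EQ F₁ τ) :=
      mul_le_mul_of_nonneg_left hFq (le_of_lt (hc.trans hrτ))
  _ = F₂ (b * EQ F₁ τ) := hEqn

end UpLow
section Low
variable (ξ : ℝ) (hξ : ξ < 0) (F₁ F₂ : ℝ → ℝ)
  (h₁mono : Monotone F₁)
  (h₁rc : ∀ z : ℝ, ContinuousWithinAt F₁ (Set.Ici z) z)
  (h₁0 : ∀ z ≤ (0:ℝ), F₁ z ≤ 0) (h₁pos : ∀ z > (0:ℝ), 0 < F₁ z)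
  (h₂mono : Monotone F₂)
  (h₂0 : ∀ z ≤ (0:ℝ), F₂ z ≤ 0) (h₂pos : ∀ z > (0:ℝ), 0 < F₂ z)
  (hreg : ∀ v > (0:ℝ), Tendsto (fun z => F₁ (v * z) / F₁ z) (𝓝[>] (0:ℝ)) (𝓝 (v ^ (-1/ξ))))
  (K : ℝ) (hK : 0 < K)
  (heq : Tendsto (fun z => F₂ z / F₁ z) (𝓝[>] (0:ℝ)) (𝓝 K))

include hξ h₁mono h₁rc h₁0 h₁pos h₂mono h₂pos hreg hK heq in
lemma EQ_lower (c a : ℝ) (hc : 0 < c) (ha : 0 < a) (hac : K * a ^ (-1/ξ) < c) :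
    ∀ᶠ τ in 𝓝[>] (0:ℝ), a * EQ F₁ τ ≤ EQ F₂ (c * τ) := by
  have hexp : 0 < -1/ξ := by rw [div_pos_iff]; exact Or.inr ⟨by norm_num, hξ⟩
  set X := K * a ^ (-1/ξ) with hXdef
  have hX : 0 < X := mul_pos hK (Real.rpow_pos_of_pos ha _)
  set t := c / X with htdef
  have ht1 : 1 < t := (one_lt_div hX).2 hac
  have ht0 : 0 < t := lt_trans one_pos ht1
  set v₀ := (t ^ ξ + 1) / 2 with hv₀def
  have htξ : 0 < t ^ ξ := Real.rpow_pos_of_pos ht0 _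
  have hv1 : t ^ ξ < 1 := Real.rpow_lt_one_of_one_lt_of_neg ht1 hξ
  have hv₀pos : 0 < v₀ := by rw [hv₀def]; linarith
  have hv₀lt1 : v₀ < 1 := by rw [hv₀def]; linarith
  have hv₀gt : t ^ ξ < v₀ := by rw [hv₀def]; linarith
  have hv₀r : t⁻¹ < v₀ ^ (-1/ξ) := by
    have h1 := Real.rpow_lt_rpow htξ.le hv₀gt hexp
    rwa [← Real.rpow_mul ht0.le, show ξ * (-1/ξ) = -1 by field_simp [ne_of_lt hξ], Real.rpow_neg_one] at h1
  have hv₀rpos : 0 < v₀ ^ (-1/ξ) := Real.rpow_pos_of_pos hv₀pos _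
  have hLlim : 0 < K * (a ^ (-1/ξ) / v₀ ^ (-1/ξ)) :=
    mul_pos hK (div_pos (Real.rpow_pos_of_pos ha _) hv₀rpos)
  have hs_lim_lt : K * (a ^ (-1/ξ) / v₀ ^ (-1/ξ)) < c := by
    have h1 : K * (a ^ (-1/ξ) / v₀ ^ (-1/ξ)) = X / v₀ ^ (-1/ξ) := by
      rw [hXdef]; ring
    have h2 : X / v₀ ^ (-1/ξ) < X / t⁻¹ :=
      div_lt_div_of_pos_left hX (inv_pos.2 ht0) hv₀r
    have h3 : X / t⁻¹ = c := by
      rw [div_inv_eq_mul, htdef]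
      field_simp
    rw [h1]; rw [h3] at h2; exact h2
  -- limit of the coefficient
  have hq := EQ_tendsto F₁ h₁mono h₁rc h₁0 h₁pos
  have haq : Tendsto (fun τ => a * EQ F₁ τ) (𝓝[>] (0:ℝ)) (𝓝[>] (0:ℝ)) :=
    (mul_map_nhdsGT a ha).comp hq
  have hra : Tendsto (fun τ => F₁ (a * EQ F₁ τ) / F₁ (EQ F₁ τ)) (𝓝[>] (0:ℝ))
      (𝓝 (a ^ (-1/ξ))) := (hreg a ha).comp hq
  have hrv : Tendsto (fun τ => F₁ (v₀ * EQ F₁ τ) / F₁ (EQ F₁ τ)) (𝓝[>] (0:ℝ))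
      (𝓝 (v₀ ^ (-1/ξ))) := (hreg v₀ hv₀pos).comp hq
  have hr : Tendsto (fun τ => (F₂ (a * EQ F₁ τ) / F₁ (a * EQ F₁ τ)) *
      ((F₁ (a * EQ F₁ τ) / F₁ (EQ F₁ τ)) / (F₁ (v₀ * EQ F₁ τ) / F₁ (EQ F₁ τ))))
      (𝓝[>] (0:ℝ)) (𝓝 (K * (a ^ (-1/ξ) / v₀ ^ (-1/ξ)))) :=
    (heq.comp haq).mul (hra.div hrv (ne_of_gt hv₀rpos))
  have hfacts : ∀ᶠ τ in 𝓝[>] (0:ℝ),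
      0 < EQ F₁ τ ∧ τ ≤ F₁ (EQ F₁ τ) ∧ ∀ z < EQ F₁ τ, F₁ z ≤ τ := by
    filter_upwards [Ioo_mem_nhdsGT_of_mem (Set.mem_Ico.2 ⟨le_rfl, h₁pos 1 one_pos⟩)] with τ hτ
    exact EQ_facts F₁ h₁mono h₁rc h₁0 hτ.1 ⟨1, hτ.2⟩
  have hne₂ : ∀ᶠ τ in 𝓝[>] (0:ℝ), c * τ < F₂ 1 := by
    filter_upwards [Ioo_mem_nhdsGT_of_mem
      (Set.mem_Ico.2 ⟨le_rfl, div_pos (h₂pos 1 one_pos) hc⟩)] with τ hτ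
    rw [mul_comm]; exact (lt_div_iff₀ hc).1 hτ.2
  filter_upwards [hr.eventually (eventually_lt_nhds hs_lim_lt),
    hr.eventually (eventually_gt_nhds hLlim), hfacts, hne₂,
    eventually_mem_nhdsWithin] with τ hslt hspos hf hne hτ
  obtain ⟨hq0, hFq, hlt⟩ := hf
  have hτ0 : (0:ℝ) < τ := hτ
  set s := (F₂ (a * EQ F₁ τ) / F₁ (a * EQ F₁ τ)) *
      ((F₁ (a * EQ F₁ τ) / F₁ (EQ F₁ τ)) / (F₁ (v₀ * EQ F₁ τ) / F₁ (EQ F₁ τ))) with hsdef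
  have hFa : 0 < F₁ (a * EQ F₁ τ) := h₁pos _ (mul_pos ha hq0)
  have hFv : 0 < F₁ (v₀ * EQ F₁ τ) := h₁pos _ (mul_pos hv₀pos hq0)
  have hFqpos : 0 < F₁ (EQ F₁ τ) := lt_of_lt_of_le hτ0 hFq
  have hFv₀le : F₁ (v₀ * EQ F₁ τ) ≤ τ := hlt _ (by nlinarith)
  have hEqn : s * F₁ (v₀ * EQ F₁ τ) = F₂ (a * EQ F₁ τ) := by
    rw [hsdef]; field_simp
    exact mul_div_cancel_right₀ _ (by rw [mul_comm]; exact hFv.ne')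
  have hkey : F₂ (a * EQ F₁ τ) ≤ c * τ := by
    rw [← hEqn]
    calc s * F₁ (v₀ * EQ F₁ τ) ≤ s * τ := mul_le_mul_of_nonneg_left hFv₀le hspos.le
    _ ≤ c * τ := mul_le_mul_of_nonneg_right hslt.le hτ0.le
  exact le_EQ h₂mono ⟨1, hne⟩ hkey

end Low
section Master
variable (ξ : ℝ) (hξ : ξ < 0) (F₁ F₂ : ℝ → ℝ)
  (h₁mono : Monotone F₁)
  (h₁rc : ∀ z : ℝ, ContinuousWithinAt F₁ (Set.Ici z) z)
  (h₁0 : ∀ z ≤ (0:ℝ), F₁ z ≤ 0) (h₁pos : ∀ z > (0:ℝ), 0 < F₁ z)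
  (h₂mono : Monotone F₂)
  (h₂0 : ∀ z ≤ (0:ℝ), F₂ z ≤ 0) (h₂pos : ∀ z > (0:ℝ), 0 < F₂ z)
  (hreg : ∀ v > (0:ℝ), Tendsto (fun z => F₁ (v * z) / F₁ z) (𝓝[>] (0:ℝ)) (𝓝 (v ^ (-1/ξ))))
  (K : ℝ) (hK : 0 < K)
  (heq : Tendsto (fun z => F₂ z / F₁ z) (𝓝[>] (0:ℝ)) (𝓝 K))

include hξ h₁mono h₁rc h₁0 h₁pos h₂mono h₂0 h₂pos hreg hK heq in
lemma EQ_ratio_tendsto (c : ℝ) (hc : 0 < c) :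
    Tendsto (fun τ => EQ F₂ (c * τ) / EQ F₁ τ) (𝓝[>] (0:ℝ)) (𝓝 ((c/K) ^ (-ξ))) := by
  set L := (c/K) ^ (-ξ) with hLdef
  have hcK : 0 < c / K := div_pos hc hK
  have hL : 0 < L := Real.rpow_pos_of_pos hcK _
  have hfacts : ∀ᶠ τ in 𝓝[>] (0:ℝ), 0 < EQ F₁ τ := by
    filter_upwards [Ioo_mem_nhdsGT_of_mem (Set.mem_Ico.2 ⟨le_rfl, h₁pos 1 one_pos⟩)] with τ hτ
    exact (EQ_facts F₁ h₁mono h₁rc h₁0 hτ.1 ⟨1, hτ.2⟩).1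
  rw [tendsto_order]
  constructor
  · intro a' ha'
    set a := max (L/2) ((a' + L)/2) with hadef
    have ha0 : 0 < a := lt_of_lt_of_le (half_pos hL) (le_max_left _ _)
    have haL : a < L := max_lt (by linarith) (by linarith)
    have haa' : a' < a := lt_of_lt_of_le (by linarith) (le_max_right _ _)
    have hKa : K * a ^ (-1/ξ) < c := by
      have h1 : a ^ (-1/ξ) < c / K := (rpow_bridge ξ hξ ha0 hcK).1 haL
      calc K * a ^ (-1/ξ) < K * (c / K) := by
            exact mul_lt_mul_of_pos_left h1 hK
      _ = c := by field_simp
    filter_upwards [EQ_lower ξ hξ F₁ F₂ h₁mono h₁rc h₁0 h₁pos h₂mono h₂pos hreg K hK heq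
      c a hc ha0 hKa, hfacts] with τ h1 h2
    have : a ≤ EQ F₂ (c * τ) / EQ F₁ τ := (le_div_iff₀ h2).2 h1
    linarith
  · intro b' hb'
    set b := (L + b')/2 with hbdef
    have hbL : L < b := by rw [hbdef]; linarith
    have hbb' : b < b' := by rw [hbdef]; linarith
    have hb0 : 0 < b := lt_trans hL hbL
    have hKb : c < K * b ^ (-1/ξ) := by
      have h1 : c / K < b ^ (-1/ξ) := (rpow_bridge' ξ hξ hb0 hcK).1 hbL
      calc c = K * (c / K) := by field_simp
      _ < K * b ^ (-1/ξ) := mul_lt_mul_of_pos_left h1 hK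
    filter_upwards [EQ_upper ξ hξ F₁ F₂ h₁mono h₁rc h₁0 h₁pos h₂0 hreg K hK heq
      c b hc hb0 hKb, hfacts] with τ h1 h2
    have : EQ F₂ (c * τ) / EQ F₁ τ ≤ b := (div_le_iff₀ h2).2 (by linarith [h1])
    linarith

end Master

end Aux

open Set in
theorem extremal_qr_lem92ii_type3
    (ξ : ℝ) (hξ : ξ < 0)
    (F₁ F₂ : ℝ → ℝ)
    (h₁mono : Monotone F₁) (h₂mono : Monotone F₂)
    (h₁rc : ∀ z : ℝ, ContinuousWithinAt F₁ (Set.Ici z) z)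
    (h₂rc : ∀ z : ℝ, ContinuousWithinAt F₂ (Set.Ici z) z)
    (h₁range : ∀ z : ℝ, F₁ z ∈ Set.Icc (0:ℝ) 1)
    (h₂range : ∀ z : ℝ, F₂ z ∈ Set.Icc (0:ℝ) 1)
    (h₁0 : ∀ z < (0:ℝ), F₁ z = 0) (h₁pos : ∀ z > (0:ℝ), 0 < F₁ z)
    (h₂0 : ∀ z < (0:ℝ), F₂ z = 0) (h₂pos : ∀ z > (0:ℝ), 0 < F₂ z)
    (hreg : ∀ v > (0:ℝ), Tendsto (fun z => F₁ (v * z) / F₁ z) (𝓝[>] (0:ℝ)) (𝓝 (v ^ (-1/ξ))))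
    (K : ℝ) (hK : 0 < K)
    (heq : Tendsto (fun z => F₂ z / F₁ z) (𝓝[>] (0:ℝ)) (𝓝 K))
    (m : ℝ) (hm : m ∈ Set.Ioo (0:ℝ) 1 ∪ Set.Ioi 1)
    :
    Tendsto (fun τ => (sInf {z | m * τ < F₂ z} - sInf {z | τ < F₂ z}) /
        (sInf {z | m * τ / K < F₁ z} - sInf {z | τ / K < F₁ z})) (𝓝[>] (0:ℝ)) (𝓝 1) ∧
    ∀ᶠ τ in 𝓝[>] (0:ℝ), sInf {z | m * τ / K < F₁ z} - sInf {z | τ / K < F₁ z} ≠ 0 := by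
  have hm0 : 0 < m := by rcases hm with ⟨h, _⟩ | h; exacts [h, lt_trans one_pos h]
  have hF₁0 : F₁ 0 = 0 := F_zero_at_zero ξ hξ F₁ h₁rc h₁range hreg
  have h₁0' : ∀ z ≤ (0:ℝ), F₁ z ≤ 0 := by
    intro z hz
    rcases lt_or_eq_of_le hz with h | h
    · exact (h₁0 z h).le
    · rw [h, hF₁0]
  have ht1 : Tendsto F₁ (𝓝[>] (0:ℝ)) (𝓝 0) := by
    have := (h₁rc 0).tendsto.mono_left (nhdsWithin_mono _ Set.Ioi_subset_Ici_self)
    rwa [hF₁0] at this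
  have hF₂0 : F₂ 0 = 0 := by
    have ht2 : Tendsto F₂ (𝓝[>] (0:ℝ)) (𝓝 (F₂ 0)) :=
      (h₂rc 0).tendsto.mono_left (nhdsWithin_mono _ Set.Ioi_subset_Ici_self)
    have ht3 : Tendsto F₂ (𝓝[>] (0:ℝ)) (𝓝 (K * 0)) := by
      apply (heq.mul ht1).congr'
      filter_upwards [eventually_mem_nhdsWithin] with z hz
      exact div_mul_cancel₀ _ (ne_of_gt (h₁pos z hz))
    have := tendsto_nhds_unique ht2 ht3
    rw [this, mul_zero]
  have h₂0' : ∀ z ≤ (0:ℝ), F₂ z ≤ 0 := by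
    intro z hz
    rcases lt_or_eq_of_le hz with h | h
    · exact (h₂0 z h).le
    · rw [h, hF₂0]
  have heq₁ : Tendsto (fun z => F₁ z / F₁ z) (𝓝[>] (0:ℝ)) (𝓝 1) := by
    apply tendsto_const_nhds.congr'
    filter_upwards [eventually_mem_nhdsWithin] with z hz
    exact (div_self (ne_of_gt (h₁pos z hz))).symm
  -- the two key limits
  have S1 : Tendsto (fun τ => EQ F₁ (m * τ) / EQ F₁ τ) (𝓝[>] (0:ℝ)) (𝓝 (m ^ (-ξ))) := by
    have := EQ_ratio_tendsto ξ hξ F₁ F₁ h₁mono h₁rc h₁0' h₁pos h₁mono h₁0' h₁pos hreg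
      1 one_pos heq₁ m hm0
    rwa [div_one] at this
  have S2 : Tendsto (fun τ => EQ F₂ (K * τ) / EQ F₁ τ) (𝓝[>] (0:ℝ)) (𝓝 1) := by
    have := EQ_ratio_tendsto ξ hξ F₁ F₂ h₁mono h₁rc h₁0' h₁pos h₂mono h₂0' h₂pos hreg
      K hK heq K hK
    rwa [div_self (ne_of_gt hK), Real.one_rpow] at this
  have hdivK : Tendsto (fun τ : ℝ => τ / K) (𝓝[>] (0:ℝ)) (𝓝[>] (0:ℝ)) :=
    (mul_map_nhdsGT K⁻¹ (inv_pos.2 hK)).congr (fun τ => by rw [inv_mul_eq_div])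
  have hmulm : Tendsto (fun τ : ℝ => m * τ) (𝓝[>] (0:ℝ)) (𝓝[>] (0:ℝ)) :=
    mul_map_nhdsGT m hm0
  have B1 : Tendsto (fun τ => EQ F₁ (m * τ / K) / EQ F₁ (τ / K)) (𝓝[>] (0:ℝ))
      (𝓝 (m ^ (-ξ))) :=
    (S1.comp hdivK).congr (fun τ => by rw [Function.comp_apply, mul_div_assoc])
  have B2 : Tendsto (fun τ => EQ F₂ τ / EQ F₁ (τ / K)) (𝓝[>] (0:ℝ)) (𝓝 1) :=
    (S2.comp hdivK).congr (fun τ => by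
      rw [Function.comp_apply, show K * (τ / K) = τ by field_simp])
  have B3 : Tendsto (fun τ => EQ F₂ (m * τ) / EQ F₁ (m * τ / K)) (𝓝[>] (0:ℝ)) (𝓝 1) :=
    B2.comp hmulm
  have hfactsE : ∀ᶠ σ in 𝓝[>] (0:ℝ), 0 < EQ F₁ σ := by
    filter_upwards [Ioo_mem_nhdsGT_of_mem (Set.mem_Ico.2 ⟨le_rfl, h₁pos 1 one_pos⟩)] with σ hσ
    exact (EQ_facts F₁ h₁mono h₁rc h₁0' hσ.1 ⟨1, hσ.2⟩).1
  have E1 : ∀ᶠ τ in 𝓝[>] (0:ℝ), 0 < EQ F₁ (τ / K) := hdivK.eventually hfactsE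
  have E2 : ∀ᶠ τ in 𝓝[>] (0:ℝ), 0 < EQ F₁ (m * τ / K) := hmulm.eventually E1
  have hA : Tendsto (fun τ => EQ F₂ (m * τ) / EQ F₁ (τ / K)) (𝓝[>] (0:ℝ)) (𝓝 (m ^ (-ξ))) := by
    have := B3.mul B1
    rw [one_mul] at this
    apply this.congr'
    filter_upwards [E2] with τ h2
    exact div_mul_div_cancel₀ (ne_of_gt h2)
  have hN : Tendsto (fun τ => (EQ F₂ (m * τ) - EQ F₂ τ) / EQ F₁ (τ / K)) (𝓝[>] (0:ℝ))
      (𝓝 (m ^ (-ξ) - 1)) :=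
    (hA.sub B2).congr (fun τ => (sub_div _ _ _).symm)
  have hgg : Tendsto (fun τ => EQ F₁ (τ / K) / EQ F₁ (τ / K)) (𝓝[>] (0:ℝ)) (𝓝 1) := by
    apply tendsto_const_nhds.congr'
    filter_upwards [E1] with τ h
    exact (div_self (ne_of_gt h)).symm
  have hD : Tendsto (fun τ => (EQ F₁ (m * τ / K) - EQ F₁ (τ / K)) / EQ F₁ (τ / K)) (𝓝[>] (0:ℝ))
      (𝓝 (m ^ (-ξ) - 1)) :=
    (B1.sub hgg).congr (fun τ => (sub_div _ _ _).symm)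
  have hmne : m ^ (-ξ) ≠ 1 := by
    rcases hm with ⟨hm0', hm1'⟩ | hmgt
    · exact ne_of_lt (Real.rpow_lt_one hm0'.le hm1' (by linarith))
    · exact ne_of_gt ((Real.one_lt_rpow_iff_of_pos hm0).2 (Or.inl ⟨hmgt, by linarith⟩))
  have hLne : m ^ (-ξ) - 1 ≠ 0 := sub_ne_zero.2 hmne
  have hDne : ∀ᶠ τ in 𝓝[>] (0:ℝ),
      (EQ F₁ (m * τ / K) - EQ F₁ (τ / K)) / EQ F₁ (τ / K) ≠ 0 := hD.eventually_ne hLne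
  have hDD : ∀ᶠ τ in 𝓝[>] (0:ℝ), EQ F₁ (m * τ / K) - EQ F₁ (τ / K) ≠ 0 := by
    filter_upwards [hDne] with τ h hcontra
    exact h (by rw [hcontra, zero_div])
  constructor
  · have final := (hN.div hD hLne)
    rw [div_self hLne] at final
    apply final.congr'
    filter_upwards [E1, hDD] with τ hg hD0
    simp only [Pi.div_apply]
    rw [div_div_div_comm, div_self (ne_of_gt hg), div_one]
    rfl
  · exact hDD
end

section
/- (Knight's identity, equation (9.44)) For every τ ∈ (0,1) and all real numbers u and v: ρ_τ(u − v) − ρ_τ(u) = −v·(τ − 𝟙{u ≤ 0}) + ∫₀^v (𝟙{u ≤ s} − 𝟙{u ≤ 0}) ds, where the integral is the (oriented) interval integral from 0 to v. -/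
open MeasureTheory Filter Topology Real

lemma ind_intble (u a b : ℝ) :
    IntervalIntegrable (fun s => if s ≤ u then (1:ℝ) else 0) volume a b := by
  apply Antitone.intervalIntegrable
  intro x y hxy
  by_cases hy : y ≤ u
  · simp [hy, hxy.trans hy]
  · simp [hy]; positivity

lemma J (u v : ℝ) : ∫ s in (0:ℝ)..v, (if s ≤ u then (1:ℝ) else 0) = min v u - min 0 u := by
  rcases le_total 0 v with hv | hv
  · rcases le_total u 0 with hu | hu
    · rw [intervalIntegral.integral_congr_ae (g := fun _ => (0:ℝ))]
      · simp only [intervalIntegral.integral_const, smul_eq_mul, mul_zero]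
        rw [min_eq_right (hu.trans hv), min_eq_right hu]; ring
      · filter_upwards with s hs
        rw [Set.uIoc_of_le hv] at hs
        have : ¬ (s ≤ u) := by push_neg; exact lt_of_le_of_lt hu hs.1
        simp [this]
    · rcases le_total u v with huv | huv
      · have := intervalIntegral.integral_indicator (μ := volume)
          (f := fun _ => (1:ℝ)) (a₁ := 0) (a₂ := u) (a₃ := v) ⟨hu, huv⟩
        simp only [Set.indicator_apply, Set.mem_setOf_eq] at this
        rw [this]
        simp only [intervalIntegral.integral_const, smul_eq_mul, mul_one]
        rw [min_eq_right huv, min_eq_left hu]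
      · rw [intervalIntegral.integral_congr_ae (g := fun _ => (1:ℝ))]
        · simp only [intervalIntegral.integral_const, smul_eq_mul, mul_one]
          rw [min_eq_left huv, min_eq_left hu]
        · filter_upwards with s hs
          rw [Set.uIoc_of_le hv] at hs
          simp [hs.2.trans huv]
  · rcases le_total 0 u with hu | hu
    · rw [intervalIntegral.integral_congr_ae (g := fun _ => (1:ℝ))]
      · simp only [intervalIntegral.integral_const, smul_eq_mul, mul_one]
        rw [min_eq_left (hv.trans hu), min_eq_left hu]
      · filter_upwards with s hs
        rw [Set.uIoc_of_ge hv] at hs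
        simp [hs.2.trans hu]
    · rcases le_total u v with huv | huv
      · rw [intervalIntegral.integral_congr_ae (g := fun _ => (0:ℝ))]
        · simp only [intervalIntegral.integral_const, smul_eq_mul, mul_zero]
          rw [min_eq_right huv, min_eq_right hu]; ring
        · filter_upwards with s hs
          rw [Set.uIoc_of_ge hv] at hs
          have : ¬ (s ≤ u) := by push_neg; exact lt_of_le_of_lt huv hs.1
          simp [this]
      · rw [intervalIntegral.integral_symm]
        have h := intervalIntegral.integral_indicator (μ := volume)
          (f := fun _ => (1:ℝ)) (a₁ := v) (a₂ := u) (a₃ := 0) ⟨huv, hu⟩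
        simp only [Set.indicator_apply, Set.mem_setOf_eq] at h
        rw [h]
        simp only [intervalIntegral.integral_const, smul_eq_mul, mul_one]
        rw [min_eq_left huv, min_eq_right hu]; ring

theorem knight_identity
    (τ : ℝ) (hτ : τ ∈ Set.Ioo (0:ℝ) 1) (u v : ℝ)
    :
    (τ - if u - v ≤ 0 then 1 else 0) * (u - v) - (τ - if u ≤ 0 then 1 else 0) * u =
      -v * (τ - if u ≤ 0 then 1 else 0) +
        ∫ s in (0:ℝ)..v, ((if u ≤ s then (1:ℝ) else 0) - if u ≤ 0 then 1 else 0) := by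
  set c : ℝ := if u ≤ 0 then 1 else 0 with hc
  have hae : ∫ s in (0:ℝ)..v, ((if u ≤ s then (1:ℝ) else 0) - c) =
      ∫ s in (0:ℝ)..v, ((1 - if s ≤ u then (1:ℝ) else 0) - c) := by
    apply intervalIntegral.integral_congr_ae
    have : ∀ᵐ s : ℝ, s ≠ u := by
      rw [ae_iff]; simp [Set.setOf_eq_eq_singleton']
    filter_upwards [this] with s hs _
    rcases lt_or_gt_of_ne hs with h | h
    · simp [h.le, not_le.2 h]
    · simp [h.le, not_le.2 h]
  have hint : ∫ s in (0:ℝ)..v, ((1 - if s ≤ u then (1:ℝ) else 0) - c) =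
      (1 - c) * v - (min v u - min 0 u) := by
    have h1 : IntervalIntegrable (fun s => if s ≤ u then (1:ℝ) else 0) volume 0 v :=
      ind_intble u 0 v
    have h2 : ∫ s in (0:ℝ)..v, ((1 - if s ≤ u then (1:ℝ) else 0) - c) =
        ∫ s in (0:ℝ)..v, ((1 - c) - if s ≤ u then (1:ℝ) else 0) := by
      apply intervalIntegral.integral_congr; intro s _; ring
    rw [h2, intervalIntegral.integral_sub intervalIntegrable_const h1, J]
    simp only [intervalIntegral.integral_const, smul_eq_mul]; ring
  rw [hae, hint]
  by_cases h1 : u ≤ 0 <;> by_cases h2 : u - v ≤ 0 <;>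
    simp only [hc, h1, h2, if_true, if_false, min_def] <;>
    split_ifs <;> (try push_neg at *) <;> nlinarith
end
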